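/- arXiv:1008.2136 — 4 statements merged into one kernel-verified Lean document; each statement's English description precedes it below -/
import Mathlib

section
/- If G is a 2-node-connected series-parallel capacitated graph, then either G is a capacitated ring, or G has a strict 2-cut. -/
open scoped Classical

namespace FlowCut

variable {V : Type} [Fintype V] [DecidableEq V]

/-- `c` assigns a positive integer weight to each edge of `G` (and `0` to non-edges). -/
def IsIntWeight (G : SimpleGraph V) (c : V → V → ℚ) : Prop :=
  (∀ u v, c u v = c v u) ∧ (∀ u v, G.Adj u v → ∃ n : ℕ, 0 < n ∧ c u v = n) ∧
    (∀ u v, ¬ G.Adj u v → c u v = 0)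

/-- `G` has a `K₄` minor, witnessed by four disjoint nonempty connected branch sets that are
pairwise joined by an edge of `G`.  A graph is series-parallel iff it has no `K₄` minor. -/
def HasK4Minor (G : SimpleGraph V) : Prop :=
  ∃ B : Fin 4 → Finset V,
    (∀ i, (B i).Nonempty) ∧
    (∀ i j, i ≠ j → Disjoint (B i) (B j)) ∧
    (∀ i, (G.induce (↑(B i) : Set V)).Connected) ∧
    (∀ i j, i ≠ j → ∃ a ∈ B i, ∃ b ∈ B j, G.Adj a b)

/-- `G` is 2-node-connected: it has at least 3 nodes, is connected, and stays connected
after deleting any single node. -/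
def TwoConnected (G : SimpleGraph V) : Prop :=
  3 ≤ Fintype.card V ∧ G.Connected ∧ ∀ v : V, (G.induce {u : V | u ≠ v}).Connected

/-- `{u, v}` is a strict cut: there are at least two nontrivial bridges (components of
`G − {u, v}`) and at least three bridges (counting the edge `uv` if present). -/
def StrictTwoCut (G : SimpleGraph V) (u v : V) : Prop :=
  u ≠ v ∧
    2 ≤ Nat.card (G.induce {w : V | w ≠ u ∧ w ≠ v}).ConnectedComponent ∧
    3 ≤ Nat.card (G.induce {w : V | w ≠ u ∧ w ≠ v}).ConnectedComponent +
      (if G.Adj u v then 1 else 0)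



section Helpers
open SimpleGraph
set_option linter.unusedSectionVars false
variable {G : SimpleGraph V}

lemma reach_induce {s : Set V} {a b : V} (w : G.Walk a b) (hw : ∀ x ∈ w.support, x ∈ s)
    (ha : a ∈ s) (hb : b ∈ s) : (G.induce s).Reachable ⟨a, ha⟩ ⟨b, hb⟩ := by
  induction w with
  | nil => rfl
  | cons h p ih =>
    rename_i u x y
    have hx : x ∈ s := hw _ (by simp [SimpleGraph.Walk.support_cons])
    have hadj : (G.induce s).Adj ⟨u, ha⟩ ⟨x, hx⟩ := h
    exact hadj.reachable.trans (ih (fun z hz => hw z (by simp [SimpleGraph.Walk.support_cons, hz])) hx hb)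

lemma walk_of_induce_reach {s : Set V} {x y : s} (h : (G.induce s).Reachable x y) :
    ∃ w : G.Walk x.1 y.1, ∀ z ∈ w.support, z ∈ s := by
  obtain ⟨p⟩ := h
  induction p with
  | nil => exact ⟨SimpleGraph.Walk.nil, by simp⟩
  | cons h p ih =>
    rename_i u a b
    obtain ⟨w, hw⟩ := ih
    refine ⟨SimpleGraph.Walk.cons h w, ?_⟩
    intro z hz
    change z ∈ (↑u : V) :: w.support at hz
    rcases List.mem_cons.1 hz with rfl | hz
    · exact u.2
    · exact hw z hz

lemma induce_support_connected {a b : V} (w : G.Walk a b) :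
    (G.induce {x | x ∈ w.support}).Connected := by
  rw [SimpleGraph.connected_iff]
  refine ⟨?_, ⟨⟨a, w.start_mem_support⟩⟩⟩
  have key : ∀ x : {x | x ∈ w.support}, (G.induce {x | x ∈ w.support}).Reachable ⟨a, w.start_mem_support⟩ x := by
    rintro ⟨x, hx⟩
    exact reach_induce (w.takeUntil x hx) (fun z hz => w.support_takeUntil_subset hx hz) _ _
  intro x y
  exact (key x).symm.trans (key y)

lemma induce_union_connected {s t : Set V} (hs : (G.induce s).Connected)
    (ht : (G.induce t).Connected) {v : V} (hvs : v ∈ s) (hvt : v ∈ t) :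
    (G.induce (s ∪ t)).Connected := by
  rw [SimpleGraph.connected_iff]
  refine ⟨?_, ⟨⟨v, Or.inl hvs⟩⟩⟩
  have key : ∀ x : (s ∪ t : Set V), (G.induce (s ∪ t)).Reachable x ⟨v, Or.inl hvs⟩ := by
    rintro ⟨x, hx | hx⟩
    · obtain ⟨w, hw⟩ := walk_of_induce_reach (hs.preconnected ⟨x, hx⟩ ⟨v, hvs⟩)
      exact reach_induce w (fun z hz => Or.inl (hw z hz)) _ _
    · obtain ⟨w, hw⟩ := walk_of_induce_reach (ht.preconnected ⟨x, hx⟩ ⟨v, hvt⟩)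
      exact reach_induce w (fun z hz => Or.inr (hw z hz)) _ _
  intro x y
  exact (key x).trans (key y).symm

lemma induce_union_connected_adj {s t : Set V} (hs : (G.induce s).Connected)
    (ht : (G.induce t).Connected) {a b : V} (has : a ∈ s) (hbt : b ∈ t) (hab : G.Adj a b) :
    (G.induce (s ∪ t)).Connected := by
  rw [SimpleGraph.connected_iff]
  refine ⟨?_, ⟨⟨a, Or.inl has⟩⟩⟩
  have hadj : (G.induce (s ∪ t)).Adj ⟨a, Or.inl has⟩ ⟨b, Or.inr hbt⟩ := hab
  have key : ∀ x : (s ∪ t : Set V), (G.induce (s ∪ t)).Reachable x ⟨a, Or.inl has⟩ := by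
    rintro ⟨x, hx | hx⟩
    · obtain ⟨w, hw⟩ := walk_of_induce_reach (hs.preconnected ⟨x, hx⟩ ⟨a, has⟩)
      exact reach_induce w (fun z hz => Or.inl (hw z hz)) _ _
    · obtain ⟨w, hw⟩ := walk_of_induce_reach (ht.preconnected ⟨x, hx⟩ ⟨b, hbt⟩)
      exact (reach_induce w (fun z hz => Or.inr (hw z hz)) _ _).trans hadj.symm.reachable
  intro x y
  exact (key x).trans (key y).symm

lemma induce_singleton_connected (G : SimpleGraph V) (v : V) : (G.induce {v}).Connected := by
  rw [SimpleGraph.connected_iff]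
  refine ⟨?_, ⟨⟨v, rfl⟩⟩⟩
  rintro ⟨x, rfl⟩ ⟨y, rfl⟩
  rfl

lemma exists_prefix_firstHit (T : Set V) {a b : V} (w : G.Walk a b) (hb : b ∈ T) :
    ∃ z, z ∈ T ∧ ∃ p : G.Walk a z, (∀ x ∈ p.support, x ∈ w.support) ∧
      (∀ x ∈ p.support, x ∈ T → x = z) := by
  induction w with
  | nil =>
    refine ⟨_, hb, SimpleGraph.Walk.nil, by simp, ?_⟩
    intro x hx _
    simpa using hx
  | cons h p ih =>
    rename_i u x y
    by_cases hu : u ∈ T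
    · refine ⟨u, hu, SimpleGraph.Walk.nil, by simp, ?_⟩
      intro x hx _
      simpa using hx
    · obtain ⟨z, hz, q, hq1, hq2⟩ := ih hb
      refine ⟨z, hz, SimpleGraph.Walk.cons h q, ?_, ?_⟩
      · intro t ht
        rw [SimpleGraph.Walk.support_cons] at ht ⊢
        rcases List.mem_cons.1 ht with rfl | ht
        · exact List.mem_cons_self
        · exact List.mem_cons_of_mem _ (hq1 t ht)
      · intro t ht htT
        rw [SimpleGraph.Walk.support_cons] at ht
        rcases List.mem_cons.1 ht with rfl | ht
        · exact absurd htT hu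
        · exact hq2 t ht htT

lemma peel_last {a b : V} (p : G.Walk a b) (hp : p.IsPath) (hab : a ≠ b) :
    ∃ y, ∃ r : G.Walk a y, G.Adj y b ∧ {x | x ∈ r.support} = {x | x ∈ p.support ∧ x ≠ b} := by
  cases hrev : p.reverse with
  | nil => exact (hab rfl).elim
  | cons h q =>
    rename_i y
    refine ⟨y, q.reverse, h.symm, ?_⟩
    have hps : ∀ x, x ∈ p.support ↔ (x ∈ q.support ∨ x = b) := by
      intro x
      have h1 : x ∈ p.support ↔ x ∈ p.reverse.support := by
        rw [SimpleGraph.Walk.support_reverse, List.mem_reverse]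
      rw [h1, hrev, SimpleGraph.Walk.support_cons, List.mem_cons, or_comm]
    have hrevpath : p.reverse.IsPath := hp.reverse
    rw [hrev, SimpleGraph.Walk.cons_isPath_iff] at hrevpath
    ext x
    simp only [Set.mem_setOf_eq, SimpleGraph.Walk.support_reverse, List.mem_reverse, hps]
    constructor
    · intro hx
      refine ⟨Or.inl hx, ?_⟩
      rintro rfl
      exact hrevpath.2 hx
    · rintro ⟨hx | hx, hne⟩
      · exact hx
      · exact absurd hx hne

lemma fin4_forall {α : Type*} (s : Fin 4 → α) {P : α → Prop}
    (h0 : P (s 0)) (h1 : P (s 1)) (h2 : P (s 2)) (h3 : P (s 3)) : ∀ i, P (s i) := by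
  intro i
  fin_cases i <;> assumption

lemma fin4_pairwise {α : Type*} (s : Fin 4 → α) {R : α → α → Prop}
    (symm : ∀ x y, R x y → R y x)
    (h01 : R (s 0) (s 1)) (h02 : R (s 0) (s 2)) (h03 : R (s 0) (s 3))
    (h12 : R (s 1) (s 2)) (h13 : R (s 1) (s 3)) (h23 : R (s 2) (s 3)) :
    ∀ i j, i ≠ j → R (s i) (s j) := by
  intro i j hij
  fin_cases i <;> fin_cases j <;>
    first
      | exact absurd rfl hij
      | assumption
      | exact symm _ _ h01
      | exact symm _ _ h02
      | exact symm _ _ h03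
      | exact symm _ _ h12
      | exact symm _ _ h13
      | exact symm _ _ h23


/-- A "good" set for the pair `u v`: avoids `u,v`, nonempty, induced-connected, and
attached to both `u` and `v` by an edge. -/
def Good (G : SimpleGraph V) (u v : V) (X : Set V) : Prop :=
  (∀ x ∈ X, x ≠ u ∧ x ≠ v) ∧ X.Nonempty ∧ (G.induce X).Connected ∧
    (∃ a ∈ X, G.Adj u a) ∧ (∃ b ∈ X, G.Adj v b)

lemma false_of_k4 (hsp : ¬ HasK4Minor G) {u v : V} (huv : u ≠ v)
    {A D E : Set V} (hA : Good G u v A) (hD : Good G u v D)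
    (hAD : Disjoint A D) (hEA : Disjoint E A) (hED : Disjoint E D)
    (hES : ∀ x ∈ E, x ≠ u ∧ x ≠ v)
    (hconn : G.Adj u v ∨ Good G u v E)
    {c z : V} (hc : c ∈ A) (hz : z ∈ D) (W : G.Walk c z)
    (hWS : ∀ x ∈ W.support, x ≠ u ∧ x ≠ v)
    (hWD : ∀ x ∈ W.support, x ∈ D → x = z)
    (hWE : ∀ x ∈ W.support, x ∉ E) : False := by
  obtain ⟨hAS, hAne, hAconn, ⟨au, hau, hau'⟩, ⟨av, hav, hav'⟩⟩ := hA
  obtain ⟨hDS, hDne, hDconn, ⟨du, hdu, hdu'⟩, ⟨dv, hdv, hdv'⟩⟩ := hD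
  have hcz : c ≠ z := fun h => (hAD.ne_of_mem hc hz) h
  -- make W a path and peel the last vertex
  have hPsub : ∀ x ∈ W.bypass.support, x ∈ W.support := fun x hx => W.support_bypass_subset hx
  obtain ⟨y, r, hyz, hrsup⟩ := peel_last W.bypass W.bypass_isPath hcz
  have hrsub : ∀ x ∈ r.support, x ∈ W.support ∧ x ≠ z := by
    intro x hx
    have : x ∈ {x | x ∈ W.bypass.support ∧ x ≠ z} := hrsup ▸ hx
    exact ⟨hPsub x this.1, this.2⟩
  -- the branch set around u
  have hB0 : ∃ B0 : Set V, u ∈ B0 ∧ (∀ x ∈ B0, x = u ∨ x ∈ E) ∧ (G.induce B0).Connected ∧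
      (∃ x ∈ B0, G.Adj x v) := by
    rcases hconn with h | ⟨hES', hEne, hEconn, ⟨eu, heu, heu'⟩, ⟨ev, hev, hev'⟩⟩
    · exact ⟨{u}, rfl, fun x hx => Or.inl hx, induce_singleton_connected G u, u, rfl, h⟩
    · refine ⟨{u} ∪ E, Or.inl rfl, fun x hx => hx.imp id id, ?_, ev, Or.inr hev, hev'.symm⟩
      exact induce_union_connected_adj (induce_singleton_connected G u) hEconn rfl heu heu'
  obtain ⟨B0, huB0, hB0sub, hB0conn, x0, hx0, hx0v⟩ := hB0
  set B2 : Set V := A ∪ {x | x ∈ r.support} with hB2def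
  have hB2conn : (G.induce B2).Connected :=
    induce_union_connected hAconn (induce_support_connected r) hc r.start_mem_support
  have hB2S : ∀ x ∈ B2, x ≠ u ∧ x ≠ v := by
    rintro x (hx | hx)
    · exact hAS x hx
    · exact hWS x (hrsub x hx).1
  have hB2D : ∀ x ∈ B2, x ∉ D := by
    rintro x (hx | hx)
    · exact fun hxD => hAD.ne_of_mem hx hxD rfl
    · intro hxD
      exact (hrsub x hx).2 (hWD x (hrsub x hx).1 hxD)
  have hB2E : ∀ x ∈ B2, x ∉ E := by
    rintro x (hx | hx)
    · exact fun hxE => hEA.ne_of_mem hxE hx rfl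
    · exact hWE x (hrsub x hx).1
  have hB0S : ∀ x ∈ B0, x ≠ v := by
    intro x hx
    rcases hB0sub x hx with rfl | hx'
    · exact huv
    · exact (hES x hx').2
  -- assemble the K4 minor
  refine hsp ⟨![B0.toFinset, {v}, B2.toFinset, D.toFinset], ?_, ?_, ?_, ?_⟩
  · exact fin4_forall _ (P := fun t : Finset V => t.Nonempty) ⟨u, Set.mem_toFinset.2 huB0⟩
      ⟨v, Finset.mem_singleton_self v⟩ ⟨c, Set.mem_toFinset.2 (Or.inl hc)⟩
      ⟨dv, Set.mem_toFinset.2 hdv⟩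
  · -- pairwise disjoint
    have d01 : Disjoint B0.toFinset ({v} : Finset V) := by
      simp only [Finset.disjoint_singleton_right, Set.mem_toFinset]
      exact fun h => hB0S v h rfl
    have d02 : Disjoint B0.toFinset B2.toFinset := by
      rw [Finset.disjoint_left]
      intro x hx hx2
      rw [Set.mem_toFinset] at hx hx2
      rcases hB0sub x hx with rfl | hxE
      · exact (hB2S x hx2).1 rfl
      · exact hB2E x hx2 hxE
    have d03 : Disjoint B0.toFinset D.toFinset := by
      rw [Finset.disjoint_left]
      intro x hx hx2
      rw [Set.mem_toFinset] at hx hx2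
      rcases hB0sub x hx with rfl | hxE
      · exact (hDS x hx2).1 rfl
      · exact hED.ne_of_mem hxE hx2 rfl
    have d12 : Disjoint ({v} : Finset V) B2.toFinset := by
      simp only [Finset.disjoint_singleton_left, Set.mem_toFinset]
      exact fun h => (hB2S v h).2 rfl
    have d13 : Disjoint ({v} : Finset V) D.toFinset := by
      simp only [Finset.disjoint_singleton_left, Set.mem_toFinset]
      exact fun h => (hDS v h).2 rfl
    have d23 : Disjoint B2.toFinset D.toFinset := by
      rw [Finset.disjoint_left]
      intro x hx hx2
      rw [Set.mem_toFinset] at hx hx2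
      exact hB2D x hx hx2
    exact fin4_pairwise _ (R := fun a b => Disjoint a b) (fun _ _ h => h.symm) d01 d02 d03 d12 d13 d23
  · have e0 : (↑(B0.toFinset) : Set V) = B0 := Set.coe_toFinset _
    have e1 : (↑({v} : Finset V) : Set V) = ({v} : Set V) := by simp
    have e2 : (↑(B2.toFinset) : Set V) = B2 := Set.coe_toFinset _
    have e3 : (↑(D.toFinset) : Set V) = D := Set.coe_toFinset _
    refine fin4_forall _ (P := fun t : Finset V => (G.induce (↑t : Set V)).Connected) ?_ ?_ ?_ ?_
    · show (G.induce (↑(B0.toFinset) : Set V)).Connected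
      rw [e0]; exact hB0conn
    · show (G.induce (↑({v} : Finset V) : Set V)).Connected
      rw [e1]; exact induce_singleton_connected G v
    · show (G.induce (↑(B2.toFinset) : Set V)).Connected
      rw [e2]; exact hB2conn
    · show (G.induce (↑(D.toFinset) : Set V)).Connected
      rw [e3]; exact hDconn
  · -- adjacency between branch sets
    have hyB2 : y ∈ B2 := Or.inr r.end_mem_support
    have a01 : ∃ a ∈ B0.toFinset, ∃ b ∈ ({v} : Finset V), G.Adj a b :=
      ⟨x0, Set.mem_toFinset.2 hx0, v, by simp, hx0v⟩
    have a02 : ∃ a ∈ B0.toFinset, ∃ b ∈ B2.toFinset, G.Adj a b :=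
      ⟨u, Set.mem_toFinset.2 huB0, au, Set.mem_toFinset.2 (Or.inl hau), hau'⟩
    have a03 : ∃ a ∈ B0.toFinset, ∃ b ∈ D.toFinset, G.Adj a b :=
      ⟨u, Set.mem_toFinset.2 huB0, du, Set.mem_toFinset.2 hdu, hdu'⟩
    have a12 : ∃ a ∈ ({v} : Finset V), ∃ b ∈ B2.toFinset, G.Adj a b :=
      ⟨v, by simp, av, Set.mem_toFinset.2 (Or.inl hav), hav'⟩
    have a13 : ∃ a ∈ ({v} : Finset V), ∃ b ∈ D.toFinset, G.Adj a b :=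
      ⟨v, by simp, dv, Set.mem_toFinset.2 hdv, hdv'⟩
    have a23 : ∃ a ∈ B2.toFinset, ∃ b ∈ D.toFinset, G.Adj a b :=
      ⟨y, Set.mem_toFinset.2 hyB2, z, Set.mem_toFinset.2 hz, hyz⟩
    refine fin4_pairwise _ (R := fun s t => ∃ a ∈ s, ∃ b ∈ t, G.Adj a b) ?_ a01 a02 a03 a12 a13 a23
    rintro s t ⟨a, ha, b, hb, hab⟩
    exact ⟨b, hb, a, ha, hab.symm⟩


lemma sep (hsp : ¬ HasK4Minor G) {u v : V} (huv : u ≠ v)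
    {I J : Set V} (hI : Good G u v I) (hJ : Good G u v J) (hIJ : Disjoint I J)
    (third : G.Adj u v ∨ ∃ K, Good G u v K ∧ Disjoint I K ∧ Disjoint J K)
    {x y : V} (hx : x ∈ I) (hy : y ∈ J)
    (hxS : x ∈ {w : V | w ≠ u ∧ w ≠ v}) (hyS : y ∈ {w : V | w ≠ u ∧ w ≠ v})
    (hreach : (G.induce {w : V | w ≠ u ∧ w ≠ v}).Reachable ⟨x, hxS⟩ ⟨y, hyS⟩) : False := by
  obtain ⟨K, hKcase, hIK, hJK⟩ :
      ∃ K : Set V, ((G.Adj u v ∧ K = ∅) ∨ Good G u v K) ∧ Disjoint I K ∧ Disjoint J K := by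
    rcases third with h | ⟨K, hK, hIK, hJK⟩
    · exact ⟨∅, Or.inl ⟨h, rfl⟩, disjoint_bot_right, disjoint_bot_right⟩
    · exact ⟨K, Or.inr hK, hIK, hJK⟩
  have hKS : ∀ z ∈ K, z ≠ u ∧ z ≠ v := by
    rcases hKcase with h | hK
    · intro z hz
      rw [h.2] at hz
      exact absurd hz (Set.notMem_empty z)
    · exact hK.1
  have hKcase' : G.Adj u v ∨ Good G u v K := hKcase.imp And.left id
  obtain ⟨W₀, hW₀⟩ := walk_of_induce_reach hreach
  obtain ⟨z, hzT, W₁, hsub, hfirst⟩ := exists_prefix_firstHit (J ∪ K) W₀ (Or.inl hy)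
  have hW₁S : ∀ t ∈ W₁.support, t ≠ u ∧ t ≠ v := fun t ht => hW₀ t (hsub t ht)
  rcases hzT with hzJ | hzK
  · refine false_of_k4 hsp huv hI hJ hIJ hIK.symm hJK.symm hKS hKcase' hx hzJ W₁ hW₁S ?_ ?_
    · exact fun t ht htJ => hfirst t ht (Or.inl htJ)
    · intro t ht htK
      have : t = z := hfirst t ht (Or.inr htK)
      subst this
      exact hJK.ne_of_mem hzJ htK rfl
  · have hKgood : Good G u v K := by
      rcases hKcase with h | hK
      · rw [h.2] at hzK
        exact absurd hzK (Set.notMem_empty z)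
      · exact hK
    refine false_of_k4 hsp huv hI hKgood hIK hIJ.symm hJK (hJ.1) (Or.inr hJ) hx hzK W₁ hW₁S ?_ ?_
    · exact fun t ht htK => hfirst t ht (Or.inr htK)
    · intro t ht htJ
      have : t = z := hfirst t ht (Or.inl htJ)
      subst this
      exact hJK.ne_of_mem htJ hzK rfl


lemma good_of_path {w x s : V} (p : G.Walk s x) (hp : p.IsPath) (hsx : s ≠ x)
    (hws : G.Adj w s) (hsupw : ∀ t ∈ p.support, t ≠ w) :
    Good G w x {t | t ∈ p.support ∧ t ≠ x} := by
  obtain ⟨y, r, hyx, hr⟩ := peel_last p hp hsx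
  refine ⟨fun t ht => ⟨hsupw t ht.1, ht.2⟩, ⟨s, p.start_mem_support, hsx⟩, ?_, ?_, ?_⟩
  · rw [← hr]
    exact induce_support_connected r
  · exact ⟨s, ⟨p.start_mem_support, hsx⟩, hws⟩
  · refine ⟨y, ?_, hyx.symm⟩
    rw [← hr]
    exact r.end_mem_support


lemma exists_good_config (h2 : TwoConnected G) {w : V} (hdeg : 3 ≤ G.degree w) :
    ∃ v : V, w ≠ v ∧ ∃ I J : Set V, Good G w v I ∧ Good G w v J ∧ Disjoint I J ∧
      (G.Adj w v ∨ ∃ K, Good G w v K ∧ Disjoint I K ∧ Disjoint J K) := by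
  classical
  -- three distinct neighbors
  obtain ⟨a, ha, b, hb, d, hd, hab, had, hbd⟩ :
      ∃ a, G.Adj w a ∧ ∃ b, G.Adj w b ∧ ∃ d, G.Adj w d ∧ a ≠ b ∧ a ≠ d ∧ b ≠ d := by
    have h1 : 0 < (G.neighborFinset w).card := by
      rw [G.card_neighborFinset_eq_degree]; omega
    obtain ⟨a, ha⟩ := Finset.card_pos.1 h1
    have h2' : 0 < ((G.neighborFinset w).erase a).card := by
      have := Finset.card_erase_of_mem ha
      rw [this, G.card_neighborFinset_eq_degree]; omega
    obtain ⟨b, hb⟩ := Finset.card_pos.1 h2'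
    have h3' : 0 < (((G.neighborFinset w).erase a).erase b).card := by
      rw [Finset.card_erase_of_mem hb, Finset.card_erase_of_mem ha,
        G.card_neighborFinset_eq_degree]
      omega
    obtain ⟨d, hdm⟩ := Finset.card_pos.1 h3'
    have hd1 := Finset.mem_of_mem_erase (Finset.mem_of_mem_erase hdm)
    have hb1 := Finset.mem_of_mem_erase hb
    refine ⟨a, (G.mem_neighborFinset w a).1 ha, b, (G.mem_neighborFinset w b).1 hb1,
      d, (G.mem_neighborFinset w d).1 hd1, ?_, ?_, ?_⟩
    · exact fun h => (Finset.ne_of_mem_erase hb) h.symm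
    · exact fun h => (Finset.ne_of_mem_erase (Finset.mem_of_mem_erase hdm)) h.symm
    · exact fun h => (Finset.ne_of_mem_erase hdm) h.symm
  have hH := h2.2.2 w
  have haw : a ∈ {u : V | u ≠ w} := ha.ne'
  have hbw : b ∈ {u : V | u ≠ w} := hb.ne'
  have hdw : d ∈ {u : V | u ≠ w} := hd.ne'
  -- a path from a to b avoiding w
  obtain ⟨W, hWs⟩ := walk_of_induce_reach (hH.preconnected ⟨a, haw⟩ ⟨b, hbw⟩)
  set P : G.Walk a b := W.bypass with hPdef
  have hP : P.IsPath := W.bypass_isPath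
  have hPw : ∀ t ∈ P.support, t ≠ w := fun t ht => hWs t (W.support_bypass_subset ht)
  -- a hub x on P and a path R from d to x meeting P only at x, avoiding w
  obtain ⟨x, hxP, R, hR, hRw, hRP⟩ :
      ∃ x, x ∈ P.support ∧ ∃ R : G.Walk d x, R.IsPath ∧ (∀ t ∈ R.support, t ≠ w) ∧
        (∀ t ∈ R.support, t ∈ P.support → t = x) := by
    by_cases hdP : d ∈ P.support
    · refine ⟨d, hdP, SimpleGraph.Walk.nil, by simp, ?_, ?_⟩
      · intro t ht; rw [SimpleGraph.Walk.support_nil] at ht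
        rcases List.mem_singleton.1 ht with rfl
        exact hd.ne'
      · intro t ht _; rw [SimpleGraph.Walk.support_nil] at ht
        exact List.mem_singleton.1 ht
    · obtain ⟨W', hW's⟩ := walk_of_induce_reach (hH.preconnected ⟨d, hdw⟩ ⟨a, haw⟩)
      obtain ⟨x, hxT, W₁, hsub, hfirst⟩ :=
        exists_prefix_firstHit {t | t ∈ P.support} W' P.start_mem_support
      refine ⟨x, hxT, W₁.bypass, W₁.bypass_isPath, ?_, ?_⟩
      · exact fun t ht => hW's t (hsub t (W₁.support_bypass_subset ht))
      · exact fun t ht htP => hfirst t (W₁.support_bypass_subset ht) htP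
  have hwx : w ≠ x := fun h => hPw x hxP h.symm
  set P1 := P.takeUntil x hxP with hP1def
  set P2 := P.dropUntil x hxP with hP2def
  have hP1path : P1.IsPath := hP.takeUntil hxP
  have hP2path : P2.IsPath := hP.dropUntil hxP
  have hP1sub : ∀ t ∈ P1.support, t ∈ P.support := fun t ht => P.support_takeUntil_subset hxP ht
  have hP2sub : ∀ t ∈ P2.support, t ∈ P.support := fun t ht => P.support_dropUntil_subset hxP ht
  set S1 : Set V := {t | t ∈ P1.support ∧ t ≠ x} with hS1def
  set S2 : Set V := {t | t ∈ P2.support ∧ t ≠ x} with hS2def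
  set SK : Set V := {t | t ∈ R.support ∧ t ≠ x} with hSKdef
  have hS12 : Disjoint S1 S2 := by
    have hnodup : (P1.support ++ P2.support.tail).Nodup := by
      have := congrArg SimpleGraph.Walk.support (P.take_spec hxP)
      rw [SimpleGraph.Walk.support_append] at this
      rw [this]
      exact hP.support_nodup
    have hdisj := (List.nodup_append.1 hnodup).2.2
    rw [Set.disjoint_left]
    rintro t ⟨ht1, htx⟩ ⟨ht2, _⟩
    have : t ∈ P2.support.tail := by
      have := P2.support_eq_cons
      rw [this] at ht2
      rcases List.mem_cons.1 ht2 with rfl | h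
      · exact absurd rfl htx
      · exact h
    exact hdisj t ht1 t this rfl
  have hSKP : ∀ t ∈ SK, t ∉ P.support := by
    rintro t ⟨htR, htx⟩ htP
    exact htx (hRP t htR htP)
  have hS1K : Disjoint S1 SK := by
    rw [Set.disjoint_left]
    rintro t ⟨ht1, htx⟩ htK
    exact hSKP t htK (hP1sub t ht1)
  have hS2K : Disjoint S2 SK := by
    rw [Set.disjoint_left]
    rintro t ⟨ht2, htx⟩ htK
    exact hSKP t htK (hP2sub t ht2)
  -- goodness of the pieces when nontrivial
  have goodS1 : a ≠ x → Good G w x S1 :=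
    fun hax => good_of_path P1 hP1path hax ha (fun t ht => hPw t (hP1sub t ht))
  have goodS2 : b ≠ x → Good G w x S2 := by
    intro hbx
    have : S2 = {t | t ∈ P2.reverse.support ∧ t ≠ x} := by
      ext t
      simp [SimpleGraph.Walk.support_reverse, List.mem_reverse, hS2def]
    rw [this]
    exact good_of_path P2.reverse hP2path.reverse hbx hb
      (fun t ht => hPw t (hP2sub t (by rwa [SimpleGraph.Walk.support_reverse, List.mem_reverse] at ht)))
  have goodSK : d ≠ x → Good G w x SK :=
    fun hdx => good_of_path R hR hdx hd hRw
  -- case analysis on where the hub sits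
  by_cases hax : a = x
  · -- the hub is `a`: use S2 and SK, with the edge `w a`
    subst hax
    have hbx : b ≠ a := hab.symm
    have hdx : d ≠ a := had.symm
    exact ⟨a, hwx, S2, SK, goodS2 hbx, goodSK hdx, hS2K, Or.inl ha⟩
  by_cases hbx : b = x
  · subst hbx
    have hdx : d ≠ b := hbd.symm
    exact ⟨b, hwx, S1, SK, goodS1 hax, goodSK hdx, hS1K, Or.inl hb⟩
  by_cases hdx : d = x
  · subst hdx
    exact ⟨d, hwx, S1, S2, goodS1 hax, goodS2 hbx, hS12, Or.inl hd⟩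
  · exact ⟨x, hwx, S1, S2, goodS1 hax, goodS2 hbx, hS12,
      Or.inr ⟨SK, goodSK hdx, hS1K, hS2K⟩⟩


lemma two_le_card_of_ne {α : Type*} [Finite α] {x y : α} (h : x ≠ y) : 2 ≤ Nat.card α := by
  have hinj : Function.Injective ![x, y] := by
    intro i j hij
    fin_cases i <;> fin_cases j <;> simp_all
  simpa using Nat.card_le_card_of_injective _ hinj

lemma three_le_card_of_ne {α : Type*} [Finite α] {x y z : α} (hxy : x ≠ y) (hxz : x ≠ z)
    (hyz : y ≠ z) : 3 ≤ Nat.card α := by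
  have hinj : Function.Injective ![x, y, z] := by
    intro i j hij
    fin_cases i <;> fin_cases j <;> simp_all
  simpa using Nat.card_le_card_of_injective _ hinj

lemma two_le_degree (h2 : TwoConnected G) (w : V) : 2 ≤ G.degree w := by
  obtain ⟨hcard, hconn, hdel⟩ := h2
  obtain ⟨x, hxw⟩ : ∃ x : V, x ≠ w := by
    have : 1 < Fintype.card V := by omega
    exact Fintype.exists_ne_of_one_lt_card this w
  obtain ⟨p⟩ := hconn.preconnected w x
  obtain ⟨n, hn⟩ : ∃ n, G.Adj w n := by
    cases p with
    | nil => exact absurd rfl hxw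
    | cons h q => exact ⟨_, h⟩
  obtain ⟨y, hyw, hyn⟩ : ∃ y : V, y ≠ w ∧ y ≠ n := by
    by_contra hcon
    push_neg at hcon
    have hsub : (Finset.univ : Finset V) ⊆ {w, n} := by
      intro t _
      by_cases htw : t = w
      · simp [htw]
      · simp [hcon t htw]
    have := Finset.card_le_card hsub
    have h2' := Finset.card_insert_le w ({n} : Finset V)
    simp only [Finset.card_univ, Finset.card_singleton] at this h2'
    omega
  have hwn : w ≠ n := hn.ne
  obtain ⟨q, hq⟩ := walk_of_induce_reach ((hdel n).preconnected ⟨w, hwn⟩ ⟨y, hyn⟩)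
  obtain ⟨n', hn', hn'n⟩ : ∃ n', G.Adj w n' ∧ n' ≠ n := by
    cases q with
    | nil => exact absurd rfl hyw.symm
    | cons h r =>
      rename_i s
      refine ⟨s, h, ?_⟩
      exact hq s (by simp [SimpleGraph.Walk.support_cons, r.start_mem_support])
  have : 1 < (G.neighborFinset w).card := by
    refine Finset.one_lt_card.2 ⟨n, ?_, n', ?_, fun h => hn'n h.symm⟩
    · exact (G.mem_neighborFinset w n).2 hn
    · exact (G.mem_neighborFinset w n').2 hn'
  rw [G.card_neighborFinset_eq_degree] at this
  omega


end Helpers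

/-- A 2-node-connected series-parallel capacitated graph is either a
capacitated ring or has a strict 2-cut. -/
theorem twoConnected_sp_ring_or_strictTwoCut
    (G : SimpleGraph V) (c : V → V → ℚ) (hc : IsIntWeight G c)
    (hsp : ¬ HasK4Minor G) (h2 : TwoConnected G) :
    (G.Connected ∧ ∀ v : V, G.degree v = 2) ∨ ∃ u v : V, StrictTwoCut G u v := by
  have main : (G.Connected ∧ ∀ v : V, G.degree v = 2) ∨
      ∃ u v : V, u ≠ v ∧
        2 ≤ Nat.card (G.induce {w : V | w ≠ u ∧ w ≠ v}).ConnectedComponent ∧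
        3 ≤ Nat.card (G.induce {w : V | w ≠ u ∧ w ≠ v}).ConnectedComponent +
          (if G.Adj u v then 1 else 0) := by
      by_cases hall : ∀ v : V, G.degree v = 2
      · exact Or.inl ⟨h2.2.1, hall⟩
      · push_neg at hall
        obtain ⟨w, hw⟩ := hall
        have hdeg3 : 3 ≤ G.degree w := by
          have := two_le_degree h2 w
          omega
        obtain ⟨v, hwv, I, J, hI, hJ, hIJ, third⟩ := exists_good_config h2 hdeg3
        obtain ⟨xI, hxI⟩ := hI.2.1
        obtain ⟨xJ, hxJ⟩ := hJ.2.1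
        have hxIS : xI ∈ {z : V | z ≠ w ∧ z ≠ v} := hI.1 xI hxI
        have hxJS : xJ ∈ {z : V | z ≠ w ∧ z ≠ v} := hJ.1 xJ hxJ
        set G' := G.induce {z : V | z ≠ w ∧ z ≠ v} with hG'def
        have hsepIJ : ¬ G'.Reachable ⟨xI, hxIS⟩ ⟨xJ, hxJS⟩ :=
          fun hr => sep hsp hwv hI hJ hIJ third hxI hxJ hxIS hxJS hr
        have hccIJ : G'.connectedComponentMk ⟨xI, hxIS⟩ ≠ G'.connectedComponentMk ⟨xJ, hxJS⟩ :=
          fun h => hsepIJ ((SimpleGraph.ConnectedComponent.eq).1 h)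
        have hcount2 : 2 ≤ Nat.card G'.ConnectedComponent := two_le_card_of_ne hccIJ
        refine Or.inr ⟨w, v, hwv, hcount2, ?_⟩
        by_cases hadj : G.Adj w v
        · rw [if_pos hadj]
          rw [hG'def] at hcount2
          omega
        · rw [if_neg hadj]
          rcases third with h | ⟨K, hK, hIK, hJK⟩
          · exact absurd h hadj
          obtain ⟨xK, hxK⟩ := hK.2.1
          have hxKS : xK ∈ {z : V | z ≠ w ∧ z ≠ v} := hK.1 xK hxK
          have hsepIK : ¬ G'.Reachable ⟨xI, hxIS⟩ ⟨xK, hxKS⟩ :=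
            fun hr => sep hsp hwv hI hK hIK (Or.inr ⟨J, hJ, hIJ, hJK.symm⟩) hxI hxK hxIS hxKS hr
          have hsepJK : ¬ G'.Reachable ⟨xJ, hxJS⟩ ⟨xK, hxKS⟩ :=
            fun hr => sep hsp hwv hJ hK hJK (Or.inr ⟨I, hI, hIJ.symm, hIK.symm⟩) hxJ hxK hxJS hxKS hr
          have h3 : 3 ≤ Nat.card G'.ConnectedComponent := by
            refine three_le_card_of_ne (x := G'.connectedComponentMk ⟨xI, hxIS⟩)
              (y := G'.connectedComponentMk ⟨xJ, hxJS⟩)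
              (z := G'.connectedComponentMk ⟨xK, hxKS⟩) hccIJ
              (fun h => hsepIK ((SimpleGraph.ConnectedComponent.eq).1 h))
              (fun h => hsepJK ((SimpleGraph.ConnectedComponent.eq).1 h))
          rw [hG'def] at h3
          omega
  rcases main with h | ⟨u, v, h1, h2', h3'⟩
  · exact Or.inl h
  · exact Or.inr ⟨u, v, h1, h2', h3'⟩

end FlowCut
end

section
/- Let u,v be a pair of nodes in a series-parallel graph G, and let {l,r} be a 2-cut separating u from v. Let L be a central set containing l but none of u, r, v, and let R be a central set containing r but none of u, l, v. Then L∖R and R∖L are central. -/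
open scoped Classical

namespace FlowCut

variable {V : Type} [Fintype V] [DecidableEq V]

/-- A set `S` is central if both `G[S]` and `G[V ∖ S]` are connected. -/
def Central (G : SimpleGraph V) (S : Finset V) : Prop :=
  (G.induce (↑S : Set V)).Connected ∧ (G.induce (↑(Sᶜ) : Set V)).Connected

/-- The pair `{l, r}` separates `u` from `v`: every `u`–`v` walk in `G` meets `l` or `r`,
i.e. `u` and `v` lie in different components of `G − {l, r}`. -/
def SepPair (G : SimpleGraph V) (l r u v : V) : Prop :=
  ∀ p : G.Walk u v, l ∈ p.support ∨ r ∈ p.support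

/-! ### Reachability inside a set -/

section Reach

variable (G : SimpleGraph V)

/-- Reachability within a set `S` of vertices. -/
def Reach (S : Set V) (x y : V) : Prop :=
  x ∈ S ∧ Relation.ReflTransGen (fun a b => b ∈ S ∧ G.Adj a b) x y

variable {G}

theorem Reach.mem_left {S : Set V} {x y : V} (h : Reach G S x y) : x ∈ S := h.1

theorem Reach.mem_right {S : Set V} {x y : V} (h : Reach G S x y) : y ∈ S := by
  obtain ⟨hx, h2⟩ := h
  induction h2 with
  | refl => exact hx
  | tail _ step _ => exact step.1

theorem Reach.refl {S : Set V} {x : V} (hx : x ∈ S) : Reach G S x x :=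
  ⟨hx, Relation.ReflTransGen.refl⟩

theorem Reach.tail {S : Set V} {x y z : V} (h : Reach G S x y) (hz : z ∈ S)
    (hadj : G.Adj y z) : Reach G S x z :=
  ⟨h.1, h.2.tail ⟨hz, hadj⟩⟩

theorem Reach.trans {S : Set V} {x y z : V} (h : Reach G S x y) (h' : Reach G S y z) :
    Reach G S x z :=
  ⟨h.1, h.2.trans h'.2⟩

theorem Reach.symm {S : Set V} {x y : V} (h : Reach G S x y) : Reach G S y x := by
  obtain ⟨hx, h2⟩ := h
  induction h2 with
  | refl => exact ⟨hx, Relation.ReflTransGen.refl⟩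
  | tail _ step ih => exact ⟨step.1, Relation.ReflTransGen.head ⟨ih.1, step.2.symm⟩ ih.2⟩

theorem Reach.head {S : Set V} {x y z : V} (hx : x ∈ S) (hy : y ∈ S) (hadj : G.Adj x y)
    (h : Reach G S y z) : Reach G S x z :=
  ⟨hx, Relation.ReflTransGen.head ⟨hy, hadj⟩ h.2⟩

theorem Reach.mono {S T : Set V} (hST : S ⊆ T) {x y : V} (h : Reach G S x y) :
    Reach G T x y :=
  ⟨hST h.1, Relation.ReflTransGen.mono (p := fun a b => b ∈ T ∧ G.Adj a b)
    (fun _ _ hab => ⟨hST hab.1, hab.2⟩) _ _ h.2⟩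

variable (G) in
/-- The reachability component of `x` inside `S`. -/
def RC (S : Set V) (x : V) : Set V := {y | Reach G S x y}

theorem RC.subset {S : Set V} {x : V} : RC G S x ⊆ S := fun _ h => h.mem_right

theorem mem_RC {S : Set V} {x y : V} : y ∈ RC G S x ↔ Reach G S x y := Iff.rfl

theorem Reach.rc {S : Set V} {x y : V} (h : Reach G S x y) : Reach G (RC G S x) x y := by
  obtain ⟨hx, h2⟩ := h
  induction h2 with
  | refl => exact Reach.refl (Reach.refl hx)
  | tail hab step ih => exact ih.tail ⟨hx, hab.tail step⟩ step.2

theorem RC.reach {S : Set V} {x a b : V} (ha : a ∈ RC G S x) (hb : b ∈ RC G S x) :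
    Reach G (RC G S x) a b :=
  (Reach.rc ha).symm.trans (Reach.rc hb)

variable (G) in
/-- A set that is nonempty and internally connected. -/
def IsConnSet (S : Set V) : Prop :=
  S.Nonempty ∧ ∀ x ∈ S, ∀ y ∈ S, Reach G S x y

theorem isConnSet_rc {S : Set V} {x : V} (hx : x ∈ S) : IsConnSet G (RC G S x) :=
  ⟨⟨x, Reach.refl hx⟩, fun _ ha _ hb => RC.reach ha hb⟩

theorem isConnSet_union_adj {A B : Set V} (hA : IsConnSet G A) (hB : IsConnSet G B)
    {a b : V} (ha : a ∈ A) (hb : b ∈ B) (hab : G.Adj a b) : IsConnSet G (A ∪ B) := by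
  refine ⟨⟨a, Or.inl ha⟩, ?_⟩
  have key : ∀ x ∈ A ∪ B, Reach G (A ∪ B) x a := by
    intro x hx
    rcases hx with hx | hx
    · exact (hA.2 x hx a ha).mono Set.subset_union_left
    · exact (((hB.2 x hx b hb).mono Set.subset_union_right).tail (Or.inl ha) hab.symm)
  intro x hx y hy
  exact (key x hx).trans (key y hy).symm

theorem isConnSet_union_mem {A B : Set V} (hA : IsConnSet G A) (hB : IsConnSet G B)
    {a : V} (ha : a ∈ A) (hb : a ∈ B) : IsConnSet G (A ∪ B) := by
  refine ⟨⟨a, Or.inl ha⟩, ?_⟩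
  have key : ∀ x ∈ A ∪ B, Reach G (A ∪ B) x a := by
    intro x hx
    rcases hx with hx | hx
    · exact (hA.2 x hx a ha).mono Set.subset_union_left
    · exact (hB.2 x hx a hb).mono Set.subset_union_right
  intro x hx y hy
  exact (key x hx).trans (key y hy).symm

/-- From `Reach` within `S` to reachability in the induced graph. -/
theorem reach_to_induce {S : Set V} {x y : V} (h : Reach G S x y) :
    ∀ (hx : x ∈ S) (hy : y ∈ S), (G.induce S).Reachable ⟨x, hx⟩ ⟨y, hy⟩ := by
  obtain ⟨hx0, h2⟩ := h
  induction h2 with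
  | refl => intro hx hy; exact ⟨SimpleGraph.Walk.nil⟩
  | @tail b c hab step ih =>
      intro hx hy
      have hb : b ∈ S := (Reach.mem_right ⟨hx0, hab⟩ : b ∈ S)
      refine (ih hx hb).trans (SimpleGraph.Adj.reachable ?_)
      show G.Adj b c
      exact step.2

theorem IsConnSet.induce_connected {S : Set V} (h : IsConnSet G S) :
    (G.induce S).Connected := by
  rw [SimpleGraph.connected_iff]
  constructor
  · rintro ⟨x, hx⟩ ⟨y, hy⟩
    exact reach_to_induce (h.2 x hx y hy) hx hy
  · obtain ⟨x, hx⟩ := h.1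
    exact ⟨⟨x, hx⟩⟩

/-- From connectivity of an induced graph to `Reach`. -/
theorem induce_connected_reach {S : Set V} (h : (G.induce S).Connected) {x y : V}
    (hx : x ∈ S) (hy : y ∈ S) : Reach G S x y := by
  obtain ⟨w⟩ := h.preconnected ⟨x, hx⟩ ⟨y, hy⟩
  clear h
  have H : ∀ (a b : ↥S), (G.induce S).Walk a b → Reach G S (a : V) (b : V) := by
    intro a b w
    induction w with
    | nil => exact Reach.refl (Subtype.prop _)
    | @cons a c b hadj p ih =>
        refine Reach.head (Subtype.prop a) (Subtype.prop c) ?_ ih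
        exact hadj
  exact H _ _ w

/-- Extract an honest walk from set-reachability. -/
theorem Reach.exists_walk {S : Set V} {x y : V} (h : Reach G S x y) :
    ∃ p : G.Walk x y, ∀ z ∈ p.support, z ∈ S := by
  obtain ⟨hx, h2⟩ := h
  induction h2 with
  | refl => exact ⟨SimpleGraph.Walk.nil, by simpa using hx⟩
  | @tail b c hab step ih =>
      obtain ⟨p, hp⟩ := ih
      refine ⟨p.append step.2.toWalk, ?_⟩
      intro z hz
      rw [SimpleGraph.Walk.mem_support_append_iff] at hz
      rcases hz with hz | hz
      · exact hp z hz
      · have : z = b ∨ z = c := by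
          simpa [SimpleGraph.Adj.toWalk] using hz
        rcases this with rfl | rfl
        · exact (Reach.mem_right ⟨hx, hab⟩ : z ∈ S)
        · exact step.1

/-- First-hit lemma: a reach from `x ∉ Bad` to `t ∈ Bad` within `W` yields an edge from the
component of `x` in `W \ Bad` into `Bad`. -/
theorem firsthit {W Bad : Set V} {x t : V} (h : Reach G W x t) (hx : x ∉ Bad)
    (ht : t ∈ Bad) :
    ∃ a b, Reach G (W \ Bad) x a ∧ b ∈ Bad ∧ b ∈ W ∧ G.Adj a b := by
  obtain ⟨hxW, h2⟩ := h
  have key' : ∀ t', Relation.ReflTransGen (fun a b => b ∈ W ∧ G.Adj a b) x t' →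
      (∃ a b, Reach G (W \ Bad) x a ∧ b ∈ Bad ∧ b ∈ W ∧ G.Adj a b) ∨
      Reach G (W \ Bad) x t' := by
    intro t' h2'
    induction h2' with
    | refl => exact Or.inr (Reach.refl ⟨hxW, hx⟩)
    | @tail b c hab step ih =>
        rcases ih with hih | hih
        · exact Or.inl hih
        · by_cases hc : c ∈ Bad
          · exact Or.inl ⟨b, c, hih, hc, step.1, step.2⟩
          · exact Or.inr (hih.tail ⟨step.1, hc⟩ step.2)
  have key := key' t h2
  rcases key with hk | hk
  · exact hk
  · exact absurd ht hk.mem_right.2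

end Reach

/-! ### The main construction -/

/-- The hard half: under all the hypotheses, `L \ R` induces a connected graph. -/
theorem induce_sdiff_connected
    (G : SimpleGraph V) (hsp : ¬ HasK4Minor G)
    (u v l r : V)
    (hsep : SepPair G l r u v)
    (L R : Finset V)
    (hL : Central G L) (hlL : l ∈ L) (huL : u ∉ L) (hrL : r ∉ L) (hvL : v ∉ L)
    (hR : Central G R) (hrR : r ∈ R) (huR : u ∉ R) (hlR : l ∉ R) (hvR : v ∉ R) :
    (G.induce (↑(L \ R) : Set V)).Connected := by
  classical
  set SL : Set V := (↑L : Set V) with hSLdef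
  set SR : Set V := (↑R : Set V) with hSRdef
  have hlSL : l ∈ SL := by simpa [hSLdef] using hlL
  have hrSR : r ∈ SR := by simpa [hSRdef] using hrR
  have hlSR : l ∉ SR := by simpa [hSRdef] using hlR
  have hrSL : r ∉ SL := by simpa [hSLdef] using hrL
  have huSL : u ∉ SL := by simpa [hSLdef] using huL
  have huSR : u ∉ SR := by simpa [hSRdef] using huR
  have hvSL : v ∉ SL := by simpa [hSLdef] using hvL
  have hvSR : v ∉ SR := by simpa [hSRdef] using hvR
  -- connectivity data as `Reach`
  have hLconn : ∀ a ∈ SL, ∀ b ∈ SL, Reach G SL a b := fun a ha b hb =>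
    induce_connected_reach hL.1 ha hb
  have hRconn : ∀ a ∈ SR, ∀ b ∈ SR, Reach G SR a b := fun a ha b hb =>
    induce_connected_reach hR.1 ha hb
  have hLcompl : (↑(Lᶜ) : Set V) = SLᶜ := by rw [Finset.coe_compl]
  have hRcompl : (↑(Rᶜ) : Set V) = SRᶜ := by rw [Finset.coe_compl]
  have hLcconn : ∀ a ∈ SLᶜ, ∀ b ∈ SLᶜ, Reach G SLᶜ a b := by
    have h2 := hL.2
    rw [hLcompl] at h2
    exact fun a ha b hb => induce_connected_reach h2 ha hb
  have hRcconn : ∀ a ∈ SRᶜ, ∀ b ∈ SRᶜ, Reach G SRᶜ a b := by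
    have h2 := hR.2
    rw [hRcompl] at h2
    exact fun a ha b hb => induce_connected_reach h2 ha hb
  -- the four parts
  set P1 : Set V := SL \ SR with hP1def
  set P3 : Set V := SR \ SL with hP3def
  have hlP1 : l ∈ P1 := ⟨hlSL, hlSR⟩
  have hrP3 : r ∈ P3 := ⟨hrSR, hrSL⟩
  have hcoe : (↑(L \ R) : Set V) = P1 := by rw [Finset.coe_sdiff]
  rw [hcoe]
  -- it suffices to reach every vertex of `P1` from `l`
  suffices hall : ∀ c ∈ P1, Reach G P1 l c by
    exact IsConnSet.induce_connected
      ⟨⟨l, hlP1⟩, fun x hx y hy => (hall x hx).symm.trans (hall y hy)⟩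
  by_contra hno
  push_neg at hno
  obtain ⟨c, hcP1, hcreach⟩ := hno
  -- components of `l` and `r`
  set C0 : Set V := RC G P1 l with hC0def
  set Pr : Set V := RC G P3 r with hPrdef
  set Om : Set V := (C0 ∪ Pr)ᶜ with hOmdef
  have hC0P1 : C0 ⊆ P1 := RC.subset
  have hPrP3 : Pr ⊆ P3 := RC.subset
  have hlC0 : l ∈ C0 := Reach.refl hlP1
  have hrPr : r ∈ Pr := Reach.refl hrP3
  have hC0closed : ∀ a ∈ P1, ∀ b ∈ C0, G.Adj a b → a ∈ C0 := by
    intro a ha b hb hab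
    exact (hb.tail ha hab.symm : Reach G P1 l a)
  have hPrclosed : ∀ a ∈ P3, ∀ b ∈ Pr, G.Adj a b → a ∈ Pr := by
    intro a ha b hb hab
    exact (hb.tail ha hab.symm : Reach G P3 r a)
  have hcOm : c ∈ Om := by
    intro hmem
    rcases hmem with h | h
    · exact hcreach h
    · exact hcP1.2 (hPrP3 h).1
  -- attachment lemmas
  have hA1 : ∀ x, x ∉ SR → x ∈ Om →
      ∃ a b, Reach G (SRᶜ ∩ Om) x a ∧ a ∉ SL ∧ b ∈ C0 ∧ G.Adj a b := by
    intro x hxRc hxOm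
    have hlRc : l ∉ SR := hlSR
    have hdiff : SRᶜ \ (C0 ∪ Pr) = SRᶜ ∩ Om := by rw [Set.diff_eq]
    obtain ⟨a, b, hra, hbBad, hbW, hadj⟩ :=
      firsthit (hRcconn x hxRc l hlRc) hxOm (Or.inl hlC0)
    rw [hdiff] at hra
    have hbC0 : b ∈ C0 := by
      rcases hbBad with hb | hb
      · exact hb
      · exact absurd (hPrP3 hb).1 hbW
    have haOm : a ∈ SRᶜ ∩ Om := hra.mem_right
    by_cases haSL : a ∈ SL
    · exact absurd (Or.inl (hC0closed a ⟨haSL, haOm.1⟩ b hbC0 hadj)) haOm.2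
    · exact ⟨a, b, hra, haSL, hbC0, hadj⟩
  have hA2 : ∀ x, x ∉ SL → x ∈ Om →
      ∃ a b, Reach G (SLᶜ ∩ Om) x a ∧ a ∉ SR ∧ b ∈ Pr ∧ G.Adj a b := by
    intro x hxLc hxOm
    have hrLc : r ∉ SL := hrSL
    have hdiff : SLᶜ \ (C0 ∪ Pr) = SLᶜ ∩ Om := by rw [Set.diff_eq]
    obtain ⟨a, b, hra, hbBad, hbW, hadj⟩ :=
      firsthit (hLcconn x hxLc r hrLc) hxOm (Or.inr hrPr)
    rw [hdiff] at hra
    have hbPr : b ∈ Pr := by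
      rcases hbBad with hb | hb
      · exact absurd (hC0P1 hb).1 hbW
      · exact hb
    have haOm : a ∈ SLᶜ ∩ Om := hra.mem_right
    by_cases haSR : a ∈ SR
    · exact absurd (Or.inr (hPrclosed a ⟨haSR, haOm.1⟩ b hbPr hadj)) haOm.2
    · exact ⟨a, b, hra, haSR, hbPr, hadj⟩
  have hA3 : ∀ x, x ∈ SL → x ∈ Om →
      ∃ a b, Reach G (SL ∩ Om) x a ∧ a ∈ SR ∧ b ∈ C0 ∧ G.Adj a b := by
    intro x hxL hxOm
    have hdiff : SL \ (C0 ∪ Pr) = SL ∩ Om := by rw [Set.diff_eq]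
    obtain ⟨a, b, hra, hbBad, hbW, hadj⟩ :=
      firsthit (hLconn x hxL l hlSL) hxOm (Or.inl hlC0)
    rw [hdiff] at hra
    have hbC0 : b ∈ C0 := by
      rcases hbBad with hb | hb
      · exact hb
      · exact absurd hbW (hPrP3 hb).2
    have haOm : a ∈ SL ∩ Om := hra.mem_right
    by_cases haSR : a ∈ SR
    · exact ⟨a, b, hra, haSR, hbC0, hadj⟩
    · exact absurd (Or.inl (hC0closed a ⟨haOm.1, haSR⟩ b hbC0 hadj)) haOm.2
  have hA4 : ∀ x, x ∈ SR → x ∈ Om →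
      ∃ a b, Reach G (SR ∩ Om) x a ∧ b ∈ Pr ∧ G.Adj a b := by
    intro x hxR hxOm
    have hdiff : SR \ (C0 ∪ Pr) = SR ∩ Om := by rw [Set.diff_eq]
    obtain ⟨a, b, hra, hbBad, hbW, hadj⟩ :=
      firsthit (hRconn x hxR r hrSR) hxOm (Or.inr hrPr)
    rw [hdiff] at hra
    have hbPr : b ∈ Pr := by
      rcases hbBad with hb | hb
      · exact absurd hbW (hC0P1 hb).2
      · exact hb
    exact ⟨a, b, hra, hbPr, hadj⟩
  -- build the four branch sets
  obtain ⟨y, by1, hy_reach, hySLc, hby1C0, hadjy⟩ := hA1 c hcP1.2 hcOm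
  have hyOm : y ∈ Om := hy_reach.mem_right.2
  obtain ⟨w, bw, hw_reach, hwSRc, hbwPr, hadjw⟩ := hA2 y hySLc hyOm
  have hwOm : w ∈ Om := hw_reach.mem_right.2
  set S2 : Set V := RC G (SRᶜ ∩ Om) w with hS2def
  have hwS2 : w ∈ S2 := Reach.refl ⟨hwSRc, hwOm⟩
  obtain ⟨y', by', hy'_reach, _, hby'C0, hadjy'⟩ := hA1 w hwSRc hwOm
  have hy'S2 : y' ∈ S2 := hy'_reach
  obtain ⟨p, bp, hp_reach, hpSR, hbpC0, hadjp⟩ := hA3 c hcP1.1 hcOm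
  have hpOm : p ∈ Om := hp_reach.mem_right.2
  obtain ⟨q, bq, hq_reach, hbqPr, hadjq⟩ := hA4 p hpSR hpOm
  have hS2sub : S2 ⊆ SRᶜ ∩ Om := RC.subset
  have hpS2 : p ∉ S2 := fun h => (hS2sub h).1 hpSR
  set S1 : Set V := RC G (Om \ S2) p with hS1def
  have hS1sub : S1 ⊆ Om \ S2 := RC.subset
  have hpS1 : p ∈ S1 := Reach.refl ⟨hpOm, hpS2⟩
  have hqS1 : q ∈ S1 := by
    refine (hq_reach.mono ?_ : Reach G (Om \ S2) p q)
    intro z hz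
    exact ⟨hz.2, fun h => (hS2sub h).1 hz.1⟩
  -- edge between S1 and S2
  have hpc : Reach G Om c p := (hp_reach.mono Set.inter_subset_right)
  have hcw : Reach G Om c w :=
    (hy_reach.mono Set.inter_subset_right).trans (hw_reach.mono Set.inter_subset_right)
  have hpw : Reach G Om p w := hpc.symm.trans hcw
  obtain ⟨a1, b1, ha1, hb1S2, _, hadj1⟩ := firsthit hpw hpS2 hwS2
  have ha1S1 : a1 ∈ S1 := ha1
  -- the far component K'
  have huOm : u ∈ Om := by
    intro hmem
    rcases hmem with h | h
    · exact huSL (hC0P1 h).1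
    · exact huSR (hPrP3 h).1
  have hvOm : v ∈ Om := by
    intro hmem
    rcases hmem with h | h
    · exact hvSL (hC0P1 h).1
    · exact hvSR (hPrP3 h).1
  have huv : ¬ Reach G Om u v := by
    intro h
    obtain ⟨pw, hpwalk⟩ := h.exists_walk
    rcases hsep pw with hl | hr
    · exact (hpwalk l hl) (Or.inl hlC0)
    · exact (hpwalk r hr) (Or.inr hrPr)
  have hKex : ∃ u', u' ∈ Om ∧ u' ∉ SL ∧ u' ∉ SR ∧ ¬ Reach G Om c u' := by
    by_cases hcu : Reach G Om c u
    · exact ⟨v, hvOm, hvSL, hvSR, fun h => huv (hcu.symm.trans h)⟩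
    · exact ⟨u, huOm, huSL, huSR, hcu⟩
  obtain ⟨u', hu'Om, hu'SL, hu'SR, hcu'⟩ := hKex
  set K' : Set V := RC G Om u' with hK'def
  have hK'sub : K' ⊆ Om := RC.subset
  obtain ⟨a3, b3, ha3, _, hb3C0, hadj3⟩ := hA1 u' hu'SR hu'Om
  have ha3K' : a3 ∈ K' := (ha3.mono Set.inter_subset_right : Reach G Om u' a3)
  obtain ⟨a4, b4, ha4, _, hb4Pr, hadj4⟩ := hA2 u' hu'SL hu'Om
  have ha4K' : a4 ∈ K' := (ha4.mono Set.inter_subset_right : Reach G Om u' a4)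
  -- reach from c to everything in S1 ∪ S2, hence disjointness from K'
  have hreachS1 : ∀ z ∈ S1, Reach G Om c z := fun z hz =>
    hpc.trans ((hz : Reach G (Om \ S2) p z).mono Set.diff_subset)
  have hreachS2 : ∀ z ∈ S2, Reach G Om c z := fun z hz =>
    hcw.trans (((RC.reach hwS2 hz).mono (RC.subset.trans Set.inter_subset_right)))
  have hK'S1 : ∀ z, z ∈ K' → z ∈ S1 → False := fun z hzK hzS =>
    hcu' ((hreachS1 z hzS).trans (hzK : Reach G Om u' z).symm)
  have hK'S2 : ∀ z, z ∈ K' → z ∈ S2 → False := fun z hzK hzS =>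
    hcu' ((hreachS2 z hzS).trans (hzK : Reach G Om u' z).symm)
  -- connectivity of the branch sets
  have hS1conn : IsConnSet G S1 := isConnSet_rc ⟨hpOm, hpS2⟩
  have hS2conn : IsConnSet G S2 := isConnSet_rc ⟨hwSRc, hwOm⟩
  have hC0conn : IsConnSet G C0 := isConnSet_rc hlP1
  have hPrconn : IsConnSet G Pr := isConnSet_rc hrP3
  have hK'conn : IsConnSet G K' := isConnSet_rc hu'Om
  have hB3conn : IsConnSet G (C0 ∪ K') :=
    isConnSet_union_adj hC0conn hK'conn hb3C0 ha3K' hadj3.symm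
  -- disjointness facts
  have hOmC0 : ∀ z ∈ Om, z ∉ C0 := fun z hz h => hz (Or.inl h)
  have hOmPr : ∀ z ∈ Om, z ∉ Pr := fun z hz h => hz (Or.inr h)
  have hS1Om : S1 ⊆ Om := hS1sub.trans Set.diff_subset
  have hS2Om : S2 ⊆ Om := hS2sub.trans Set.inter_subset_right
  have d12 : ∀ z, z ∈ S1 → z ∈ S2 → False := fun z hz1 hz2 => (hS1sub hz1).2 hz2
  have d13 : ∀ z, z ∈ S1 → z ∈ C0 ∪ K' → False := by
    rintro z hz1 (hz | hz)
    · exact hOmC0 z (hS1Om hz1) hz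
    · exact hK'S1 z hz hz1
  have d14 : ∀ z, z ∈ S1 → z ∈ Pr → False := fun z hz1 hz2 => hOmPr z (hS1Om hz1) hz2
  have d23 : ∀ z, z ∈ S2 → z ∈ C0 ∪ K' → False := by
    rintro z hz1 (hz | hz)
    · exact hOmC0 z (hS2Om hz1) hz
    · exact hK'S2 z hz hz1
  have d24 : ∀ z, z ∈ S2 → z ∈ Pr → False := fun z hz1 hz2 => hOmPr z (hS2Om hz1) hz2
  have d34 : ∀ z, z ∈ C0 ∪ K' → z ∈ Pr → False := by
    rintro z (hz | hz) hz2
    · exact (hC0P1 hz).2 (hPrP3 hz2).1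
    · exact hOmPr z (hK'sub hz) hz2
  -- assemble the K4 minor
  refine hsp ?_
  have mkdj : ∀ {A B : Set V}, (∀ z, z ∈ A → z ∈ B → False) →
      Disjoint ((Set.toFinite A).toFinset) ((Set.toFinite B).toFinset) := by
    intro A B h
    rw [Set.Finite.disjoint_toFinset, Set.disjoint_left]
    intro z hz1 hz2
    exact absurd (h z hz1 hz2) not_false
  have mke : ∀ {A B : Set V} {a b : V}, a ∈ A → b ∈ B → G.Adj a b →
      ∃ x ∈ (Set.toFinite A).toFinset, ∃ y ∈ (Set.toFinite B).toFinset, G.Adj x y :=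
    fun ha hb hab =>
      ⟨_, (Set.Finite.mem_toFinset _).2 ha, _, (Set.Finite.mem_toFinset _).2 hb, hab⟩
  have dsymm : ∀ {A B : Set V}, (∀ z, z ∈ A → z ∈ B → False) →
      (∀ z, z ∈ B → z ∈ A → False) := fun h z hz1 hz2 => h z hz2 hz1
  refine ⟨![(Set.toFinite S1).toFinset, (Set.toFinite S2).toFinset,
    (Set.toFinite (C0 ∪ K')).toFinset, (Set.toFinite Pr).toFinset], ?_, ?_, ?_, ?_⟩
  · intro i
    fin_cases i
    · exact ⟨p, (Set.Finite.mem_toFinset _).2 hpS1⟩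
    · exact ⟨w, (Set.Finite.mem_toFinset _).2 hwS2⟩
    · exact ⟨l, (Set.Finite.mem_toFinset _).2 (Or.inl hlC0)⟩
    · exact ⟨r, (Set.Finite.mem_toFinset _).2 hrPr⟩
  · intro i j hij
    fin_cases i <;> fin_cases j <;>
      first
      | exact absurd rfl hij
      | exact mkdj d12
      | exact mkdj d13
      | exact mkdj d14
      | exact mkdj d23
      | exact mkdj d24
      | exact mkdj d34
      | exact mkdj (dsymm d12)
      | exact mkdj (dsymm d13)
      | exact mkdj (dsymm d14)
      | exact mkdj (dsymm d23)
      | exact mkdj (dsymm d24)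
      | exact mkdj (dsymm d34)
  · have hic : ∀ (A : Set V), IsConnSet G A →
        (G.induce (↑((Set.toFinite A).toFinset) : Set V)).Connected := by
      intro A hA
      rw [Set.Finite.coe_toFinset]
      exact hA.induce_connected
    intro i
    fin_cases i
    · exact hic _ hS1conn
    · exact hic _ hS2conn
    · exact hic _ hB3conn
    · exact hic _ hPrconn
  · intro i j hij
    have e12 := mke ha1S1 hb1S2 hadj1
    have e13 := mke hpS1 (Set.mem_union_left K' hbpC0) hadjp
    have e14 := mke hqS1 hbqPr hadjq
    have e23 := mke hy'S2 (Set.mem_union_left K' hby'C0) hadjy'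
    have e24 := mke hwS2 hbwPr hadjw
    have e34 := mke (Set.mem_union_right C0 ha4K') hb4Pr hadj4
    have e21 := mke hb1S2 ha1S1 hadj1.symm
    have e31 := mke (Set.mem_union_left K' hbpC0) hpS1 hadjp.symm
    have e41 := mke hbqPr hqS1 hadjq.symm
    have e32 := mke (Set.mem_union_left K' hby'C0) hy'S2 hadjy'.symm
    have e42 := mke hbwPr hwS2 hadjw.symm
    have e43 := mke hb4Pr (Set.mem_union_right C0 ha4K') hadj4.symm
    fin_cases i <;> fin_cases j <;>
      first
      | exact absurd rfl hij
      | exact e12 | exact e13 | exact e14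
      | exact e23 | exact e24 | exact e34
      | exact e21 | exact e31 | exact e41
      | exact e32 | exact e42 | exact e43

/-- The easy half: the complement of `L \ R` induces a connected graph. -/
theorem induce_compl_sdiff_connected
    (G : SimpleGraph V) (r : V) (L R : Finset V)
    (hL : Central G L) (hR : Central G R) (hrR : r ∈ R) (hrL : r ∉ L) :
    (G.induce (↑((L \ R)ᶜ) : Set V)).Connected := by
  classical
  have hset : (↑((L \ R)ᶜ) : Set V) = (↑L : Set V)ᶜ ∪ (↑R : Set V) := by
    ext z
    simp only [Finset.coe_compl, Finset.coe_sdiff, Set.mem_compl_iff, Set.mem_union,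
      Set.mem_diff, Finset.mem_coe]
    tauto
  rw [hset]
  have hLcompl : (↑(Lᶜ) : Set V) = (↑L : Set V)ᶜ := by rw [Finset.coe_compl]
  have h2 := hL.2
  rw [hLcompl] at h2
  have hA : IsConnSet G ((↑L : Set V)ᶜ) := by
    refine ⟨⟨r, by simpa using hrL⟩, fun a ha b hb => induce_connected_reach h2 ha hb⟩
  have hB : IsConnSet G (↑R : Set V) := by
    refine ⟨⟨r, by simpa using hrR⟩, fun a ha b hb => induce_connected_reach hR.1 ha hb⟩
  exact IsConnSet.induce_connected
    (isConnSet_union_mem hA hB (by simpa using hrL) (by simpa using hrR))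

/-- If `{l, r}` is a 2-cut separating `u` from `v` in a series-parallel
graph, `L` is central containing `l` but none of `u, r, v`, and `R` is central containing
`r` but none of `u, l, v`, then `L ∖ R` and `R ∖ L` are central. -/
theorem central_sdiff_of_central
    (G : SimpleGraph V) (hsp : ¬ HasK4Minor G)
    (u v l r : V) (hul : u ≠ l) (hur : u ≠ r) (hvl : v ≠ l) (hvr : v ≠ r) (hlr : l ≠ r)
    (hsep : SepPair G l r u v)
    (L R : Finset V)
    (hL : Central G L) (hlL : l ∈ L) (huL : u ∉ L) (hrL : r ∉ L) (hvL : v ∉ L)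
    (hR : Central G R) (hrR : r ∈ R) (huR : u ∉ R) (hlR : l ∉ R) (hvR : v ∉ R) :
    Central G (L \ R) ∧ Central G (R \ L) := by
  have hsep' : SepPair G r l u v := fun p => (hsep p).symm
  constructor
  · constructor
    · exact induce_sdiff_connected G hsp u v l r hsep L R hL hlL huL hrL hvL hR hrR huR hlR hvR
    · exact induce_compl_sdiff_connected G r L R hL hR hrR hrL
  · constructor
    · exact induce_sdiff_connected G hsp u v r l hsep' R L hR hrR huR hlR hvR hL hlL huL hrL hvL
    · exact induce_compl_sdiff_connected G l R L hR hL hlL hlR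

end FlowCut
end

section
/- Let G be a 2-node-connected series-parallel graph and let u,v be distinct nodes of G. The graph G+uv obtained by adding the edge uv is series-parallel if and only if uv is already an edge of G, or {u,v} is a 2-cut of G (i.e., G−{u,v} is disconnected). -/
open scoped Classical

namespace FlowCut

variable {V : Type} [Fintype V] [DecidableEq V]

set_option linter.unusedSectionVars false
set_option maxHeartbeats 1000000

/-! ### Reachability within a set -/

def RW (G : SimpleGraph V) (s : Set V) (x y : V) : Prop :=
  ∃ p : G.Walk x y, ∀ z ∈ p.support, z ∈ s

namespace RW
variable {G : SimpleGraph V} {s t : Set V} {x y z : V}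

lemma refl (hx : x ∈ s) : RW G s x x := ⟨SimpleGraph.Walk.nil, by simp [hx]⟩

lemma symm (h : RW G s x y) : RW G s y x := by
  obtain ⟨p, hp⟩ := h; exact ⟨p.reverse, by simpa using hp⟩

lemma trans (h : RW G s x y) (h' : RW G s y z) : RW G s x z := by
  obtain ⟨p, hp⟩ := h; obtain ⟨q, hq⟩ := h'
  refine ⟨p.append q, ?_⟩
  intro w hw
  rw [SimpleGraph.Walk.mem_support_append_iff] at hw
  exact hw.elim (hp w) (hq w)

lemma mono (hst : s ⊆ t) (h : RW G s x y) : RW G t x y := by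
  obtain ⟨p, hp⟩ := h; exact ⟨p, fun z hz => hst (hp z hz)⟩

lemma mem_left (h : RW G s x y) : x ∈ s := by
  obtain ⟨p, hp⟩ := h; exact hp x p.start_mem_support

lemma mem_right (h : RW G s x y) : y ∈ s := by
  obtain ⟨p, hp⟩ := h; exact hp y p.end_mem_support

lemma mono_graph {H : SimpleGraph V} (hGH : G ≤ H) (h : RW G s x y) : RW H s x y := by
  obtain ⟨p, hp⟩ := h
  refine ⟨p.mapLe hGH, ?_⟩
  intro z hz
  simp only [SimpleGraph.Walk.mapLe, SimpleGraph.Walk.support_map] at hz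
  simpa using hp z (by simpa using hz)

lemma of_adj (h : G.Adj x y) (hx : x ∈ s) (hy : y ∈ s) : RW G s x y := by
  refine ⟨SimpleGraph.Walk.cons h SimpleGraph.Walk.nil, ?_⟩
  intro z hz; simp at hz; rcases hz with rfl | rfl <;> assumption

end RW

def ConnS (G : SimpleGraph V) (s : Set V) : Prop := ∀ x ∈ s, ∀ y ∈ s, RW G s x y

lemma connS_via {G : SimpleGraph V} {s : Set V} {c : V}
    (h : ∀ z ∈ s, RW G s z c) : ConnS G s :=
  fun a ha b hb => (h a ha).trans (h b hb).symm

lemma connS_insert_adj {G : SimpleGraph V} {s : Set V} {a b : V}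
    (hc : ConnS G s) (ha : a ∈ s) (hab : G.Adj a b) : ConnS G (insert b s) := by
  have key : ∀ x ∈ s, RW G (insert b s) x b := by
    intro x hx
    exact (RW.mono (Set.subset_insert _ _) (hc x hx a ha)).trans
      (RW.of_adj hab (Set.mem_insert_of_mem _ ha) (Set.mem_insert _ _))
  intro x hx y hy
  rcases hx with rfl | hx <;> rcases hy with rfl | hy
  · exact RW.refl (Set.mem_insert _ _)
  · exact (key y hy).symm
  · exact key x hx
  · exact RW.mono (Set.subset_insert _ _) (hc x hx y hy)

/-! ### induced subgraph connectivity vs `RW` -/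

lemma induce_reachable_of_walk {G : SimpleGraph V} {s : Set V} :
    ∀ {x y : V} (p : G.Walk x y) (hp : ∀ z ∈ p.support, z ∈ s),
      (G.induce s).Reachable ⟨x, hp x p.start_mem_support⟩ ⟨y, hp y p.end_mem_support⟩ := by
  intro x y p
  induction p with
  | nil => intro hp; rfl
  | @cons a b c h q ih =>
    intro hp
    have ha : a ∈ s := hp a (by simp)
    have hb : b ∈ s := hp b (by simp)
    have h1 : (G.induce s).Adj ⟨a, ha⟩ ⟨b, hb⟩ := by simpa using h
    exact (SimpleGraph.Adj.reachable h1).trans (ih fun z hz => hp z (by simp [hz]))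

lemma connected_induce_iff {G : SimpleGraph V} {s : Set V} :
    (G.induce s).Connected ↔ s.Nonempty ∧ ConnS G s := by
  rw [SimpleGraph.connected_iff]
  constructor
  · rintro ⟨hpre, ⟨⟨x0, hx0⟩⟩⟩
    refine ⟨⟨x0, hx0⟩, fun x hx y hy => ?_⟩
    obtain ⟨p⟩ := hpre ⟨x, hx⟩ ⟨y, hy⟩
    refine ⟨p.map (SimpleGraph.Embedding.induce s).toHom, ?_⟩
    intro z hz
    replace hz : z ∈ p.support.map (SimpleGraph.Embedding.induce (G := G) s).toHom := by
      rw [← SimpleGraph.Walk.support_map]; exact hz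
    obtain ⟨⟨w, hw⟩, _, rfl⟩ := List.mem_map.mp hz
    exact hw
  · rintro ⟨⟨x0, hx0⟩, h⟩
    refine ⟨fun a b => ?_, ⟨⟨x0, hx0⟩⟩⟩
    obtain ⟨p, hp⟩ := h a a.2 b b.2
    have := induce_reachable_of_walk (s := s) p hp
    convert this <;> simp

/-! ### basic walk lemmas -/

lemma exists_crossing_edge {G : SimpleGraph V} {S : Set V} :
    ∀ {x y : V} (p : G.Walk x y), x ∈ S → y ∉ S →
      ∃ a b, G.Adj a b ∧ a ∈ S ∧ b ∉ S ∧ a ∈ p.support ∧ b ∈ p.support := by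
  intro x y p
  induction p with
  | nil => intro hx hy; exact absurd hx hy
  | @cons a b c h q ih =>
    intro hx hy
    by_cases hb : b ∈ S
    · obtain ⟨a', b', h', ha', hb', hma, hmb⟩ := ih hb hy
      exact ⟨a', b', h', ha', hb', by simp [hma], by simp [hmb]⟩
    · exact ⟨a, b, h, hx, hb, by simp, by simp⟩

lemma exists_first_hit {G : SimpleGraph V} {S : Set V} :
    ∀ {x y : V} (p : G.Walk x y), y ∈ S →
      ∃ z, z ∈ S ∧ ∃ q : G.Walk x z, (∀ w ∈ q.support, w ∈ p.support) ∧
        (∀ w ∈ q.support, w ∈ S → w = z) := by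
  intro x y p
  induction p with
  | nil =>
    intro hy
    exact ⟨_, hy, SimpleGraph.Walk.nil, by simp, fun w hw _ => by simpa using hw⟩
  | @cons a b c h q ih =>
    intro hy
    by_cases ha : a ∈ S
    · exact ⟨a, ha, SimpleGraph.Walk.nil, by simp, fun w hw _ => by simpa using hw⟩
    · obtain ⟨z, hz, q', hq1, hq2⟩ := ih hy
      refine ⟨z, hz, SimpleGraph.Walk.cons h q', ?_, ?_⟩
      · intro w hw
        rcases (by simpa using hw : w = a ∨ w ∈ q'.support) with rfl | hw
        · simp
        · simp [hq1 w hw]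
      · intro w hw hwS
        rcases (by simpa using hw : w = a ∨ w ∈ q'.support) with rfl | hw
        · exact absurd hwS ha
        · exact hq2 w hw hwS

/-- Bridge lemma: extend a connected set along a walk until it is adjacent to `t`. -/
lemma bridge {G : SimpleGraph V} :
    ∀ {x y : V} (p : G.Walk x y) {s t : Set V}, (∀ z ∈ s, z ∉ t) → x ∈ s → y ∈ t →
      ConnS G s →
      ∃ s', ConnS G s' ∧ s ⊆ s' ∧ (∀ z ∈ s', z ∉ t) ∧
        (∀ z ∈ s', z ∈ s ∨ z ∈ p.support) ∧ ∃ a ∈ s', ∃ b ∈ t, G.Adj a b := by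
  intro x y p
  induction p with
  | nil =>
    intro s t hst hx hy _
    exact absurd hy (hst _ hx)
  | @cons a b c hadj q ih =>
    intro s t hst hx hy hc
    by_cases hb : b ∈ t
    · exact ⟨s, hc, le_refl _, hst, fun z hz => Or.inl hz, a, hx, b, hb, hadj⟩
    · have hc' : ConnS G (insert b s) := connS_insert_adj hc hx hadj
      have hst' : ∀ z ∈ insert b s, z ∉ t := by
        rintro z (rfl | hz); exacts [hb, hst z hz]
      obtain ⟨s', h1, h2, h3, h4, h5⟩ := ih hst' (Set.mem_insert _ _) hy hc'
      refine ⟨s', h1, fun z hz => h2 (Set.mem_insert_of_mem _ hz), h3, ?_, h5⟩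
      intro z hz
      rcases h4 z hz with (rfl | hz') | hz'
      · exact Or.inr (by simp)
      · exact Or.inl hz'
      · exact Or.inr (by simp [hz'])

/-! ### reachability classes -/

def cls (G : SimpleGraph V) (W : Set V) (x0 : V) : Set V := {y | RW G W x0 y}

lemma cls_subset {G : SimpleGraph V} {W : Set V} {x0 : V} : cls G W x0 ⊆ W :=
  fun _ h => RW.mem_right h

lemma mem_cls_self {G : SimpleGraph V} {W : Set V} {x0 : V} (h : x0 ∈ W) :
    x0 ∈ cls G W x0 := RW.refl h

lemma cls_closed {G : SimpleGraph V} {W : Set V} {x0 a b : V}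
    (ha : a ∈ cls G W x0) (hab : G.Adj a b) (hb : b ∈ W) : b ∈ cls G W x0 :=
  RW.trans ha (RW.of_adj hab (RW.mem_right ha) hb)

lemma rw_cls_of_mem {G : SimpleGraph V} {W : Set V} {x0 y : V} (hy : y ∈ cls G W x0) :
    RW G (cls G W x0) x0 y := by
  obtain ⟨p, hp⟩ := hy
  refine ⟨p, fun w hw => ?_⟩
  exact ⟨p.takeUntil w hw, fun z hz =>
    hp z (SimpleGraph.Walk.support_takeUntil_subset _ _ hz)⟩

lemma connS_cls {G : SimpleGraph V} {W : Set V} {x0 : V} : ConnS G (cls G W x0) := by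
  intro a ha b hb
  exact (rw_cls_of_mem ha).symm.trans (rw_cls_of_mem hb)

/-! ### the graph `G ⊔ edge u v` -/

lemma sup_edge_adj_iff {G : SimpleGraph V} {u v a b : V} :
    (G ⊔ SimpleGraph.edge u v).Adj a b ↔
      G.Adj a b ∨ ((a = u ∧ b = v) ∨ (a = v ∧ b = u)) ∧ a ≠ b := by
  simp [SimpleGraph.edge_adj]

lemma adj_of_sup_edge {G : SimpleGraph V} {u v a b : V}
    (h : (G ⊔ SimpleGraph.edge u v).Adj a b) (hbu : b ≠ u) (hbv : b ≠ v) : G.Adj a b := by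
  rcases sup_edge_adj_iff.mp h with h' | ⟨h', _⟩
  · exact h'
  · rcases h' with ⟨rfl, rfl⟩ | ⟨rfl, rfl⟩ <;> tauto

lemma rwG_of_rwH {G : SimpleGraph V} {u v : V} {s : Set V} {x y : V}
    (hs : u ∉ s ∨ v ∉ s) (h : RW (G ⊔ SimpleGraph.edge u v) s x y) : RW G s x y := by
  obtain ⟨p, hp⟩ := h
  induction p with
  | nil => exact RW.refl (hp _ (by simp))
  | @cons a b c hadj q ih =>
    have hmem : ∀ z ∈ q.support, z ∈ s := fun z hz => hp z (by simp [hz])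
    have ha : a ∈ s := hp a (by simp)
    have hb : b ∈ s := hp b (by simp)
    have hG : G.Adj a b := by
      rcases sup_edge_adj_iff.mp hadj with h' | ⟨h', _⟩
      · exact h'
      · rcases h' with ⟨rfl, rfl⟩ | ⟨rfl, rfl⟩ <;> tauto
    exact (RW.of_adj hG ha hb).trans (ih hmem)

lemma connSG_of_connSH {G : SimpleGraph V} {u v : V} {s : Set V}
    (hs : u ∉ s ∨ v ∉ s) (h : ConnS (G ⊔ SimpleGraph.edge u v) s) : ConnS G s :=
  fun a ha b hb => rwG_of_rwH hs (h a ha b hb)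

lemma side_reach {G : SimpleGraph V} {u v : V} {σ B : Set V}
    (hσc : ∀ a ∈ σ, ∀ b, G.Adj a b → b ∈ σ ∨ b = u ∨ b = v)
    (hσu : u ∉ σ) (hσv : v ∉ σ) :
    ∀ {x y : V} (p : (G ⊔ SimpleGraph.edge u v).Walk x y),
      (∀ z ∈ p.support, z ∈ B) → x ∈ σ → (y = u ∨ y = v) →
      RW G (B ∩ (σ ∪ {u, v})) x u ∨ RW G (B ∩ (σ ∪ {u, v})) x v := by
  intro x y p
  induction p with
  | nil =>
    intro _ hx hy
    rcases hy with rfl | rfl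
    · exact absurd hx hσu
    · exact absurd hx hσv
  | @cons a b c hadj q ih =>
    intro hp hx hy
    have ha : a ∈ B := hp a (by simp)
    have hbB : b ∈ B := hp b (by simp)
    have hG : G.Adj a b := by
      rcases sup_edge_adj_iff.mp hadj with h' | ⟨h', _⟩
      · exact h'
      · exfalso; rcases h' with ⟨rfl, rfl⟩ | ⟨rfl, rfl⟩ <;> [exact hσu hx; exact hσv hx]
    have haset : a ∈ B ∩ (σ ∪ {u, v}) := ⟨ha, Or.inl hx⟩
    rcases hσc a hx b hG with hbσ | rfl | rfl
    · have := ih (fun z hz => hp z (by simp [hz])) hbσ hy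
      rcases this with h1 | h1
      · exact Or.inl ((RW.of_adj hG haset ⟨hbB, Or.inl hbσ⟩).trans h1)
      · exact Or.inr ((RW.of_adj hG haset ⟨hbB, Or.inl hbσ⟩).trans h1)
    · exact Or.inl (RW.of_adj hG haset ⟨hbB, Or.inr (by simp)⟩)
    · exact Or.inr (RW.of_adj hG haset ⟨hbB, Or.inr (by simp)⟩)

/-! ### building K4 minors from sets -/

lemma buildK4 {G : SimpleGraph V} (S : Fin 4 → Set V)
    (h1 : ∀ i, (S i).Nonempty)
    (h2 : ∀ i j, i ≠ j → ∀ z, z ∈ S i → z ∉ S j)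
    (h3 : ∀ i, ConnS G (S i))
    (h4 : ∀ i j, i ≠ j → ∃ a ∈ S i, ∃ b ∈ S j, G.Adj a b) : HasK4Minor G := by
  refine ⟨fun i => (Set.toFinite (S i)).toFinset, fun i => ?_, fun i j hij => ?_, fun i => ?_,
    fun i j hij => ?_⟩
  · obtain ⟨z, hz⟩ := h1 i
    exact ⟨z, (Set.Finite.mem_toFinset _).mpr hz⟩
  · rw [Finset.disjoint_left]
    intro z hz hz'
    exact h2 i j hij z ((Set.Finite.mem_toFinset _).mp hz) ((Set.Finite.mem_toFinset _).mp hz')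
  · rw [show (((Set.toFinite (S i)).toFinset : Finset V) : Set V) = S i from
      Set.Finite.coe_toFinset _, connected_induce_iff]
    obtain ⟨z, hz⟩ := h1 i
    exact ⟨⟨z, hz⟩, h3 i⟩
  · obtain ⟨a, ha, b, hb, hab⟩ := h4 i j hij
    exact ⟨a, (Set.Finite.mem_toFinset _).mpr ha, b, (Set.Finite.mem_toFinset _).mpr hb, hab⟩

lemma fin4_exists_third (i j : Fin 4) : ∃ k : Fin 4, k ≠ i ∧ k ≠ j := by
  by_contra h
  push_neg at h
  have hsub : (Finset.univ : Finset (Fin 4)) ⊆ {i, j} := by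
    intro k _
    by_cases hk : k = i
    · simp [hk]
    · simp [h k hk]
  have hle := Finset.card_le_card hsub
  have h2 : ({i, j} : Finset (Fin 4)).card ≤ 2 := (Finset.card_insert_le _ _).trans (by simp)
  simp [Finset.card_univ] at hle
  omega

/-- `u` is adjacent to every reachability class of `G − {u,v}`, by 2-connectivity. -/
lemma exists_adj_cls {G : SimpleGraph V} {u v t0 : V}
    (hdel : (G.induce {x : V | x ≠ v}).Connected) (huv : u ≠ v)
    (ht0 : t0 ∈ {w : V | w ≠ u ∧ w ≠ v}) :
    ∃ b ∈ cls G {w : V | w ≠ u ∧ w ≠ v} t0, G.Adj u b := by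
  set W : Set V := {w : V | w ≠ u ∧ w ≠ v} with hW
  set C := cls G W t0 with hC
  have hrw : RW G {x : V | x ≠ v} u t0 := by
    obtain ⟨-, h⟩ := connected_induce_iff.mp hdel
    exact h u huv t0 ht0.2
  obtain ⟨p, hp⟩ := hrw
  have huC : u ∉ C := fun h => (cls_subset h).1 rfl
  have ht0C : t0 ∈ C := mem_cls_self ht0
  obtain ⟨a, b, hab, haS, hbS, hma, _⟩ :=
    exists_crossing_edge (S := {z | z ∉ C}) p huC (by simpa using ht0C)
  have hbC : b ∈ C := by simpa using hbS
  have hav : a ≠ v := hp a hma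
  by_cases hau : a = u
  · exact ⟨b, hbC, hau ▸ hab⟩
  · exact absurd (cls_closed hbC hab.symm ⟨hau, hav⟩) haS

lemma coreB {G : SimpleGraph V} {u v : V} (huv : u ≠ v)
    (B : Fin 4 → Finset V)
    (hne : ∀ i, (B i).Nonempty)
    (hdisj : ∀ i j, i ≠ j → Disjoint (B i) (B j))
    (hconnH : ∀ i, ConnS (G ⊔ SimpleGraph.edge u v) (↑(B i) : Set V))
    (hadj : ∀ i j, i ≠ j → ∃ a ∈ B i, ∃ b ∈ B j, (G ⊔ SimpleGraph.edge u v).Adj a b)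
    (σ D : Set V)
    (hσu : u ∉ σ) (hσv : v ∉ σ)
    (hσc : ∀ a ∈ σ, ∀ b, G.Adj a b → b ∈ σ ∨ b = u ∨ b = v)
    (hDconn : ConnS G D)
    (hDσ : ∀ z ∈ D, z ∉ σ) (hDu : u ∉ D) (hDv : v ∉ D)
    (bu : V) (hbu : bu ∈ D) (hbuadj : G.Adj u bu)
    (bv : V) (hbv : bv ∈ D) (hbvadj : G.Adj v bv)
    (i0 : Fin 4) (hi0 : u ∈ B i0)
    (hOu : ∀ j, j ≠ i0 → u ∉ B j)
    (hOv : ∀ j, j ≠ i0 → v ∉ B j)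
    (hps : ∀ i, i ≠ i0 → (↑(B i) : Set V) ⊆ σ) :
    HasK4Minor G := by
  classical
  set S : Fin 4 → Set V :=
    fun i => if i = i0 then ((↑(B i0) : Set V) ∩ (σ ∪ {u, v})) ∪ D else (↑(B i) : Set V)
    with hS
  have hSi0 : S i0 = ((↑(B i0) : Set V) ∩ (σ ∪ {u, v})) ∪ D := by simp [hS]
  have hSother : ∀ i, i ≠ i0 → S i = (↑(B i) : Set V) := by intro i hi; simp [hS, hi]
  have huS : u ∈ S i0 := by
    rw [hSi0]; exact Or.inl ⟨by simpa using hi0, Or.inr (by simp)⟩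
  have hbuS : bu ∈ S i0 := by rw [hSi0]; exact Or.inr hbu
  have hsub : ((↑(B i0) : Set V) ∩ (σ ∪ {u, v})) ⊆ S i0 := by
    rw [hSi0]; exact Set.subset_union_left
  have hDreach : ∀ z ∈ D, RW G (S i0) z u := by
    intro z hz
    have h1 : RW G (S i0) z bu := by
      refine RW.mono ?_ (hDconn z hz bu hbu)
      intro w hw; rw [hSi0]; exact Or.inr hw
    exact h1.trans (RW.of_adj hbuadj.symm hbuS huS)
  have hvreach : RW G (S i0) bv u := hDreach bv hbv
  have hreach : ∀ z ∈ S i0, RW G (S i0) z u := by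
    intro z hz
    rw [hSi0] at hz
    rcases hz with ⟨hzB, hzσ⟩ | hzD
    · rcases hzσ with hzσ | hzuv
      · obtain ⟨p, hp⟩ := hconnH i0 z hzB u (by simpa using hi0)
        have hside := side_reach hσc hσu hσv p hp hzσ (Or.inl rfl)
        rcases hside with h1 | h1
        · exact RW.mono hsub h1
        · have hvB : v ∈ ((↑(B i0) : Set V) ∩ (σ ∪ {u, v})) := RW.mem_right h1
          have h2 : RW G (S i0) v u :=
            (RW.of_adj hbvadj (hsub hvB) (by rw [hSi0]; exact Or.inr hbv)).trans hvreach
          exact (RW.mono hsub h1).trans h2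
      · rcases (by simpa using hzuv : z = u ∨ z = v) with rfl | rfl
        · exact RW.refl huS
        · exact (RW.of_adj hbvadj (hsub ⟨hzB, Or.inr (by simp)⟩)
            (by rw [hSi0]; exact Or.inr hbv)).trans hvreach
    · exact hDreach z hzD
  apply buildK4 S
  · intro i
    by_cases hi : i = i0
    · subst hi; exact ⟨u, huS⟩
    · rw [hSother i hi]
      obtain ⟨z, hz⟩ := hne i
      exact ⟨z, by simpa using hz⟩
  · intro i j hij z hzi hzj
    by_cases hi : i = i0
    · subst hi
      rw [hSi0] at hzi
      rw [hSother j (Ne.symm hij)] at hzj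
      rcases hzi with ⟨hzB, _⟩ | hzD
      · exact Finset.disjoint_left.mp (hdisj _ j hij) (by simpa using hzB) (by simpa using hzj)
      · exact hDσ z hzD (hps j (Ne.symm hij) hzj)
    · rw [hSother i hi] at hzi
      by_cases hj : j = i0
      · subst hj
        rw [hSi0] at hzj
        rcases hzj with ⟨hzB, _⟩ | hzD
        · exact Finset.disjoint_left.mp (hdisj i _ hij) (by simpa using hzi) (by simpa using hzB)
        · exact hDσ z hzD (hps i hi hzi)
      · rw [hSother j hj] at hzj
        exact Finset.disjoint_left.mp (hdisj i j hij) (by simpa using hzi) (by simpa using hzj)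
  · intro i
    by_cases hi : i = i0
    · subst hi; exact connS_via hreach
    · rw [hSother i hi]
      exact connSG_of_connSH (Or.inl (by simpa using hOu i hi)) (hconnH i)
  · intro i j hij
    by_cases hi : i = i0
    · subst hi
      obtain ⟨a, ha, b, hb, hab⟩ := hadj _ j hij
      have hG : G.Adj a b := adj_of_sup_edge hab (hOu j (Ne.symm hij) ∘ (· ▸ hb))
        (hOv j (Ne.symm hij) ∘ (· ▸ hb))
      have hbσ : b ∈ σ := hps j (Ne.symm hij) (by simpa using hb)
      have haσ : a ∈ σ ∪ {u, v} := by
        rcases hσc b hbσ a hG.symm with h' | h' | h'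
        · exact Or.inl h'
        · exact Or.inr (by simp [h'])
        · exact Or.inr (by simp [h'])
      exact ⟨a, hsub ⟨by simpa using ha, haσ⟩, b, by rw [hSother j (Ne.symm hij)]; simpa using hb,
        hG⟩
    · by_cases hj : j = i0
      · subst hj
        obtain ⟨a, ha, b, hb, hab⟩ := hadj _ i (Ne.symm hi)
        have hG : G.Adj a b := adj_of_sup_edge hab (hOu i hi ∘ (· ▸ hb))
          (hOv i hi ∘ (· ▸ hb))
        have hbσ : b ∈ σ := hps i hi (by simpa using hb)
        have haσ : a ∈ σ ∪ {u, v} := by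
          rcases hσc b hbσ a hG.symm with h' | h' | h'
          · exact Or.inl h'
          · exact Or.inr (by simp [h'])
          · exact Or.inr (by simp [h'])
        exact ⟨b, by rw [hSother i hi]; simpa using hb, a, hsub ⟨by simpa using ha, haσ⟩, hG.symm⟩
      · obtain ⟨a, ha, b, hb, hab⟩ := hadj i j hij
        have hG : G.Adj a b := adj_of_sup_edge hab (hOu j hj ∘ (· ▸ hb))
          (hOv j hj ∘ (· ▸ hb))
        exact ⟨a, by rw [hSother i hi]; simpa using ha, b, by rw [hSother j hj]; simpa using hb,
          hG⟩


lemma coreC {G : SimpleGraph V} {u v : V} (huv : u ≠ v)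
    (B : Fin 4 → Finset V)
    (hne : ∀ i, (B i).Nonempty)
    (hdisj : ∀ i j, i ≠ j → Disjoint (B i) (B j))
    (hconnH : ∀ i, ConnS (G ⊔ SimpleGraph.edge u v) (↑(B i) : Set V))
    (hadj : ∀ i j, i ≠ j → ∃ a ∈ B i, ∃ b ∈ B j, (G ⊔ SimpleGraph.edge u v).Adj a b)
    (σ D : Set V)
    (hσu : u ∉ σ) (hσv : v ∉ σ)
    (hσc : ∀ a ∈ σ, ∀ b, G.Adj a b → b ∈ σ ∨ b = u ∨ b = v)
    (hDconn : ConnS G D)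
    (hDσ : ∀ z ∈ D, z ∉ σ) (hDu : u ∉ D) (hDv : v ∉ D)
    (bu : V) (hbu : bu ∈ D) (hbuadj : G.Adj u bu)
    (bv : V) (hbv : bv ∈ D) (hbvadj : G.Adj v bv)
    (i0 j0 : Fin 4) (hij0 : i0 ≠ j0) (hi0 : u ∈ B i0) (hj0 : v ∈ B j0)
    (hOu : ∀ j, j ≠ i0 → u ∉ B j)
    (hOv : ∀ j, j ≠ j0 → v ∉ B j)
    (hps : ∀ i, i ≠ i0 → i ≠ j0 → (↑(B i) : Set V) ⊆ σ) :
    HasK4Minor G := by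
  classical
  have hv0 : v ∉ B i0 := hOv i0 hij0
  have hu0 : u ∉ B j0 := hOu j0 (Ne.symm hij0)
  set S : Fin 4 → Set V :=
    fun i => if i = i0 then ((↑(B i0) : Set V) ∩ (σ ∪ {u, v})) ∪ D
      else if i = j0 then ((↑(B j0) : Set V) ∩ (σ ∪ {u, v})) else (↑(B i) : Set V)
    with hS
  have hSi0 : S i0 = ((↑(B i0) : Set V) ∩ (σ ∪ {u, v})) ∪ D := by simp [hS]
  have hSj0 : S j0 = ((↑(B j0) : Set V) ∩ (σ ∪ {u, v})) := by
    simp [hS, Ne.symm hij0]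
  have hSother : ∀ i, i ≠ i0 → i ≠ j0 → S i = (↑(B i) : Set V) := by
    intro i hi hj; simp [hS, hi, hj]
  have huS : u ∈ S i0 := by
    rw [hSi0]; exact Or.inl ⟨by simpa using hi0, Or.inr (by simp)⟩
  have hvS : v ∈ S j0 := by
    rw [hSj0]; exact ⟨by simpa using hj0, Or.inr (by simp)⟩
  have hbuS : bu ∈ S i0 := by rw [hSi0]; exact Or.inr hbu
  have hsub : ((↑(B i0) : Set V) ∩ (σ ∪ {u, v})) ⊆ S i0 := by
    rw [hSi0]; exact Set.subset_union_left
  have hDreach : ∀ z ∈ D, RW G (S i0) z u := by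
    intro z hz
    have h1 : RW G (S i0) z bu := by
      refine RW.mono ?_ (hDconn z hz bu hbu)
      intro w hw; rw [hSi0]; exact Or.inr hw
    exact h1.trans (RW.of_adj hbuadj.symm hbuS huS)
  have hreach : ∀ z ∈ S i0, RW G (S i0) z u := by
    intro z hz
    rw [hSi0] at hz
    rcases hz with ⟨hzB, hzσ⟩ | hzD
    · rcases hzσ with hzσ | hzuv
      · obtain ⟨p, hp⟩ := hconnH i0 z hzB u (by simpa using hi0)
        rcases side_reach hσc hσu hσv p hp hzσ (Or.inl rfl) with h1 | h1
        · exact RW.mono hsub h1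
        · exact absurd (by simpa using ((RW.mem_right h1).1 : v ∈ (↑(B i0) : Set V))) hv0
      · rcases (by simpa using hzuv : z = u ∨ z = v) with rfl | rfl
        · exact RW.refl huS
        · exact absurd (by simpa using hzB) hv0
    · exact hDreach z hzD
  have hreachv : ∀ z ∈ S j0, RW G (S j0) z v := by
    intro z hz
    rw [hSj0] at hz
    obtain ⟨hzB, hzσ⟩ := hz
    rcases hzσ with hzσ | hzuv
    · obtain ⟨p, hp⟩ := hconnH j0 z hzB v (by simpa using hj0)
      rcases side_reach hσc hσu hσv p hp hzσ (Or.inr rfl) with h1 | h1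
      · exact absurd (by simpa using ((RW.mem_right h1).1 : u ∈ (↑(B j0) : Set V))) hu0
      · rw [hSj0]; exact h1
    · rcases (by simpa using hzuv : z = u ∨ z = v) with rfl | rfl
      · exact absurd (by simpa using hzB) hu0
      · exact RW.refl hvS
  apply buildK4 S
  · intro i
    by_cases hi : i = i0
    · subst hi; exact ⟨u, huS⟩
    · by_cases hj : i = j0
      · subst hj; exact ⟨v, hvS⟩
      · rw [hSother i hi hj]
        obtain ⟨z, hz⟩ := hne i
        exact ⟨z, by simpa using hz⟩
  · intro i j hij z hzi hzj
    have key : ∀ a b : Fin 4, a ≠ b → z ∈ S a → z ∈ S b → False := by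
      intro a b hab hza hzb
      by_cases ha : a = i0
      · subst ha
        rw [hSi0] at hza
        rcases hza with ⟨hzB, hzσ⟩ | hzD
        · by_cases hb : b = j0
          · subst hb; rw [hSj0] at hzb
            exact Finset.disjoint_left.mp (hdisj _ _ hab) (by simpa using hzB)
              (by simpa using hzb.1)
          · rw [hSother b (Ne.symm hab) hb] at hzb
            exact Finset.disjoint_left.mp (hdisj _ b hab) (by simpa using hzB)
              (by simpa using hzb)
        · by_cases hb : b = j0
          · subst hb; rw [hSj0] at hzb
            rcases hzb.2 with h' | h'
            · exact hDσ z hzD h'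
            · rcases (by simpa using h' : z = u ∨ z = v) with rfl | rfl
              · exact hDu hzD
              · exact hDv hzD
          · rw [hSother b (Ne.symm hab) hb] at hzb
            exact hDσ z hzD (hps b (Ne.symm hab) hb hzb)
      · by_cases ha' : a = j0
        · rw [ha', hSj0] at hza
          by_cases hb : b = i0
          · rw [hb, hSi0] at hzb
            rcases hzb with ⟨hzB, _⟩ | hzD
            · exact Finset.disjoint_left.mp (hdisj j0 i0 (Ne.symm hij0)) (by simpa using hza.1)
                (by simpa using hzB)
            · rcases hza.2 with h' | h'
              · exact hDσ z hzD h'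
              · rcases (by simpa using h' : z = u ∨ z = v) with rfl | rfl
                · exact hDu hzD
                · exact hDv hzD
          · by_cases hb' : b = j0
            · exact absurd (ha'.trans hb'.symm) hab
            · rw [hSother b hb hb'] at hzb
              exact Finset.disjoint_left.mp (hdisj j0 b (fun h => hb' (h ▸ rfl)))
                (by simpa using hza.1) (by simpa using hzb)
        · rw [hSother a ha ha'] at hza
          by_cases hb : b = i0
          · subst hb
            rw [hSi0] at hzb
            rcases hzb with ⟨hzB, _⟩ | hzD
            · exact Finset.disjoint_left.mp (hdisj a _ hab) (by simpa using hza)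
                (by simpa using hzB)
            · exact hDσ z hzD (hps a ha ha' hza)
          · by_cases hb' : b = j0
            · subst hb'
              rw [hSj0] at hzb
              exact Finset.disjoint_left.mp (hdisj a _ hab) (by simpa using hza)
                (by simpa using hzb.1)
            · rw [hSother b hb hb'] at hzb
              exact Finset.disjoint_left.mp (hdisj a b hab) (by simpa using hza)
                (by simpa using hzb)
    exact key i j hij hzi hzj
  · intro i
    by_cases hi : i = i0
    · subst hi; exact connS_via hreach
    · by_cases hj : i = j0
      · subst hj; exact connS_via hreachv
      · rw [hSother i hi hj]
        exact connSG_of_connSH (Or.inl (by simpa using hOu i hi)) (hconnH i)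
  · intro i j hij
    have wit : ∀ (k j' : Fin 4), j' ≠ i0 → j' ≠ j0 → k ≠ j' →
        ∃ a b, a ∈ B k ∧ b ∈ B j' ∧ G.Adj a b ∧ a ∈ (↑(B k) : Set V) ∩ (σ ∪ {u, v}) := by
      intro k j' hj'i hj'j hkj
      obtain ⟨a, ha, b, hb, hab⟩ := hadj k j' hkj
      have hG : G.Adj a b := adj_of_sup_edge hab (hOu j' hj'i ∘ (· ▸ hb))
        (hOv j' hj'j ∘ (· ▸ hb))
      have hbσ : b ∈ σ := hps j' hj'i hj'j (by simpa using hb)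
      have haσ : a ∈ σ ∪ {u, v} := by
        rcases hσc b hbσ a hG.symm with h' | h' | h'
        · exact Or.inl h'
        · exact Or.inr (by simp [h'])
        · exact Or.inr (by simp [h'])
      exact ⟨a, b, ha, hb, hG, ⟨by simpa using ha, haσ⟩⟩
    by_cases hi : i = i0
    · subst hi
      by_cases hj : j = j0
      · subst hj
        exact ⟨bv, by rw [hSi0]; exact Or.inr hbv, v, hvS, hbvadj.symm⟩
      · obtain ⟨a, b, _, hb, hG, haS⟩ := wit _ j (Ne.symm hij) hj hij
        exact ⟨a, hsub haS, b, by rw [hSother j (Ne.symm hij) hj]; simpa using hb, hG⟩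
    · by_cases hi' : i = j0
      · subst hi'
        by_cases hj : j = i0
        · subst hj
          exact ⟨v, hvS, bv, by rw [hSi0]; exact Or.inr hbv, hbvadj⟩
        · obtain ⟨a, b, _, hb, hG, haS⟩ := wit _ j hj (Ne.symm hij) hij
          exact ⟨a, by rw [hSj0]; exact haS, b,
            by rw [hSother j hj (Ne.symm hij)]; simpa using hb, hG⟩
      · by_cases hj : j = i0
        · subst hj
          obtain ⟨a, b, _, hb, hG, haS⟩ := wit _ i hi hi' (Ne.symm hij)
          exact ⟨b, by rw [hSother i hi hi']; simpa using hb, a, hsub haS, hG.symm⟩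
        · by_cases hj' : j = j0
          · subst hj'
            obtain ⟨a, b, _, hb, hG, haS⟩ := wit _ i hi hi' (Ne.symm hij)
            exact ⟨b, by rw [hSother i hi hi']; simpa using hb, a, by rw [hSj0]; exact haS,
              hG.symm⟩
          · obtain ⟨a, ha, b, hb, hab⟩ := hadj i j hij
            have hG : G.Adj a b := adj_of_sup_edge hab (hOu j hj ∘ (· ▸ hb))
              (hOv j hj' ∘ (· ▸ hb))
            exact ⟨a, by rw [hSother i hi hi']; simpa using ha, b,
              by rw [hSother j hj hj']; simpa using hb, hG⟩


lemma noK4_aux {G : SimpleGraph V} {u v : V} (huv : u ≠ v) (h2 : TwoConnected G)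
    (hdis : ¬ (G.induce {w : V | w ≠ u ∧ w ≠ v}).Connected)
    (B : Fin 4 → Finset V)
    (hne : ∀ i, (B i).Nonempty)
    (hdisj : ∀ i j, i ≠ j → Disjoint (B i) (B j))
    (hconnH : ∀ i, ConnS (G ⊔ SimpleGraph.edge u v) (↑(B i) : Set V))
    (hadj : ∀ i j, i ≠ j → ∃ a ∈ B i, ∃ b ∈ B j, (G ⊔ SimpleGraph.edge u v).Adj a b)
    (hvu : (∃ i, v ∈ B i) → ∃ i, u ∈ B i) :
    HasK4Minor G := by
  classical
  set W : Set V := {w : V | w ≠ u ∧ w ≠ v} with hWdef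
  have hWne : ∃ w, w ∈ W := by
    by_contra h
    push_neg at h
    have hsub : (Finset.univ : Finset V) ⊆ {u, v} := by
      intro w _
      by_cases hwu : w = u
      · simp [hwu]
      · by_cases hwv : w = v
        · simp [hwv]
        · exact absurd ⟨hwu, hwv⟩ (h w)
    have hle := Finset.card_le_card hsub
    have hc2 : ({u, v} : Finset V).card ≤ 2 := (Finset.card_insert_le _ _).trans (by simp)
    rw [Finset.card_univ] at hle
    have := h2.1
    omega
  obtain ⟨w0, hw0⟩ := hWne
  have hnc : ¬ ConnS G W := fun h => hdis (connected_induce_iff.mpr ⟨⟨w0, hw0⟩, h⟩)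
  rw [ConnS] at hnc
  push_neg at hnc
  obtain ⟨x, hx, y, hy, hxy⟩ := hnc
  set C := cls G W x with hCdef
  have hyC : y ∉ C := hxy
  have hxC : x ∈ C := mem_cls_self hx
  have huW : u ∉ W := fun h => h.1 rfl
  have hvW : v ∉ W := fun h => h.2 rfl
  have hadjcls : ∀ t0, t0 ∈ W →
      (∃ b ∈ cls G W t0, G.Adj u b) ∧ (∃ b ∈ cls G W t0, G.Adj v b) := by
    intro t0 ht0
    constructor
    · exact exists_adj_cls (h2.2.2 v) huv ht0
    · have hWs : {w : V | w ≠ v ∧ w ≠ u} = W := by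
        rw [hWdef]; ext z; exact and_comm
      obtain ⟨b, hb, hba⟩ :=
        exists_adj_cls (u := v) (v := u) (h2.2.2 u) huv.symm
          (show t0 ∈ {w : V | w ≠ v ∧ w ≠ u} from ⟨ht0.2, ht0.1⟩)
      rw [hWs] at hb
      exact ⟨b, hb, hba⟩
  have hCc : ∀ a ∈ C, ∀ b, G.Adj a b → b ∈ C ∨ b = u ∨ b = v := by
    intro a ha b hab
    by_cases hbu : b = u
    · exact Or.inr (Or.inl hbu)
    by_cases hbv : b = v
    · exact Or.inr (Or.inr hbv)
    exact Or.inl (cls_closed ha hab ⟨hbu, hbv⟩)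
  have hCcc : ∀ a ∈ W \ C, ∀ b, G.Adj a b → b ∈ W \ C ∨ b = u ∨ b = v := by
    rintro a ⟨haW, haC⟩ b hab
    by_cases hbu : b = u
    · exact Or.inr (Or.inl hbu)
    by_cases hbv : b = v
    · exact Or.inr (Or.inr hbv)
    exact Or.inl ⟨⟨hbu, hbv⟩, fun hbC => haC (cls_closed hbC hab.symm haW)⟩
  have pureW : ∀ i, u ∉ B i → v ∉ B i → (↑(B i) : Set V) ⊆ W := by
    intro i hui hvi z hz
    exact ⟨fun h => hui (by simpa [h] using hz), fun h => hvi (by simpa [h] using hz)⟩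
  have pureG : ∀ i, u ∉ B i → ConnS G (↑(B i) : Set V) := fun i hui =>
    connSG_of_connSH (Or.inl (by simpa using hui)) (hconnH i)
  have hsubC : ∀ i, u ∉ B i → v ∉ B i → (∃ z ∈ B i, z ∈ C) → (↑(B i) : Set V) ⊆ C := by
    rintro i hui hvi ⟨z, hzB, hzC⟩ z' hz'
    have h1 : RW G (↑(B i) : Set V) z z' := pureG i hui z (by simpa using hzB) z' hz'
    exact hzC.trans (RW.mono (pureW i hui hvi) h1)
  have hside : ∀ i j, i ≠ j → u ∉ B i → v ∉ B i → u ∉ B j → v ∉ B j →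
      (∃ z ∈ B i, z ∈ C) → ∃ z ∈ B j, z ∈ C := by
    intro i j hij hui hvi huj hvj hCi
    obtain ⟨a, ha, b, hb, hab⟩ := hadj i j hij
    have hG : G.Adj a b := adj_of_sup_edge hab (huj ∘ (· ▸ hb)) (hvj ∘ (· ▸ hb))
    have haC : a ∈ C := hsubC i hui hvi hCi (by simpa using ha)
    exact ⟨b, hb, cls_closed haC hG (pureW j huj hvj (by simpa using hb))⟩
  have master : ∀ p0 : Fin 4, u ∉ B p0 → v ∉ B p0 →
      ∃ σ D : Set V, ∃ bu bv : V,
        u ∉ σ ∧ v ∉ σ ∧ (∀ a ∈ σ, ∀ b, G.Adj a b → b ∈ σ ∨ b = u ∨ b = v) ∧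
        ConnS G D ∧ (∀ z ∈ D, z ∉ σ) ∧ u ∉ D ∧ v ∉ D ∧
        bu ∈ D ∧ G.Adj u bu ∧ bv ∈ D ∧ G.Adj v bv ∧
        (∀ i, u ∉ B i → v ∉ B i → (↑(B i) : Set V) ⊆ σ) := by
    intro p0 hup0 hvp0
    by_cases hC0 : ∃ z ∈ B p0, z ∈ C
    · obtain ⟨buu, hbu1, hbu2⟩ := (hadjcls y hy).1
      obtain ⟨bvv, hbv1, hbv2⟩ := (hadjcls y hy).2
      refine ⟨C, cls G W y, buu, bvv, fun h => (cls_subset h).1 rfl,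
        fun h => (cls_subset h).2 rfl, hCc, connS_cls, ?_,
        fun h => (cls_subset h).1 rfl, fun h => (cls_subset h).2 rfl,
        hbu1, hbu2, hbv1, hbv2, ?_⟩
      · intro z hz hzC
        exact hxy (hzC.trans hz.symm)
      · intro i hui hvi
        by_cases hip : i = p0
        · exact hip ▸ hsubC p0 hup0 hvp0 hC0
        · exact hsubC i hui hvi (hside p0 i (Ne.symm hip) hup0 hvp0 hui hvi hC0)
    · obtain ⟨buu, hbu1, hbu2⟩ := (hadjcls x hx).1
      obtain ⟨bvv, hbv1, hbv2⟩ := (hadjcls x hx).2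
      refine ⟨W \ C, C, buu, bvv, fun h => h.1.1 rfl, fun h => h.1.2 rfl, hCcc,
        connS_cls, fun z hz h => h.2 hz,
        fun h => (cls_subset h).1 rfl, fun h => (cls_subset h).2 rfl,
        hbu1, hbu2, hbv1, hbv2, ?_⟩
      intro i hui hvi z hz
      refine ⟨pureW i hui hvi hz, fun hzC => ?_⟩
      have hCi : ∃ z' ∈ B i, z' ∈ C := ⟨z, by simpa using hz, hzC⟩
      by_cases hip : i = p0
      · exact hC0 (hip ▸ hCi)
      · exact hC0 (hside i p0 hip hui hvi hup0 hvp0 hCi)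
  by_cases hu : ∃ i, u ∈ B i
  · obtain ⟨i0, hi0⟩ := hu
    have hOu : ∀ j, j ≠ i0 → u ∉ B j := fun j hj hmem =>
      Finset.disjoint_left.mp (hdisj j i0 hj) hmem hi0
    by_cases hv : ∃ j, v ∈ B j
    · obtain ⟨j0, hj0⟩ := hv
      have hOv : ∀ j, j ≠ j0 → v ∉ B j := fun j hj hmem =>
        Finset.disjoint_left.mp (hdisj j j0 hj) hmem hj0
      by_cases hij : i0 = j0
      · subst hij
        obtain ⟨p0, hp0⟩ := exists_ne i0
        obtain ⟨σ, D, bu, bv, c1, c2, c3, c4, c5, c6, c7, c8, c9, c10, c11, c12⟩ :=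
          master p0 (hOu p0 hp0) (hOv p0 hp0)
        exact coreB huv B hne hdisj hconnH hadj σ D c1 c2 c3 c4 c5 c6 c7 bu c8 c9 bv c10 c11
          i0 hi0 hOu hOv (fun i hi => c12 i (hOu i hi) (hOv i hi))
      · obtain ⟨p0, hp1, hp2⟩ := fin4_exists_third i0 j0
        obtain ⟨σ, D, bu, bv, c1, c2, c3, c4, c5, c6, c7, c8, c9, c10, c11, c12⟩ :=
          master p0 (hOu p0 hp1) (hOv p0 hp2)
        exact coreC huv B hne hdisj hconnH hadj σ D c1 c2 c3 c4 c5 c6 c7 bu c8 c9 bv c10 c11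
          i0 j0 hij hi0 hj0 hOu hOv (fun i hi hj => c12 i (hOu i hi) (hOv i hj))
    · push_neg at hv
      obtain ⟨p0, hp0⟩ := exists_ne i0
      obtain ⟨σ, D, bu, bv, c1, c2, c3, c4, c5, c6, c7, c8, c9, c10, c11, c12⟩ :=
        master p0 (hOu p0 hp0) (hv p0)
      exact coreB huv B hne hdisj hconnH hadj σ D c1 c2 c3 c4 c5 c6 c7 bu c8 c9 bv c10 c11
        i0 hi0 hOu (fun j _ => hv j) (fun i hi => c12 i (hOu i hi) (hv i))
  · have hv : ¬ ∃ j, v ∈ B j := fun h => hu (hvu h)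
    push_neg at hu
    push_neg at hv
    apply buildK4 (fun i => (↑(B i) : Set V))
    · intro i; obtain ⟨z, hz⟩ := hne i; exact ⟨z, by simpa using hz⟩
    · intro i j hij z hzi hzj
      exact Finset.disjoint_left.mp (hdisj i j hij) (by simpa using hzi) (by simpa using hzj)
    · intro i
      exact connSG_of_connSH (Or.inl (by simpa using hu i)) (hconnH i)
    · intro i j hij
      obtain ⟨a, ha, b, hb, hab⟩ := hadj i j hij
      exact ⟨a, by simpa using ha, b, by simpa using hb,
        adj_of_sup_edge hab (hu j ∘ (· ▸ hb)) (hv j ∘ (· ▸ hb))⟩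


/-! ### direction C: Whitney's two-path theorem -/

lemma not_end_mem_takeUntil {G : SimpleGraph V} {u w x : V} {p : G.Walk u w} (hp : p.IsPath)
    (hx : x ∈ p.support) (hxw : x ≠ w) : w ∉ (p.takeUntil x hx).support := by
  intro hmem
  have hnodup := hp.support_nodup
  rw [← SimpleGraph.Walk.take_spec p hx, SimpleGraph.Walk.support_append] at hnodup
  have hw2 : w ∈ (p.dropUntil x hx).support.tail := by
    have hcons := SimpleGraph.Walk.support_eq_cons (p.dropUntil x hx)
    have hwend : w ∈ (p.dropUntil x hx).support := SimpleGraph.Walk.end_mem_support _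
    rw [hcons] at hwend
    rcases List.mem_cons.mp hwend with h' | h'
    · exact absurd h'.symm hxw
    · exact h'
  exact (List.disjoint_of_nodup_append hnodup) hmem hw2

lemma helperA {G : SimpleGraph V} {u v w : V}
    (h : G.Adj w v)
    (P1 P2 : G.Walk u w) (hp1 : P1.IsPath)
    (hd : ∀ z ∈ P1.support, z ∈ P2.support → z = u ∨ z = w)
    (hv1 : v ∈ P1.support) :
    ∃ p q : G.Walk u v, p.IsPath ∧ q.IsPath ∧
      ∀ z ∈ p.support, z ∈ q.support → z = u ∨ z = v := by
  have hwv : w ≠ v := h.ne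
  refine ⟨(P1.takeUntil v hv1).bypass, (P2.concat h).bypass,
    SimpleGraph.Walk.bypass_isPath _, SimpleGraph.Walk.bypass_isPath _, ?_⟩
  intro z hzp hzq
  have hzp' := SimpleGraph.Walk.support_bypass_subset _ hzp
  have hzq' := SimpleGraph.Walk.support_bypass_subset _ hzq
  rw [SimpleGraph.Walk.support_concat] at hzq'
  rcases List.mem_append.mp hzq' with hzq2 | hzq2
  · have hz1 : z ∈ P1.support := SimpleGraph.Walk.support_takeUntil_subset _ _ hzp'
    rcases hd z hz1 hzq2 with rfl | rfl
    · exact Or.inl rfl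
    · exact absurd hzp' (not_end_mem_takeUntil hp1 hv1 (Ne.symm hwv))
  · exact Or.inr (List.mem_singleton.mp hzq2)

lemma helperB {G : SimpleGraph V} {u v w xx : V}
    (h : G.Adj w v)
    (P1 P2 : G.Walk u w) (hp1 : P1.IsPath)
    (hd : ∀ z ∈ P1.support, z ∈ P2.support → z = u ∨ z = w)
    (hxx1 : xx ∈ P1.support)
    (Q1 : G.Walk v xx)
    (hQw : w ∉ Q1.support)
    (hQfirst : ∀ z ∈ Q1.support, (z ∈ P1.support ∨ z ∈ P2.support) → z = xx) :
    ∃ p q : G.Walk u v, p.IsPath ∧ q.IsPath ∧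
      ∀ z ∈ p.support, z ∈ q.support → z = u ∨ z = v := by
  have hxxw : xx ≠ w := fun hh => hQw (hh ▸ Q1.end_mem_support)
  refine ⟨((P1.takeUntil xx hxx1).append Q1.reverse).bypass, (P2.concat h).bypass,
    SimpleGraph.Walk.bypass_isPath _, SimpleGraph.Walk.bypass_isPath _, ?_⟩
  intro z hzp hzq
  have hzp' := SimpleGraph.Walk.support_bypass_subset _ hzp
  have hzq' := SimpleGraph.Walk.support_bypass_subset _ hzq
  rw [SimpleGraph.Walk.support_concat] at hzq'
  rcases List.mem_append.mp hzq' with hzq2 | hzq2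
  · rw [SimpleGraph.Walk.mem_support_append_iff] at hzp'
    rcases hzp' with hzp1 | hzpQ
    · have hz1 : z ∈ P1.support := SimpleGraph.Walk.support_takeUntil_subset _ _ hzp1
      rcases hd z hz1 hzq2 with rfl | rfl
      · exact Or.inl rfl
      · exact absurd hzp1 (not_end_mem_takeUntil hp1 hxx1 hxxw)
    · have hzQ : z ∈ Q1.support := by
        rw [SimpleGraph.Walk.support_reverse] at hzpQ
        exact List.mem_reverse.mp hzpQ
      have hzxx : z = xx := hQfirst z hzQ (Or.inr hzq2)
      subst hzxx
      rcases hd z hxx1 hzq2 with rfl | rfl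
      · exact Or.inl rfl
      · exact absurd rfl hxxw
  · exact Or.inr (List.mem_singleton.mp hzq2)

lemma two_paths {G : SimpleGraph V} (h2 : TwoConnected G) :
    ∀ n : ℕ, ∀ u v : V, u ≠ v → G.dist u v = n →
      ∃ p q : G.Walk u v, p.IsPath ∧ q.IsPath ∧
        ∀ z ∈ p.support, z ∈ q.support → z = u ∨ z = v := by
  intro n
  induction n using Nat.strong_induction_on with
  | _ n ihn =>
  intro u v huv hdist
  have hconn := h2.2.1
  rcases Nat.lt_or_ge n 2 with hn2 | hn2
  · have hpos : 0 < n := hdist ▸ hconn.pos_dist_of_ne huv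
    have hn1 : n = 1 := by omega
    subst hn1
    obtain ⟨sw, hsw⟩ := hconn.exists_walk_length_eq_dist u v
    rw [hdist] at hsw
    have hadj : G.Adj u v := sw.adj_of_length_eq_one hsw
    refine ⟨SimpleGraph.Walk.cons hadj SimpleGraph.Walk.nil,
      SimpleGraph.Walk.cons hadj SimpleGraph.Walk.nil, by simp [hadj.ne], by simp [hadj.ne], ?_⟩
    intro z hz _
    simpa using hz
  · obtain ⟨sw, hsw⟩ := hconn.exists_walk_length_eq_dist u v
    rw [hdist] at hsw
    obtain ⟨w, hvw, r, hr⟩ := SimpleGraph.Walk.exists_eq_cons_of_ne (Ne.symm huv) sw.reverse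
    have hlenr : r.length + 1 = n := by
      have hlen : sw.reverse.length = n := by rw [SimpleGraph.Walk.length_reverse, hsw]
      rw [hr] at hlen
      simpa [SimpleGraph.Walk.length_cons] using hlen
    have hdw1 : G.dist u w ≤ r.length := by
      have := SimpleGraph.dist_le r.reverse
      simpa [SimpleGraph.Walk.length_reverse] using this
    have hdw2 : n ≤ G.dist u w + 1 := by
      have ht := hconn.dist_triangle (u := u) (v := w) (w := v)
      have hwv1 : G.dist w v ≤ 1 := by
        have := SimpleGraph.dist_le (SimpleGraph.Walk.cons hvw.symm SimpleGraph.Walk.nil)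
        simpa using this
      omega
    have hduw : G.dist u w = r.length := by omega
    have hwu : w ≠ u := by
      intro hh
      subst hh
      rw [SimpleGraph.dist_self] at hduw
      omega
    obtain ⟨P1, P2, hp1, hp2, hd⟩ := ihn r.length (by omega) u w
      (fun hh => hwu hh.symm) hduw
    have hQex : RW G {x : V | x ≠ w} v u := by
      obtain ⟨-, hcs⟩ := connected_induce_iff.mp (h2.2.2 w)
      exact hcs v hvw.ne u (fun hh => hwu hh.symm)
    obtain ⟨Q0, hQ0⟩ := hQex
    obtain ⟨xx, hxxS, Q1, hQ1sub, hQ1first⟩ :=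
      exists_first_hit (S := {z | z ∈ P1.support ∨ z ∈ P2.support}) Q0
        (Or.inl P1.start_mem_support)
    have hQ1w : w ∉ Q1.support := fun hh => (hQ0 w (hQ1sub w hh)) rfl
    by_cases hv1 : v ∈ P1.support
    · exact helperA hvw.symm P1 P2 hp1 hd hv1
    · by_cases hv2 : v ∈ P2.support
      · exact helperA hvw.symm P2 P1 hp2 (fun z hz1 hz2 => (hd z hz2 hz1)) hv2
      · rcases hxxS with hxx1 | hxx2
        · exact helperB hvw.symm P1 P2 hp1 hd hxx1 Q1 hQ1w
            (fun z hz hS => hQ1first z hz hS)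
        · exact helperB hvw.symm P2 P1 hp2 (fun z hz1 hz2 => (hd z hz2 hz1)) hxx2 Q1 hQ1w
            (fun z hz hS => hQ1first z hz hS.symm)


/-! ### interiors of paths -/

lemma connS_dropEnd {G : SimpleGraph V} :
    ∀ {x yv : V} (q : G.Walk x yv), q.IsPath → ConnS G {z | z ∈ q.support ∧ z ≠ yv} := by
  intro x yv q
  induction q with
  | nil =>
    intro _ z hz
    exact absurd (by simpa using hz.1) hz.2
  | @cons a b c h q ih =>
    intro hp
    have hq := ((SimpleGraph.Walk.cons_isPath_iff _ _).mp hp).1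
    have hans := ((SimpleGraph.Walk.cons_isPath_iff _ _).mp hp).2
    by_cases hb : b = c
    · subst hb
      have hnil : q = SimpleGraph.Walk.nil := SimpleGraph.Walk.isPath_iff_eq_nil.mp hq
      subst hnil
      have hset : {z | z ∈ (SimpleGraph.Walk.cons h SimpleGraph.Walk.nil).support ∧ z ≠ b}
          = {a} := by
        ext z
        simp only [SimpleGraph.Walk.support_cons, SimpleGraph.Walk.support_nil,
          List.mem_cons, List.mem_singleton, Set.mem_setOf_eq, Set.mem_singleton_iff]
        constructor
        · rintro ⟨rfl | (rfl | h'), hne⟩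
          · rfl
          · exact absurd rfl hne
          · exact absurd h' List.not_mem_nil
        · rintro rfl
          exact ⟨Or.inl rfl, h.ne⟩
      rw [hset]
      rintro z1 rfl z2 rfl
      exact RW.refl rfl
    · have hbset : b ∈ {z | z ∈ q.support ∧ z ≠ c} := ⟨q.start_mem_support, hb⟩
      have hins := connS_insert_adj (ih hq) hbset h.symm
      have hane : a ≠ c := fun hh => hans (hh ▸ q.end_mem_support)
      have hset : {z | z ∈ (SimpleGraph.Walk.cons h q).support ∧ z ≠ c}
          = insert a {z | z ∈ q.support ∧ z ≠ c} := by
        ext z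
        simp only [SimpleGraph.Walk.support_cons, List.mem_cons, Set.mem_setOf_eq,
          Set.mem_insert_iff]
        constructor
        · rintro ⟨rfl | hz, hne⟩
          · exact Or.inl rfl
          · exact Or.inr ⟨hz, hne⟩
        · rintro (rfl | ⟨hz, hne⟩)
          · exact ⟨Or.inl rfl, hane⟩
          · exact ⟨Or.inr hz, hne⟩
      rw [hset]
      exact hins

lemma second_vertex {G : SimpleGraph V} {u v : V} (hnadj : ¬ G.Adj u v) :
    ∀ (p : G.Walk u v), u ≠ v → ∃ a, G.Adj u a ∧ a ∈ p.support ∧ a ≠ u ∧ a ≠ v := by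
  intro p huv
  cases p with
  | nil => exact absurd rfl huv
  | @cons _ b _ h q =>
    exact ⟨b, h, by simp, h.ne', fun hh => hnadj (hh ▸ h)⟩

lemma interior_connS {G : SimpleGraph V} {u v : V} :
    ∀ (p : G.Walk u v), u ≠ v → p.IsPath →
      ConnS G {z | z ∈ p.support ∧ z ≠ u ∧ z ≠ v} := by
  intro p huv hp
  cases p with
  | nil => exact absurd rfl huv
  | @cons _ b _ h q =>
    have hq := ((SimpleGraph.Walk.cons_isPath_iff _ _).mp hp).1
    have hans := ((SimpleGraph.Walk.cons_isPath_iff _ _).mp hp).2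
    have hset : {z | z ∈ (SimpleGraph.Walk.cons h q).support ∧ z ≠ u ∧ z ≠ v}
        = {z | z ∈ q.support ∧ z ≠ v} := by
      ext z
      simp only [SimpleGraph.Walk.support_cons, List.mem_cons, Set.mem_setOf_eq]
      constructor
      · rintro ⟨rfl | hz, hzu, hzv⟩
        · exact absurd rfl hzu
        · exact ⟨hz, hzv⟩
      · rintro ⟨hz, hzv⟩
        exact ⟨Or.inr hz, fun hh => hans (hh ▸ hz), hzv⟩
    rw [hset]
    exact connS_dropEnd q hq

/-! ### direction C assembly -/

lemma k4_of_noncut {G : SimpleGraph V} (u v : V) (huv : u ≠ v) (hnadj : ¬ G.Adj u v)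
    (h2 : TwoConnected G) (hW : (G.induce {w : V | w ≠ u ∧ w ≠ v}).Connected) :
    HasK4Minor (G ⊔ SimpleGraph.edge u v) := by
  classical
  set W : Set V := {w : V | w ≠ u ∧ w ≠ v} with hWdef
  obtain ⟨p, q, hp, hq, hd⟩ := two_paths h2 (G.dist u v) u v huv rfl
  set I1 : Set V := {z | z ∈ p.support ∧ z ≠ u ∧ z ≠ v} with hI1def
  set I2 : Set V := {z | z ∈ q.support ∧ z ≠ u ∧ z ≠ v} with hI2def
  have hI1W : I1 ⊆ W := fun z hz => ⟨hz.2.1, hz.2.2⟩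
  have hI2W : I2 ⊆ W := fun z hz => ⟨hz.2.1, hz.2.2⟩
  have hI12 : ∀ z ∈ I1, z ∉ I2 := by
    rintro z ⟨hz1, hzu, hzv⟩ ⟨hz2, _, _⟩
    rcases hd z hz1 hz2 with rfl | rfl
    · exact hzu rfl
    · exact hzv rfl
  obtain ⟨a1, ha1adj, ha1mem, ha1u, ha1v⟩ := second_vertex hnadj p huv
  obtain ⟨a2, ha2adj, ha2mem, ha2u, ha2v⟩ := second_vertex hnadj q huv
  have hnadj' : ¬ G.Adj v u := fun h => hnadj h.symm
  obtain ⟨b1, hb1adj, hb1mem, hb1v, hb1u⟩ := second_vertex hnadj' p.reverse huv.symm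
  obtain ⟨b2, hb2adj, hb2mem, hb2v, hb2u⟩ := second_vertex hnadj' q.reverse huv.symm
  rw [SimpleGraph.Walk.support_reverse, List.mem_reverse] at hb1mem hb2mem
  have ha1I : a1 ∈ I1 := ⟨ha1mem, ha1u, ha1v⟩
  have ha2I : a2 ∈ I2 := ⟨ha2mem, ha2u, ha2v⟩
  have hb1I : b1 ∈ I1 := ⟨hb1mem, hb1u, hb1v⟩
  have hb2I : b2 ∈ I2 := ⟨hb2mem, hb2u, hb2v⟩
  have hWconn : ConnS G W := (connected_induce_iff.mp hW).2
  have hI1conn : ConnS G I1 := interior_connS p huv hp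
  have hI2conn : ConnS G I2 := interior_connS q huv hq
  obtain ⟨p0, hp0⟩ := hWconn a1 (hI1W ha1I) a2 (hI2W ha2I)
  obtain ⟨s', hs'conn, hs'sub, hs'I2, hs'W, a, haS, b, hbI2, hab⟩ :=
    bridge p0 hI12 ha1I ha2I hI1conn
  have hs'W' : s' ⊆ W := by
    intro z hz
    rcases hs'W z hz with hz' | hz'
    · exact hI1W hz'
    · exact hp0 z hz'
  set H := G ⊔ SimpleGraph.edge u v with hHdef
  have hGH : G ≤ H := le_sup_left
  have hHuv : H.Adj u v := by
    rw [hHdef]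
    exact sup_edge_adj_iff.mpr (Or.inr ⟨Or.inl ⟨rfl, rfl⟩, huv⟩)
  set S : Fin 4 → Set V :=
    fun i => if i = 0 then {u} else if i = 1 then {v} else if i = 2 then s' else I2 with hSdef
  have hfin : ∀ k : Fin 4, k = 0 ∨ k = 1 ∨ k = 2 ∨ k = 3 := by decide
  have huW : u ∉ W := fun h => h.1 rfl
  have hvW : v ∉ W := fun h => h.2 rfl
  have e02 : H.Adj u a1 := hGH ha1adj
  have e03 : H.Adj u a2 := hGH ha2adj
  have e12 : H.Adj v b1 := hGH hb1adj
  have e13 : H.Adj v b2 := hGH hb2adj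
  have e23 : H.Adj a b := hGH hab
  apply buildK4 (G := H) S
  · intro i
    rcases hfin i with rfl | rfl | rfl | rfl
    · exact ⟨u, rfl⟩
    · exact ⟨v, rfl⟩
    · exact ⟨a1, hs'sub ha1I⟩
    · exact ⟨a2, ha2I⟩
  · intro i j hij z hzi hzj
    rcases hfin i with rfl | rfl | rfl | rfl <;> rcases hfin j with rfl | rfl | rfl | rfl
    · exact hij rfl
    · exact huv ((hzi : z = u).symm.trans (hzj : z = v))
    · exact huW (hs'W' ((hzi : z = u) ▸ hzj))
    · exact huW (hI2W ((hzi : z = u) ▸ hzj))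
    · exact huv ((hzj : z = u).symm.trans (hzi : z = v))
    · exact hij rfl
    · exact hvW (hs'W' ((hzi : z = v) ▸ hzj))
    · exact hvW (hI2W ((hzi : z = v) ▸ hzj))
    · exact huW (hs'W' ((hzj : z = u) ▸ hzi))
    · exact hvW (hs'W' ((hzj : z = v) ▸ hzi))
    · exact hij rfl
    · exact hs'I2 z hzi hzj
    · exact huW (hI2W ((hzj : z = u) ▸ hzi))
    · exact hvW (hI2W ((hzj : z = v) ▸ hzi))
    · exact hs'I2 z hzj hzi
    · exact hij rfl
  · intro i
    rcases hfin i with rfl | rfl | rfl | rfl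
    · intro z1 hz1 z2 hz2
      have h12 : z1 = z2 := (hz1 : z1 = u).trans (hz2 : z2 = u).symm
      exact h12 ▸ RW.refl hz1
    · intro z1 hz1 z2 hz2
      have h12 : z1 = z2 := (hz1 : z1 = v).trans (hz2 : z2 = v).symm
      exact h12 ▸ RW.refl hz1
    · exact fun z1 h1 z2 h2' => (hs'conn z1 h1 z2 h2').mono_graph hGH
    · exact fun z1 h1 z2 h2' => (hI2conn z1 h1 z2 h2').mono_graph hGH
  · intro i j hij
    rcases hfin i with rfl | rfl | rfl | rfl <;> rcases hfin j with rfl | rfl | rfl | rfl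
    · exact absurd rfl hij
    · exact ⟨u, rfl, v, rfl, hHuv⟩
    · exact ⟨u, rfl, a1, hs'sub ha1I, e02⟩
    · exact ⟨u, rfl, a2, ha2I, e03⟩
    · exact ⟨v, rfl, u, rfl, hHuv.symm⟩
    · exact absurd rfl hij
    · exact ⟨v, rfl, b1, hs'sub hb1I, e12⟩
    · exact ⟨v, rfl, b2, hb2I, e13⟩
    · exact ⟨a1, hs'sub ha1I, u, rfl, e02.symm⟩
    · exact ⟨b1, hs'sub hb1I, v, rfl, e12.symm⟩
    · exact absurd rfl hij
    · exact ⟨a, haS, b, hbI2, e23⟩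
    · exact ⟨a2, ha2I, u, rfl, e03.symm⟩
    · exact ⟨b2, hb2I, v, rfl, e13.symm⟩
    · exact ⟨b, hbI2, a, haS, e23.symm⟩
    · exact absurd rfl hij


/-! ### main theorem -/

lemma sup_edge_of_adj {G : SimpleGraph V} {u v : V} (h : G.Adj u v) :
    G ⊔ SimpleGraph.edge u v = G := by
  refine sup_eq_left.mpr ?_
  intro a b hab
  rw [SimpleGraph.edge_adj] at hab
  rcases hab.1 with ⟨rfl, rfl⟩ | ⟨rfl, rfl⟩
  · exact h
  · exact h.symm

lemma noK4_of_cut {G : SimpleGraph V} {u v : V} (huv : u ≠ v)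
    (hsp : ¬ HasK4Minor G) (h2 : TwoConnected G)
    (hdis : ¬ (G.induce {w : V | w ≠ u ∧ w ≠ v}).Connected) :
    ¬ HasK4Minor (G ⊔ SimpleGraph.edge u v) := by
  intro hK
  obtain ⟨B, hne, hdisj, hconn, hadj⟩ := hK
  have hconnH : ∀ i, ConnS (G ⊔ SimpleGraph.edge u v) (↑(B i) : Set V) := fun i =>
    (connected_induce_iff.mp (hconn i)).2
  by_cases hcase : (∃ i, v ∈ B i) → ∃ i, u ∈ B i
  · exact hsp (noK4_aux huv h2 hdis B hne hdisj hconnH hadj hcase)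
  · push_neg at hcase
    obtain ⟨hv, hu⟩ := hcase
    have hedge : SimpleGraph.edge u v = SimpleGraph.edge v u := by
      ext a b
      rw [SimpleGraph.edge_adj, SimpleGraph.edge_adj]
      tauto
    have hHs : G ⊔ SimpleGraph.edge u v = G ⊔ SimpleGraph.edge v u := by rw [hedge]
    have hWs : {w : V | w ≠ v ∧ w ≠ u} = {w : V | w ≠ u ∧ w ≠ v} := by
      ext z; exact and_comm
    apply hsp
    refine noK4_aux (u := v) (v := u) huv.symm h2 (by rwa [hWs]) B hne hdisj
      (fun i => by rw [← hHs]; exact hconnH i)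
      (fun i j hij => by rw [← hHs]; exact hadj i j hij)
      (fun _ => hv)


/-- In a 2-node-connected series-parallel graph, `G + uv` is
series-parallel iff `uv` is an edge of `G` or `{u, v}` is a 2-cut of `G`. -/
theorem fullyCompliant_iff_edge_or_twoCut
    (G : SimpleGraph V) (hsp : ¬ HasK4Minor G) (h2 : TwoConnected G)
    (u v : V) (huv : u ≠ v) :
    ¬ HasK4Minor (G ⊔ SimpleGraph.edge u v) ↔
      (G.Adj u v ∨ ¬ (G.induce {w : V | w ≠ u ∧ w ≠ v}).Connected) := by
  constructor
  · intro hno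
    by_contra hcon
    push_neg at hcon
    exact hno (k4_of_noncut u v huv hcon.1 h2 hcon.2)
  · rintro (hadj | hdis)
    · rw [sup_edge_of_adj hadj]
      exact hsp
    · exact noK4_of_cut huv hsp h2 hdis

end FlowCut
end

section
/- Let G be a 2-node-connected series-parallel graph and let u,v be distinct nodes of G. If G+uv is not series-parallel (i.e., the edge uv is not fully compliant), then there is a 2-cut of G separating u from v, that is, a pair of nodes {l,r} such that u and v lie in different connected components of G−{l,r}. -/
set_option linter.unusedSectionVars false
set_option maxHeartbeats 1000000


open scoped Classical

namespace FlowCut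

variable {V : Type} [Fintype V] [DecidableEq V]

/-! ### Working notions -/

def SAdj (G : SimpleGraph V) (s t : Finset V) : Prop := ∃ a ∈ s, ∃ b ∈ t, G.Adj a b

lemma SAdj.symm {G : SimpleGraph V} {s t : Finset V} (h : SAdj G s t) : SAdj G t s := by
  obtain ⟨a, ha, b, hb, hab⟩ := h
  exact ⟨b, hb, a, ha, hab.symm⟩

lemma SAdj.mono_left {G : SimpleGraph V} {s s' t : Finset V} (h : SAdj G s t) (hs : s ⊆ s') :
    SAdj G s' t := by
  obtain ⟨a, ha, b, hb, hab⟩ := h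
  exact ⟨a, hs ha, b, hb, hab⟩

lemma SAdj.mono_right {G : SimpleGraph V} {s t t' : Finset V} (h : SAdj G s t) (ht : t ⊆ t') :
    SAdj G s t' := by
  obtain ⟨a, ha, b, hb, hab⟩ := h
  exact ⟨a, ha, b, ht hb, hab⟩

def WConn (G : SimpleGraph V) (s : Finset V) : Prop :=
  s.Nonempty ∧ ∀ x ∈ s, ∀ y ∈ s, ∃ w : G.Walk x y, ∀ z ∈ w.support, z ∈ s

def SepSet (G : SimpleGraph V) (u v : V) (C : Finset V) : Prop :=
  ∀ w : G.Walk u v, ∃ z ∈ w.support, z ∈ C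

section WConnLemmas

variable {G : SimpleGraph V} {s t : Finset V}

lemma wconn_singleton (a : V) : WConn G {a} := by
  refine ⟨⟨a, Finset.mem_singleton_self a⟩, ?_⟩
  intro x hx y hy
  rw [Finset.mem_singleton] at hx hy
  subst hx; subst hy
  exact ⟨SimpleGraph.Walk.nil, by simp⟩

/-- common skeleton: if every point of `s ∪ t` is reachable from `a` within `s ∪ t`,
then `s ∪ t` is walk-connected. -/
private lemma wconn_of_root {r : Finset V} {a : V} (ha : a ∈ r)
    (key : ∀ x ∈ r, ∃ w : G.Walk a x, ∀ z ∈ w.support, z ∈ r) : WConn G r := by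
  refine ⟨⟨a, ha⟩, ?_⟩
  intro x hx y hy
  obtain ⟨wx, hwx⟩ := key x hx
  obtain ⟨wy, hwy⟩ := key y hy
  refine ⟨wx.reverse.append wy, ?_⟩
  intro z hz
  rcases (SimpleGraph.Walk.mem_support_append_iff _ _).1 hz with hz | hz
  · exact hwx z (by simpa using hz)
  · exact hwy z hz

lemma wconn_union_mem (hs : WConn G s) (ht : WConn G t) {a : V} (has : a ∈ s) (hat : a ∈ t) :
    WConn G (s ∪ t) := by
  obtain ⟨-, hs⟩ := hs
  obtain ⟨-, ht⟩ := ht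
  refine wconn_of_root (Finset.mem_union_left _ has) ?_
  intro x hx
  rcases Finset.mem_union.1 hx with hx | hx
  · obtain ⟨w, hw⟩ := hs a has x hx
    exact ⟨w, fun z hz => Finset.mem_union_left _ (hw z hz)⟩
  · obtain ⟨w, hw⟩ := ht a hat x hx
    exact ⟨w, fun z hz => Finset.mem_union_right _ (hw z hz)⟩

lemma wconn_union_adj (hs : WConn G s) (ht : WConn G t) (hadj : SAdj G s t) :
    WConn G (s ∪ t) := by
  obtain ⟨a, ha, b, hb, hab⟩ := hadj
  obtain ⟨-, hs'⟩ := hs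
  obtain ⟨-, ht'⟩ := ht
  refine wconn_of_root (Finset.mem_union_left _ ha) ?_
  intro x hx
  rcases Finset.mem_union.1 hx with hx | hx
  · obtain ⟨w, hw⟩ := hs' a ha x hx
    exact ⟨w, fun z hz => Finset.mem_union_left _ (hw z hz)⟩
  · obtain ⟨w, hw⟩ := ht' b hb x hx
    refine ⟨SimpleGraph.Walk.cons hab w, ?_⟩
    intro z hz
    rw [SimpleGraph.Walk.support_cons, List.mem_cons] at hz
    rcases hz with rfl | hz
    · exact Finset.mem_union_left _ ha
    · exact Finset.mem_union_right _ (hw z hz)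

/-- walk supports are walk-connected. -/
lemma wconn_walk_support {x y : V} (w : G.Walk x y) : WConn G w.support.toFinset := by
  refine wconn_of_root (r := w.support.toFinset) (a := x) (by simp) ?_
  intro z hz
  rw [List.mem_toFinset] at hz
  refine ⟨w.takeUntil z hz, ?_⟩
  intro z' hz'
  rw [List.mem_toFinset]
  exact SimpleGraph.Walk.support_takeUntil_subset _ _ hz'

/-- reachability in the induced graph from a walk staying inside `s`. -/
lemma reach_of_walk {x y : V} (w : G.Walk x y) :
    (∀ z ∈ w.support, z ∈ s) → ∀ (hx : x ∈ s) (hy : y ∈ s),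
      (G.induce (↑s : Set V)).Reachable ⟨x, hx⟩ ⟨y, hy⟩ := by
  induction w with
  | nil => intro _ _ _; exact SimpleGraph.Reachable.refl _
  | @cons p q r hpq w ih =>
    intro hw hx hy
    have hq : q ∈ s := hw q (by simp [SimpleGraph.Walk.support_cons])
    have hrest : ∀ z ∈ w.support, z ∈ s := fun z hz =>
      hw z (by simp [SimpleGraph.Walk.support_cons, hz])
    have hadj : (G.induce (↑s : Set V)).Adj ⟨p, hx⟩ ⟨q, hq⟩ := hpq
    exact hadj.reachable.trans (ih hrest hq hy)

/-- a walk inside `s` from a walk of the induced graph. -/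
lemma walk_of_induce_walk {a b : (↑s : Set V)} (w : (G.induce (↑s : Set V)).Walk a b) :
    ∃ w' : G.Walk a.1 b.1, ∀ z ∈ w'.support, z ∈ s := by
  induction w with
  | nil => exact ⟨SimpleGraph.Walk.nil, by rintro z hz; simp at hz; subst hz; exact Subtype.coe_prop _⟩
  | @cons p q r hpq w ih =>
    obtain ⟨w', hw'⟩ := ih
    have hadj : G.Adj p.1 q.1 := by simpa using hpq
    refine ⟨SimpleGraph.Walk.cons hadj w', ?_⟩
    intro z hz
    rw [SimpleGraph.Walk.support_cons, List.mem_cons] at hz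
    rcases hz with rfl | hz
    · exact p.2
    · exact hw' z hz

/-- Transfer between `WConn` and connectivity of the induced graph. -/
lemma wconn_iff_induce_connected : WConn G s ↔ (G.induce (↑s : Set V)).Connected := by
  constructor
  · rintro ⟨⟨a, ha⟩, h⟩
    haveI hne : Nonempty (↑s : Set V) := ⟨⟨a, ha⟩⟩
    refine SimpleGraph.Connected.mk ?_
    rintro ⟨x, hx⟩ ⟨y, hy⟩
    obtain ⟨w, hw⟩ := h x hx y hy
    exact reach_of_walk w hw hx hy
  · rintro h
    obtain ⟨⟨a, ha⟩⟩ := h.nonempty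
    have hpre := h.preconnected
    refine ⟨⟨a, ha⟩, ?_⟩
    intro x hx y hy
    obtain ⟨w⟩ := hpre ⟨x, hx⟩ ⟨y, hy⟩
    exact walk_of_induce_walk w

lemma WConn.nonempty (h : WConn G s) : s.Nonempty := h.1

end WConnLemmas

end FlowCut
namespace FlowCut

variable {V : Type} [Fintype V] [DecidableEq V] {G : SimpleGraph V}

/-! ### Walk utilities -/

lemma walk_cons_decomp {a b : V} (w : G.Walk a b) (h : a ≠ b) :
    ∃ (c : V) (hac : G.Adj a c) (w' : G.Walk c b), w = SimpleGraph.Walk.cons hac w' := by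
  cases w with
  | nil => exact absurd rfl h
  | cons hac w' => exact ⟨_, hac, w', rfl⟩

lemma support_getLast {x y : V} (w : G.Walk x y) (h : w.support ≠ []) :
    w.support.getLast h = y := by
  induction w with
  | nil => simp
  | @cons p q r hpq w ih =>
    have h2 : (p :: w.support) ≠ [] := by simp
    show (p :: w.support).getLast h2 = r
    rw [List.getLast_cons (SimpleGraph.Walk.support_ne_nil _)]
    exact ih _

lemma support_getLast? {x y : V} (w : G.Walk x y) : w.support.getLast? = some y := by
  rw [← List.head?_reverse, ← SimpleGraph.Walk.support_reverse]
  rw [SimpleGraph.Walk.support_eq_cons w.reverse]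
  rfl

lemma prefix_eq_of_getLast_mem {α : Type*} {P L : List α} (h : P <+: L) (hnd : L.Nodup)
    (hne : L ≠ []) (hin : L.getLast hne ∈ P) : P = L := by
  obtain ⟨R, rfl⟩ := h
  cases R with
  | nil => simp
  | cons r R =>
    exfalso
    have hlast : (P ++ (r :: R)).getLast hne ∈ r :: R := by
      rw [List.getLast_append_of_ne_nil _ (by simp)]
      exact List.getLast_mem _
    exact (List.disjoint_of_nodup_append hnd) hin hlast

/-- Cut a walk at the first vertex belonging to `T`. -/
lemma crossing {x y : V} (w : G.Walk x y) (T : Finset V) (hex : ∃ z ∈ w.support, z ∈ T) :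
    ∃ (c : V) (w1 : G.Walk x c), c ∈ T ∧ w1.support <+: w.support ∧
      (∀ z ∈ w1.support, z ∈ T → z = c) := by
  induction w with
  | nil =>
    obtain ⟨z, hz, hzT⟩ := hex
    simp only [SimpleGraph.Walk.support_nil, List.mem_singleton] at hz
    subst hz
    exact ⟨z, SimpleGraph.Walk.nil, hzT, by simp, by simp⟩
  | @cons p q r hpq w ih =>
    by_cases hp : p ∈ T
    · refine ⟨p, SimpleGraph.Walk.nil, hp, ?_, by simp⟩
      rw [SimpleGraph.Walk.support_cons, SimpleGraph.Walk.support_nil]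
      exact ⟨w.support, rfl⟩
    · have hex' : ∃ z ∈ w.support, z ∈ T := by
        obtain ⟨z, hz, hzT⟩ := hex
        rw [SimpleGraph.Walk.support_cons, List.mem_cons] at hz
        rcases hz with rfl | hz
        · exact absurd hzT hp
        · exact ⟨z, hz, hzT⟩
      obtain ⟨c, w1, hc, hpre, hprop⟩ := ih hex'
      refine ⟨c, SimpleGraph.Walk.cons hpq w1, hc, ?_, ?_⟩
      · rw [SimpleGraph.Walk.support_cons, SimpleGraph.Walk.support_cons]
        exact List.cons_prefix_cons.2 ⟨rfl, hpre⟩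
      · intro z hz hzT
        rw [SimpleGraph.Walk.support_cons, List.mem_cons] at hz
        rcases hz with rfl | hz
        · exact absurd hzT hp
        · exact hprop z hz hzT

/-- Split off the last edge of a walk whose endpoint occurs exactly once. -/
lemma split_last {x y : V} (w : G.Walk x y) (hxy : x ≠ y) (honce : w.support.count y = 1) :
    ∃ (z : V) (ρ : G.Walk x z), G.Adj z y ∧ (∀ a ∈ ρ.support, a ∈ w.support) ∧
      y ∉ ρ.support ∧ (∀ a ∈ w.support, a = y ∨ a ∈ ρ.support) := by
  obtain ⟨c, hyc, w', hw⟩ := walk_cons_decomp w.reverse (Ne.symm hxy)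
  have hsupp : w.support = (SimpleGraph.Walk.cons hyc w').support.reverse := by
    rw [← hw, SimpleGraph.Walk.support_reverse, List.reverse_reverse]
  have hmem : ∀ a, a ∈ w.support ↔ (a = y ∨ a ∈ w'.support) := by
    intro a
    rw [hsupp, List.mem_reverse, SimpleGraph.Walk.support_cons, List.mem_cons]
  have hcount : w.support.count y = 1 + w'.support.count y := by
    rw [hsupp, List.count_reverse, SimpleGraph.Walk.support_cons, List.count_cons_self]
    omega
  have hynot : y ∉ w'.support := by
    intro hy
    have h1 : 1 ≤ w'.support.count y := List.one_le_count_iff.2 hy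
    omega
  refine ⟨c, w'.reverse, hyc.symm, ?_, ?_, ?_⟩
  · intro a ha
    rw [SimpleGraph.Walk.support_reverse, List.mem_reverse] at ha
    exact (hmem a).2 (Or.inr ha)
  · rw [SimpleGraph.Walk.support_reverse, List.mem_reverse]
    exact hynot
  · intro a ha
    rcases (hmem a).1 ha with rfl | ha'
    · exact Or.inl rfl
    · exact Or.inr (by rw [SimpleGraph.Walk.support_reverse, List.mem_reverse]; exact ha')

end FlowCut
namespace FlowCut

variable {V : Type} [Fintype V] [DecidableEq V] {G : SimpleGraph V}

lemma vec4_forall {α : Type*} (S1 S2 S3 S4 : α) (P : α → Prop)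
    (h1 : P S1) (h2 : P S2) (h3 : P S3) (h4 : P S4) :
    ∀ i : Fin 4, P (![S1, S2, S3, S4] i) := by
  intro i
  fin_cases i <;> simpa

lemma vec4_forall_pair {α : Type*} (S1 S2 S3 S4 : α) (P : α → α → Prop)
    (h12 : P S1 S2) (h13 : P S1 S3) (h14 : P S1 S4)
    (h23 : P S2 S3) (h24 : P S2 S4) (h34 : P S3 S4)
    (h21 : P S2 S1) (h31 : P S3 S1) (h41 : P S4 S1)
    (h32 : P S3 S2) (h42 : P S4 S2) (h43 : P S4 S3) :
    ∀ i j : Fin 4, i ≠ j → P (![S1, S2, S3, S4] i) (![S1, S2, S3, S4] j) := by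
  intro i j hij
  fin_cases i <;> fin_cases j <;> simp_all

lemma mk_k4 {S1 S2 S3 S4 : Finset V}
    (c1 : WConn G S1) (c2 : WConn G S2) (c3 : WConn G S3) (c4 : WConn G S4)
    (d12 : Disjoint S1 S2) (d13 : Disjoint S1 S3) (d14 : Disjoint S1 S4)
    (d23 : Disjoint S2 S3) (d24 : Disjoint S2 S4) (d34 : Disjoint S3 S4)
    (a12 : SAdj G S1 S2) (a13 : SAdj G S1 S3) (a14 : SAdj G S1 S4)
    (a23 : SAdj G S2 S3) (a24 : SAdj G S2 S4) (a34 : SAdj G S3 S4) :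
    HasK4Minor G := by
  refine ⟨![S1, S2, S3, S4], ?_, ?_, ?_, ?_⟩
  · exact vec4_forall S1 S2 S3 S4 (fun s => s.Nonempty) c1.nonempty c2.nonempty c3.nonempty
      c4.nonempty
  · exact vec4_forall_pair S1 S2 S3 S4 (fun s t => Disjoint s t) d12 d13 d14 d23 d24 d34
      d12.symm d13.symm d14.symm d23.symm d24.symm d34.symm
  · exact vec4_forall S1 S2 S3 S4 (fun s => (G.induce (↑s : Set V)).Connected)
      (wconn_iff_induce_connected.1 c1) (wconn_iff_induce_connected.1 c2)
      (wconn_iff_induce_connected.1 c3) (wconn_iff_induce_connected.1 c4)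
  · exact vec4_forall_pair S1 S2 S3 S4 (fun s t => ∃ a ∈ s, ∃ b ∈ t, G.Adj a b)
      a12 a13 a14 a23 a24 a34 a12.symm a13.symm a14.symm a23.symm a24.symm a34.symm

end FlowCut
namespace FlowCut

variable {V : Type} [Fintype V] [DecidableEq V] {G : SimpleGraph V}

open SimpleGraph Walk

lemma extract_seg {u v : V} {A B : Finset V} (ω : G.Walk u v) (hω : ω.support.Nodup)
    (hu : u ∈ A) (hv : v ∈ B) (hAB : Disjoint A B) :
    ∃ (x y : V) (τ : G.Walk x y), x ∈ A ∧ y ∈ B ∧ τ.support.Nodup ∧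
      (∀ z ∈ τ.support, z ∈ ω.support) ∧ (∀ z ∈ τ.support, z ∈ A → z = x) ∧
      (∀ z ∈ τ.support, z ∈ B → z = y) := by
  obtain ⟨y, ω₁, hyB, hpre1, hfirstB⟩ :=
    crossing ω B ⟨v, SimpleGraph.Walk.end_mem_support ω, hv⟩
  have hnd1 : ω₁.support.Nodup := hpre1.sublist.nodup hω
  have hsub1 : ∀ z ∈ ω₁.support, z ∈ ω.support := fun z hz => hpre1.sublist.mem hz
  obtain ⟨x, ω₂, hxA, hpre2, hfirstA⟩ :=
    crossing ω₁.reverse A ⟨u, by simp, hu⟩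
  have hsub2 : ∀ z ∈ ω₂.support, z ∈ ω₁.support := by
    intro z hz
    have := hpre2.sublist.mem hz
    rwa [SimpleGraph.Walk.support_reverse, List.mem_reverse] at this
  refine ⟨x, y, ω₂.reverse, hxA, hyB, ?_, ?_, ?_, ?_⟩
  · rw [SimpleGraph.Walk.support_reverse]
    refine List.nodup_reverse.2 (hpre2.sublist.nodup ?_)
    rw [SimpleGraph.Walk.support_reverse]
    exact List.nodup_reverse.2 hnd1
  · intro z hz
    rw [SimpleGraph.Walk.support_reverse, List.mem_reverse] at hz
    exact hsub1 z (hsub2 z hz)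
  · intro z hz hzA
    rw [SimpleGraph.Walk.support_reverse, List.mem_reverse] at hz
    exact hfirstA z hz hzA
  · intro z hz hzB
    rw [SimpleGraph.Walk.support_reverse, List.mem_reverse] at hz
    exact hfirstB z (hsub2 z hz) hzB

end FlowCut
namespace FlowCut

variable {V : Type} [Fintype V] [DecidableEq V] {G : SimpleGraph V}

/-- **Key separation lemma.** If `p ≠ q` both attach to the connected sets `A ∋ u` and
`B ∋ v` and are joined by a walk avoiding `A ∪ B`, then (in a `K₄`-minor-free graph)
every `u–v` walk passes through `p` or `q`. -/
lemma key_sep {A B : Finset V} {u v p q : V}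
    (hsp : ¬ HasK4Minor G)
    (hA : WConn G A) (hB : WConn G B) (hAB : Disjoint A B)
    (hu : u ∈ A) (hv : v ∈ B)
    (hpq : p ≠ q) (hpA : p ∉ A) (hpB : p ∉ B) (hqA : q ∉ A) (hqB : q ∉ B)
    (apA : ∃ a ∈ A, G.Adj p a) (apB : ∃ b ∈ B, G.Adj p b)
    (aqA : ∃ a ∈ A, G.Adj q a) (aqB : ∃ b ∈ B, G.Adj q b)
    (σ0 : G.Walk p q) (hσ0 : ∀ z ∈ σ0.support, z ∉ A ∧ z ∉ B) :
    ∀ ω : G.Walk u v, p ∈ ω.support ∨ q ∈ ω.support := by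
  intro ω0
  by_contra hcon
  push_neg at hcon
  obtain ⟨hpω0, hqω0⟩ := hcon
  set ω := ω0.bypass with hωdef
  have hωpath : ω.support.Nodup := (SimpleGraph.Walk.bypass_isPath ω0).2
  have hωsub : ∀ z ∈ ω.support, z ∈ ω0.support :=
    fun z hz => SimpleGraph.Walk.support_bypass_subset ω0 hz
  have hpω : p ∉ ω.support := fun h => hpω0 (hωsub p h)
  have hqω : q ∉ ω.support := fun h => hqω0 (hωsub q h)
  set σ := σ0.bypass with hσdef
  have hσpath : σ.support.Nodup := (SimpleGraph.Walk.bypass_isPath σ0).2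
  have hσAB : ∀ z ∈ σ.support, z ∉ A ∧ z ∉ B :=
    fun z hz => hσ0 z (SimpleGraph.Walk.support_bypass_subset σ0 hz)
  obtain ⟨x, y, τ, hxA, hyB, hτnd, hτω, hτA, hτB⟩ := extract_seg ω hωpath hu hv hAB
  have hxy : x ≠ y := fun h => (Finset.disjoint_left.1 hAB hxA) (h ▸ hyB)
  have hpτ : p ∉ τ.support := fun h => hpω (hτω p h)
  have hqτ : q ∉ τ.support := fun h => hqω (hτω q h)
  by_cases hcase : ∃ z ∈ σ.support, z ∈ τ.support ∧ z ≠ x ∧ z ≠ y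
  case neg =>
    -- the connector avoids the crossing path entirely
    have hστ : ∀ z ∈ σ.support, z ∉ τ.support := by
      intro z hz hzτ
      rcases eq_or_ne z x with rfl | hzx
      · exact (hσAB z hz).1 hxA
      rcases eq_or_ne z y with rfl | hzy
      · exact (hσAB z hz).2 hyB
      exact hcase ⟨z, hz, hzτ, hzx, hzy⟩
    obtain ⟨z, ρ, hzy, hρτ, hyρ, -⟩ :=
      split_last τ hxy (List.count_eq_one_of_mem hτnd (SimpleGraph.Walk.end_mem_support τ))
    obtain ⟨z', ρ', hz'q, hρ'σ, hqρ', -⟩ :=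
      split_last σ hpq (List.count_eq_one_of_mem hσpath (SimpleGraph.Walk.end_mem_support σ))
    refine hsp (mk_k4 (S1 := A ∪ ρ.support.toFinset) (S2 := B)
      (S3 := ρ'.support.toFinset) (S4 := {q}) ?_ hB (wconn_walk_support ρ') (wconn_singleton q)
      ?_ ?_ ?_ ?_ ?_ ?_ ?_ ?_ ?_ ?_ ?_ ?_)
    · exact wconn_union_mem hA (wconn_walk_support ρ) hxA
        (List.mem_toFinset.2 (SimpleGraph.Walk.start_mem_support ρ))
    · -- A ∪ ρ vs B
      rw [Finset.disjoint_left]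
      intro a ha hb
      rcases Finset.mem_union.1 ha with ha | ha
      · exact Finset.disjoint_left.1 hAB ha hb
      · rw [List.mem_toFinset] at ha
        have := hτB a (hρτ a ha) hb
        exact hyρ (this ▸ ha)
    · -- A ∪ ρ vs ρ'
      rw [Finset.disjoint_left]
      intro a ha hb
      rw [List.mem_toFinset] at hb
      have haσ : a ∈ σ.support := hρ'σ a hb
      rcases Finset.mem_union.1 ha with ha | ha
      · exact (hσAB a haσ).1 ha
      · rw [List.mem_toFinset] at ha
        exact hστ a haσ (hρτ a ha)
    · -- A ∪ ρ vs {q}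
      rw [Finset.disjoint_left]
      intro a ha hb
      rw [Finset.mem_singleton] at hb
      subst hb
      rcases Finset.mem_union.1 ha with ha | ha
      · exact hqA ha
      · rw [List.mem_toFinset] at ha
        exact hqτ (hρτ _ ha)
    · -- B vs ρ'
      rw [Finset.disjoint_left]
      intro a ha hb
      rw [List.mem_toFinset] at hb
      exact (hσAB a (hρ'σ a hb)).2 ha
    · -- B vs {q}
      rw [Finset.disjoint_left]
      intro a ha hb
      rw [Finset.mem_singleton] at hb
      subst hb
      exact hqB ha
    · -- ρ' vs {q}
      rw [Finset.disjoint_left]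
      intro a ha hb
      rw [Finset.mem_singleton] at hb
      subst hb
      rw [List.mem_toFinset] at ha
      exact hqρ' ha
    · -- S1 S2 : edge z y
      exact ⟨z, Finset.mem_union_right _
        (List.mem_toFinset.2 (SimpleGraph.Walk.end_mem_support ρ)), y, hyB, hzy⟩
    · -- S1 S3 : edge a p
      obtain ⟨a, ha, hpa⟩ := apA
      exact ⟨a, Finset.mem_union_left _ ha, p,
        List.mem_toFinset.2 (SimpleGraph.Walk.start_mem_support ρ'), hpa.symm⟩
    · -- S1 S4 : edge a q
      obtain ⟨a, ha, hqa⟩ := aqA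
      exact ⟨a, Finset.mem_union_left _ ha, q, Finset.mem_singleton_self q, hqa.symm⟩
    · -- S2 S3 : edge b p
      obtain ⟨b, hb, hpb⟩ := apB
      exact ⟨b, hb, p, List.mem_toFinset.2 (SimpleGraph.Walk.start_mem_support ρ'), hpb.symm⟩
    · -- S2 S4 : edge b q
      obtain ⟨b, hb, hqb⟩ := aqB
      exact ⟨b, hb, q, Finset.mem_singleton_self q, hqb.symm⟩
    · -- S3 S4 : edge z' q
      exact ⟨z', List.mem_toFinset.2 (SimpleGraph.Walk.end_mem_support ρ'), q,
        Finset.mem_singleton_self q, hz'q⟩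
  case pos =>
    obtain ⟨w0, hw0σ, hw0τ, hw0x, hw0y⟩ := hcase
    -- interior of τ
    obtain ⟨z₁, hxz₁, τ₁, hτ₁⟩ := walk_cons_decomp τ hxy
    have hτsupp : τ.support = x :: τ₁.support := by rw [hτ₁, SimpleGraph.Walk.support_cons]
    have hxτ₁ : x ∉ τ₁.support := by
      have := hτnd
      rw [hτsupp] at this
      exact (List.nodup_cons.1 this).1
    have hτ₁nd : τ₁.support.Nodup := by
      rw [hτsupp] at hτnd
      exact (List.nodup_cons.1 hτnd).2
    have hz₁y : z₁ ≠ y := by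
      intro h
      subst h
      have hnil : τ₁ = SimpleGraph.Walk.nil :=
        (SimpleGraph.Walk.isPath_iff_eq_nil (p := τ₁)).1 ((SimpleGraph.Walk.isPath_def τ₁).2 hτ₁nd)
      have hw0 : w0 ∈ τ.support := hw0τ
      rw [hτsupp, hnil] at hw0
      simp only [SimpleGraph.Walk.support_nil, List.mem_cons, List.mem_singleton,
        List.not_mem_nil, or_false] at hw0
      rcases hw0 with h' | h'
      · exact hw0x h'
      · exact hw0y h'
    obtain ⟨z₂, μ, hz₂y, hμτ₁, hyμ, hτ₁compl⟩ :=
      split_last τ₁ hz₁y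
        (List.count_eq_one_of_mem hτ₁nd (SimpleGraph.Walk.end_mem_support τ₁))
    have hμτ : ∀ a ∈ μ.support, a ∈ τ.support := by
      intro a ha
      rw [hτsupp]
      exact List.mem_cons_of_mem _ (hμτ₁ a ha)
    have hxμ : x ∉ μ.support := fun h => hxτ₁ (hμτ₁ x h)
    have hw0μ : w0 ∈ μ.support := by
      have hw0τ₁ : w0 ∈ τ₁.support := by
        have := hw0τ
        rw [hτsupp] at this
        rcases List.mem_cons.1 this with h | h
        · exact absurd h hw0x
        · exact h
      rcases hτ₁compl w0 hw0τ₁ with h | h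
      · exact absurd h hw0y
      · exact h
    obtain ⟨w, σ₁, hwμ, hpre, hfirstμ⟩ :=
      crossing σ μ.support.toFinset ⟨w0, hw0σ, List.mem_toFinset.2 hw0μ⟩
    rw [List.mem_toFinset] at hwμ
    have hwτ : w ∈ τ.support := hμτ w hwμ
    have hpw : p ≠ w := fun h => hpτ (h ▸ hwτ)
    have hwq : w ≠ q := fun h => hqτ (h ▸ hwτ)
    obtain ⟨z₀, hpz₀, σ₂, hσ₁⟩ := walk_cons_decomp σ₁ hpw
    have hσ₁nd : σ₁.support.Nodup := hpre.sublist.nodup hσpath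
    have hσ₁supp : σ₁.support = p :: σ₂.support := by rw [hσ₁, SimpleGraph.Walk.support_cons]
    have hpσ₂ : p ∉ σ₂.support := by
      have := hσ₁nd
      rw [hσ₁supp] at this
      exact (List.nodup_cons.1 this).1
    have hσ₂σ : ∀ a ∈ σ₂.support, a ∈ σ.support := by
      intro a ha
      exact hpre.sublist.mem (by rw [hσ₁supp]; exact List.mem_cons_of_mem _ ha)
    have hqσ₁ : q ∉ σ₁.support := by
      intro hq
      have hLne : σ.support ≠ [] := SimpleGraph.Walk.support_ne_nil σ
      have hgl : σ.support.getLast hLne = q := support_getLast σ hLne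
      have heq : σ₁.support = σ.support :=
        prefix_eq_of_getLast_mem hpre hσpath hLne (by rw [hgl]; exact hq)
      have g1 : σ₁.support.getLast? = some w := support_getLast? σ₁
      rw [heq, support_getLast? σ] at g1
      exact hwq (Option.some.inj g1).symm
    have hqσ₂ : q ∉ σ₂.support := fun h => hqσ₁ (by rw [hσ₁supp]; exact List.mem_cons_of_mem _ h)
    -- branch sets
    have hμB : ∀ a ∈ μ.support, a ∉ B := by
      intro a ha hb
      have : a = y := hτB a (hμτ a ha) hb
      exact hyμ (this ▸ ha)
    have hμA : ∀ a ∈ μ.support, a ∉ A := by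
      intro a ha hb
      have : a = x := hτA a (hμτ a ha) hb
      exact hxμ (this ▸ ha)
    refine hsp (mk_k4 (S1 := A ∪ {q}) (S2 := B) (S3 := {p})
      (S4 := μ.support.toFinset ∪ σ₂.support.toFinset)
      ?_ hB (wconn_singleton p) ?_ ?_ ?_ ?_ ?_ ?_ ?_ ?_ ?_ ?_ ?_ ?_ ?_)
    · -- S1 connected
      obtain ⟨a, ha, hqa⟩ := aqA
      exact wconn_union_adj hA (wconn_singleton q) ⟨a, ha, q, Finset.mem_singleton_self q, hqa.symm⟩
    · -- S4 connected
      exact wconn_union_mem (wconn_walk_support μ) (wconn_walk_support σ₂)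
        (List.mem_toFinset.2 hwμ) (List.mem_toFinset.2 (SimpleGraph.Walk.end_mem_support σ₂))
    · -- S1 ∩ S2
      rw [Finset.disjoint_left]
      intro a ha hb
      rcases Finset.mem_union.1 ha with ha | ha
      · exact Finset.disjoint_left.1 hAB ha hb
      · rw [Finset.mem_singleton] at ha; exact hqB (ha ▸ hb)
    · -- S1 ∩ S3
      rw [Finset.disjoint_left]
      intro a ha hb
      rw [Finset.mem_singleton] at hb
      subst hb
      rcases Finset.mem_union.1 ha with ha | ha
      · exact hpA ha
      · rw [Finset.mem_singleton] at ha; exact hpq ha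
    · -- S1 ∩ S4
      rw [Finset.disjoint_left]
      intro a ha hb
      have hb' : a ∈ μ.support ∨ a ∈ σ₂.support := by
        rcases Finset.mem_union.1 hb with hb | hb
        · exact Or.inl (List.mem_toFinset.1 hb)
        · exact Or.inr (List.mem_toFinset.1 hb)
      rcases Finset.mem_union.1 ha with ha | ha
      · rcases hb' with hb' | hb'
        · exact hμA a hb' ha
        · exact (hσAB a (hσ₂σ a hb')).1 ha
      · rw [Finset.mem_singleton] at ha
        subst ha
        rcases hb' with hb' | hb'
        · exact hqτ (hμτ a hb')
        · exact hqσ₂ hb'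
    · -- S2 ∩ S3
      rw [Finset.disjoint_left]
      intro a ha hb
      rw [Finset.mem_singleton] at hb
      exact hpB (hb ▸ ha)
    · -- S2 ∩ S4
      rw [Finset.disjoint_left]
      intro a ha hb
      rcases Finset.mem_union.1 hb with hb | hb
      · exact hμB a (List.mem_toFinset.1 hb) ha
      · exact (hσAB a (hσ₂σ a (List.mem_toFinset.1 hb))).2 ha
    · -- S3 ∩ S4
      rw [Finset.disjoint_left]
      intro a ha hb
      rw [Finset.mem_singleton] at ha
      subst ha
      rcases Finset.mem_union.1 hb with hb | hb
      · exact hpτ (hμτ a (List.mem_toFinset.1 hb))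
      · exact hpσ₂ (List.mem_toFinset.1 hb)
    · -- S1 S2 : q adjacent to B
      obtain ⟨b, hb, hqb⟩ := aqB
      exact ⟨q, Finset.mem_union_right _ (Finset.mem_singleton_self q), b, hb, hqb⟩
    · -- S1 S3 : p adjacent to A
      obtain ⟨a, ha, hpa⟩ := apA
      exact ⟨a, Finset.mem_union_left _ ha, p, Finset.mem_singleton_self p, hpa.symm⟩
    · -- S1 S4 : edge x z₁
      exact ⟨x, Finset.mem_union_left _ hxA, z₁,
        Finset.mem_union_left _ (List.mem_toFinset.2 (SimpleGraph.Walk.start_mem_support μ)),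
        hxz₁⟩
    · -- S2 S3 : p adjacent to B
      obtain ⟨b, hb, hpb⟩ := apB
      exact ⟨b, hb, p, Finset.mem_singleton_self p, hpb.symm⟩
    · -- S2 S4 : edge y z₂
      exact ⟨y, hyB, z₂,
        Finset.mem_union_left _ (List.mem_toFinset.2 (SimpleGraph.Walk.end_mem_support μ)),
        hz₂y.symm⟩
    · -- S3 S4 : edge p z₀
      exact ⟨p, Finset.mem_singleton_self p, z₀,
        Finset.mem_union_right _ (List.mem_toFinset.2 (SimpleGraph.Walk.start_mem_support σ₂)),
        hpz₀⟩

end FlowCut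
namespace FlowCut

variable {V : Type} [Fintype V] [DecidableEq V] {G : SimpleGraph V}

/-- A "5-adjacency configuration" forces `B2 ∪ B3` to separate `u` from `v`. -/
lemma config_sepset {B0 B1 B2 B3 : Finset V} {u v : V}
    (hsp : ¬ HasK4Minor G)
    (c0 : WConn G B0) (c1 : WConn G B1) (c2 : WConn G B2) (c3 : WConn G B3)
    (d01 : Disjoint B0 B1) (d02 : Disjoint B0 B2) (d03 : Disjoint B0 B3)
    (d12 : Disjoint B1 B2) (d13 : Disjoint B1 B3) (d23 : Disjoint B2 B3)
    (hu : u ∈ B0) (hv : v ∈ B1)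
    (a02 : SAdj G B0 B2) (a03 : SAdj G B0 B3) (a12 : SAdj G B1 B2)
    (a13 : SAdj G B1 B3) (a23 : SAdj G B2 B3) :
    SepSet G u v (B2 ∪ B3) := by
  intro ω0
  by_contra hcon
  push_neg at hcon
  have havoid : ∀ z ∈ ω0.support, z ∉ B2 ∪ B3 := hcon
  set ω := ω0.bypass with hωdef
  have hωnd : ω.support.Nodup := (SimpleGraph.Walk.bypass_isPath ω0).2
  have hωsub : ∀ z ∈ ω.support, z ∈ ω0.support :=
    fun z hz => SimpleGraph.Walk.support_bypass_subset ω0 hz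
  obtain ⟨x, y, τ, hxA, hyB, hτnd, hτω, hτA, hτB⟩ := extract_seg ω hωnd hu hv d01
  have hxy : x ≠ y := fun h => (Finset.disjoint_left.1 d01 hxA) (h ▸ hyB)
  obtain ⟨z, ρ, hzy, hρτ, hyρ, -⟩ :=
    split_last τ hxy (List.count_eq_one_of_mem hτnd (SimpleGraph.Walk.end_mem_support τ))
  have hρ23 : ∀ a ∈ ρ.support, a ∉ B2 ∪ B3 :=
    fun a ha => havoid a (hωsub a (hτω a (hρτ a ha)))
  refine hsp (mk_k4 (S1 := B0 ∪ ρ.support.toFinset) (S2 := B1) (S3 := B2) (S4 := B3)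
    ?_ c1 c2 c3 ?_ ?_ ?_ d12 d13 d23 ?_ ?_ ?_ a12 a13 a23)
  · exact wconn_union_mem c0 (wconn_walk_support ρ) hxA
      (List.mem_toFinset.2 (SimpleGraph.Walk.start_mem_support ρ))
  · rw [Finset.disjoint_left]
    intro a ha hb
    rcases Finset.mem_union.1 ha with ha | ha
    · exact Finset.disjoint_left.1 d01 ha hb
    · rw [List.mem_toFinset] at ha
      exact hyρ ((hτB a (hρτ a ha) hb) ▸ ha)
  · rw [Finset.disjoint_left]
    intro a ha hb
    rcases Finset.mem_union.1 ha with ha | ha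
    · exact Finset.disjoint_left.1 d02 ha hb
    · rw [List.mem_toFinset] at ha
      exact hρ23 a ha (Finset.mem_union_left _ hb)
  · rw [Finset.disjoint_left]
    intro a ha hb
    rcases Finset.mem_union.1 ha with ha | ha
    · exact Finset.disjoint_left.1 d03 ha hb
    · rw [List.mem_toFinset] at ha
      exact hρ23 a ha (Finset.mem_union_right _ hb)
  · exact ⟨z, Finset.mem_union_right _
      (List.mem_toFinset.2 (SimpleGraph.Walk.end_mem_support ρ)), y, hyB, hzy⟩
  · exact a02.mono_left Finset.subset_union_left
  · exact a03.mono_left Finset.subset_union_left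

end FlowCut
namespace FlowCut

variable {V : Type} [Fintype V] [DecidableEq V] {G : SimpleGraph V}

/-- In a connected finset with at least two elements there is a removable vertex distinct
from any designated one (a vertex farthest from `w0` is removable). -/
lemma exists_removable {s : Finset V} (hs : WConn G s) (h2 : 2 ≤ s.card)
    {w0 : V} (hw0 : w0 ∈ s) :
    ∃ p ∈ s, p ≠ w0 ∧ WConn G (s.erase p) := by
  classical
  set P : V → ℕ → Prop := fun z n => ∃ w : G.Walk w0 z, (∀ t ∈ w.support, t ∈ s) ∧ w.length = n
    with hP
  have hex : ∀ z ∈ s, ∃ n, P z n := by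
    intro z hz
    obtain ⟨w, hw⟩ := hs.2 w0 hw0 z hz
    exact ⟨w.length, w, hw, rfl⟩
  set f : V → ℕ := fun z => if h : ∃ n, P z n then Nat.find h else 0 with hf
  have hfd : ∀ z ∈ s, P z (f z) := by
    intro z hz
    simp only [hf, dif_pos (hex z hz)]
    exact Nat.find_spec (hex z hz)
  have hfle : ∀ z ∈ s, ∀ n, P z n → f z ≤ n := by
    intro z hz n hn
    simp only [hf, dif_pos (hex z hz)]
    exact Nat.find_min' _ hn
  have hfw0 : f w0 = 0 :=
    Nat.le_zero.1 (hfle w0 hw0 0 ⟨SimpleGraph.Walk.nil, by simp [hw0], rfl⟩)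
  obtain ⟨p, hp, hmax⟩ := Finset.exists_max_image s f ⟨w0, hw0⟩
  obtain ⟨z1, hz1, hz1w0⟩ := Finset.exists_mem_ne (s := s) (by omega) w0
  have hz1pos : 1 ≤ f z1 := by
    by_contra hlt
    push_neg at hlt
    obtain ⟨w, -, hwl⟩ := hfd z1 hz1
    have hl0 : w.length = 0 := by omega
    exact hz1w0 (SimpleGraph.Walk.eq_of_length_eq_zero hl0).symm
  have hppos : 1 ≤ f p := le_trans hz1pos (hmax z1 hz1)
  have hpw0 : p ≠ w0 := fun h => by rw [h, hfw0] at hppos; omega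
  have hkey : ∀ z ∈ s.erase p, ∃ w : G.Walk w0 z, ∀ t ∈ w.support, t ∈ s.erase p := by
    intro z hz
    obtain ⟨hzp, hzs⟩ := Finset.mem_erase.1 hz
    obtain ⟨w, hws, hwl⟩ := hfd z hzs
    have hpnot : p ∉ w.support := by
      intro hpsup
      have hsplit := SimpleGraph.Walk.take_spec w hpsup
      have hlen : (w.takeUntil p hpsup).length + (w.dropUntil p hpsup).length = w.length := by
        rw [← SimpleGraph.Walk.length_append, hsplit]
      have h1 : f p ≤ (w.takeUntil p hpsup).length := by
        refine hfle p hp _ ⟨w.takeUntil p hpsup, ?_, rfl⟩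
        intro t ht
        exact hws t (SimpleGraph.Walk.support_takeUntil_subset _ _ ht)
      have h2' : 1 ≤ (w.dropUntil p hpsup).length := by
        by_contra hc
        push_neg at hc
        have hl0 : (w.dropUntil p hpsup).length = 0 := by omega
        exact hzp (SimpleGraph.Walk.eq_of_length_eq_zero hl0).symm
      have := hmax z hzs
      omega
    exact ⟨w, fun t ht => Finset.mem_erase.2 ⟨fun h => hpnot (h ▸ ht), hws t ht⟩⟩
  refine ⟨p, hp, hpw0, ⟨w0, Finset.mem_erase.2 ⟨Ne.symm hpw0, hw0⟩⟩, ?_⟩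
  · intro x hx y hy
    obtain ⟨wx, hwx⟩ := hkey x hx
    obtain ⟨wy, hwy⟩ := hkey y hy
    refine ⟨wx.reverse.append wy, ?_⟩
    intro t ht
    rcases (SimpleGraph.Walk.mem_support_append_iff _ _).1 ht with ht | ht
    · exact hwx t (by simpa using ht)
    · exact hwy t ht

end FlowCut
namespace FlowCut

variable {V : Type} [Fintype V] [DecidableEq V] {G : SimpleGraph V}

/-! ### Transfer between `G ⊔ edge u v` and `G` -/

lemma sup_edge_adj_cases {u v a b : V} (h : (G ⊔ SimpleGraph.edge u v).Adj a b) :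
    G.Adj a b ∨ (a = u ∧ b = v) ∨ (a = v ∧ b = u) := by
  rcases (SimpleGraph.sup_adj _ _ _ _).1 h with h | h
  · exact Or.inl h
  · rcases (SimpleGraph.edge_adj u v a b).1 h with ⟨h', -⟩
    tauto

lemma walk_transfer {u v : V} {s : Finset V} {x y : V}
    (w : (G ⊔ SimpleGraph.edge u v).Walk x y) (hw : ∀ z ∈ w.support, z ∈ s)
    (hnot : u ∉ s ∨ v ∉ s) : ∃ w' : G.Walk x y, ∀ z ∈ w'.support, z ∈ s := by
  induction w with
  | nil => exact ⟨SimpleGraph.Walk.nil, hw⟩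
  | @cons a b c hab w ih =>
    have has : a ∈ s := hw a (by simp)
    have hbs : b ∈ s := hw b (by simp [SimpleGraph.Walk.support_cons])
    have hrest : ∀ z ∈ w.support, z ∈ s := fun z hz =>
      hw z (by simp [SimpleGraph.Walk.support_cons, hz])
    obtain ⟨w', hw'⟩ := ih hrest
    rcases sup_edge_adj_cases hab with h | ⟨rfl, rfl⟩ | ⟨rfl, rfl⟩
    · refine ⟨SimpleGraph.Walk.cons h w', ?_⟩
      intro z hz
      rw [SimpleGraph.Walk.support_cons, List.mem_cons] at hz
      rcases hz with rfl | hz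
      · exact has
      · exact hw' z hz
    · rcases hnot with h' | h' <;> [exact absurd has h'; exact absurd hbs h']
    · rcases hnot with h' | h' <;> [exact absurd hbs h'; exact absurd has h']

lemma wconn_transfer {u v : V} {s : Finset V}
    (h : WConn (G ⊔ SimpleGraph.edge u v) s) (hnot : u ∉ s ∨ v ∉ s) : WConn G s := by
  refine ⟨h.1, ?_⟩
  intro x hx y hy
  obtain ⟨w, hw⟩ := h.2 x hx y hy
  exact walk_transfer w hw hnot

lemma sadj_transfer {u v : V} {s t : Finset V}
    (h : SAdj (G ⊔ SimpleGraph.edge u v) s t)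
    (h1 : ¬(u ∈ s ∧ v ∈ t)) (h2 : ¬(u ∈ t ∧ v ∈ s)) : SAdj G s t := by
  obtain ⟨a, ha, b, hb, hab⟩ := h
  rcases sup_edge_adj_cases hab with h' | ⟨rfl, rfl⟩ | ⟨rfl, rfl⟩
  · exact ⟨a, ha, b, hb, h'⟩
  · exact absurd ⟨ha, hb⟩ h1
  · exact absurd ⟨hb, ha⟩ h2

lemma splice_walk {u v : V} {s : Finset V} (wuv : G.Walk u v)
    (hwuv : ∀ z ∈ wuv.support, z ∈ s) {x y : V}
    (w : (G ⊔ SimpleGraph.edge u v).Walk x y) (hw : ∀ z ∈ w.support, z ∈ s) :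
    ∃ w' : G.Walk x y, ∀ z ∈ w'.support, z ∈ s := by
  induction w with
  | nil => exact ⟨SimpleGraph.Walk.nil, hw⟩
  | @cons a b c hab w ih =>
    have has : a ∈ s := hw a (by simp)
    have hrest : ∀ z ∈ w.support, z ∈ s := fun z hz =>
      hw z (by simp [SimpleGraph.Walk.support_cons, hz])
    obtain ⟨w', hw'⟩ := ih hrest
    have glue : ∀ w0 : G.Walk a b, (∀ z ∈ w0.support, z ∈ s) →
        ∃ w'' : G.Walk a c, ∀ z ∈ w''.support, z ∈ s := by
      intro w0 hw0
      refine ⟨w0.append w', ?_⟩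
      intro z hz
      rcases (SimpleGraph.Walk.mem_support_append_iff _ _).1 hz with hz | hz
      · exact hw0 z hz
      · exact hw' z hz
    rcases sup_edge_adj_cases hab with h | ⟨rfl, rfl⟩ | ⟨rfl, rfl⟩
    · refine glue (SimpleGraph.Walk.cons h SimpleGraph.Walk.nil) ?_
      intro z hz
      simp only [SimpleGraph.Walk.support_cons, SimpleGraph.Walk.support_nil,
        List.mem_cons, List.mem_singleton, List.not_mem_nil, or_false] at hz
      rcases hz with rfl | rfl
      · exact has
      · exact hw _ (by simp [SimpleGraph.Walk.support_cons])
    · exact glue wuv hwuv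
    · exact glue wuv.reverse (by intro z hz; rw [SimpleGraph.Walk.support_reverse,
        List.mem_reverse] at hz; exact hwuv z hz)

end FlowCut
namespace FlowCut

variable {V : Type} [Fintype V] [DecidableEq V] {G : SimpleGraph V}

def IsConfig (G : SimpleGraph V) (u v : V) (B0 B1 B2 B3 : Finset V) : Prop :=
  WConn G B0 ∧ WConn G B1 ∧ WConn G B2 ∧ WConn G B3 ∧
  Disjoint B0 B1 ∧ Disjoint B0 B2 ∧ Disjoint B0 B3 ∧ Disjoint B1 B2 ∧ Disjoint B1 B3 ∧
  Disjoint B2 B3 ∧ u ∈ B0 ∧ v ∈ B1 ∧ SAdj G B0 B2 ∧ SAdj G B0 B3 ∧ SAdj G B1 B2 ∧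
  SAdj G B1 B3 ∧ SAdj G B2 B3

lemma isconfig_swap {u v : V} {B0 B1 B2 B3 : Finset V}
    (h : IsConfig G u v B0 B1 B2 B3) : IsConfig G v u B1 B0 B2 B3 := by
  obtain ⟨c0, c1, c2, c3, d01, d02, d03, d12, d13, d23, hu, hv, a02, a03, a12, a13, a23⟩ := h
  exact ⟨c1, c0, c2, c3, d01.symm, d12, d13, d02, d03, d23, hv, hu, a12, a13, a02, a03, a23⟩

/-- Recipe: two bridges adjacent to `U` plus one adjacent to `W` give a configuration. -/
lemma recipe_c {u v : V} {U W Da Db Dc : Finset V}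
    (hU : WConn G U) (hW : WConn G W) (ha : WConn G Da) (hb : WConn G Db) (hc : WConn G Dc)
    (dUW : Disjoint U W) (dUa : Disjoint U Da) (dUb : Disjoint U Db) (dUc : Disjoint U Dc)
    (dWa : Disjoint W Da) (dWb : Disjoint W Db) (dWc : Disjoint W Dc)
    (dab : Disjoint Da Db) (dac : Disjoint Da Dc) (dbc : Disjoint Db Dc)
    (hu : u ∈ U) (hv : v ∈ W)
    (aab : SAdj G Da Db) (aac : SAdj G Da Dc) (abc : SAdj G Db Dc)
    (uA : SAdj G Da U) (uB : SAdj G Db U) (wC : SAdj G Dc W) :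
    IsConfig G u v U (W ∪ Dc) Da Db := by
  refine ⟨hU, wconn_union_adj hW hc wC.symm, ha, hb, ?_, dUa, dUb, ?_, ?_, dab, hu,
    Finset.mem_union_left _ hv, uA.symm, uB.symm, ?_, ?_, aab⟩
  · exact Finset.disjoint_union_right.2 ⟨dUW, dUc⟩
  · exact Finset.disjoint_union_left.2 ⟨dWa, dac.symm⟩
  · exact Finset.disjoint_union_left.2 ⟨dWb, dbc.symm⟩
  · exact aac.symm.mono_left Finset.subset_union_right
  · exact abc.symm.mono_left Finset.subset_union_right

/-- The eight-way case analysis on how three pairwise-adjacent bridges attach to `U`/`W`. -/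
lemma config_of_five (hsp : ¬ HasK4Minor G) {u v : V} {U W D1 D2 D3 : Finset V}
    (hU : WConn G U) (hW : WConn G W) (h1 : WConn G D1) (h2 : WConn G D2) (h3 : WConn G D3)
    (dUW : Disjoint U W) (dU1 : Disjoint U D1) (dU2 : Disjoint U D2) (dU3 : Disjoint U D3)
    (dW1 : Disjoint W D1) (dW2 : Disjoint W D2) (dW3 : Disjoint W D3)
    (d12 : Disjoint D1 D2) (d13 : Disjoint D1 D3) (d23 : Disjoint D2 D3)
    (hu : u ∈ U) (hv : v ∈ W)
    (a12 : SAdj G D1 D2) (a13 : SAdj G D1 D3) (a23 : SAdj G D2 D3)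
    (h1' : SAdj G D1 U ∨ SAdj G D1 W) (h2' : SAdj G D2 U ∨ SAdj G D2 W)
    (h3' : SAdj G D3 U ∨ SAdj G D3 W) :
    ∃ B0 B1 B2 B3 : Finset V, IsConfig G u v B0 B1 B2 B3 := by
  rcases h1' with u1 | w1 <;> rcases h2' with u2 | w2 <;> rcases h3' with u3 | w3
  · exact absurd (mk_k4 hU h1 h2 h3 dU1 dU2 dU3 d12 d13 d23 u1.symm u2.symm u3.symm
      a12 a13 a23) hsp
  · exact ⟨_, _, _, _, recipe_c hU hW h1 h2 h3 dUW dU1 dU2 dU3 dW1 dW2 dW3 d12 d13 d23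
      hu hv a12 a13 a23 u1 u2 w3⟩
  · exact ⟨_, _, _, _, recipe_c hU hW h1 h3 h2 dUW dU1 dU3 dU2 dW1 dW3 dW2 d13 d12 d23.symm
      hu hv a13 a12 a23.symm u1 u3 w2⟩
  · exact ⟨_, _, _, _, isconfig_swap (recipe_c hW hU h2 h3 h1 dUW.symm dW2 dW3 dW1 dU2 dU3
      dU1 d23 d12.symm d13.symm hv hu a23 a12.symm a13.symm w2 w3 u1)⟩
  · exact ⟨_, _, _, _, recipe_c hU hW h2 h3 h1 dUW dU2 dU3 dU1 dW2 dW3 dW1 d23 d12.symm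
      d13.symm hu hv a23 a12.symm a13.symm u2 u3 w1⟩
  · exact ⟨_, _, _, _, isconfig_swap (recipe_c hW hU h1 h3 h2 dUW.symm dW1 dW3 dW2 dU1 dU3
      dU2 d13 d12 d23.symm hv hu a13 a12 a23.symm w1 w3 u2)⟩
  · exact ⟨_, _, _, _, isconfig_swap (recipe_c hW hU h1 h2 h3 dUW.symm dW1 dW2 dW3 dU1 dU2
      dU3 d12 d13 d23 hv hu a12 a13 a23 w1 w2 u3)⟩
  · exact absurd (mk_k4 hW h1 h2 h3 dW1 dW2 dW3 d12 d13 d23 w1.symm w2.symm w3.symm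
      a12 a13 a23) hsp

end FlowCut
namespace FlowCut

variable {V : Type} [Fintype V] [DecidableEq V] {G : SimpleGraph V}

lemma derive_config (hsp : ¬ HasK4Minor G) {u v : V}
    (h : HasK4Minor (G ⊔ SimpleGraph.edge u v)) :
    ∃ B0 B1 B2 B3 : Finset V, IsConfig G u v B0 B1 B2 B3 := by
  classical
  have hother3 : ∀ k : Fin 4, ∃ a b c : Fin 4, a ≠ k ∧ b ≠ k ∧ c ≠ k ∧ a ≠ b ∧ a ≠ c ∧ b ≠ c :=
    by decide
  have hother2 : ∀ i j : Fin 4, i ≠ j →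
      ∃ m n : Fin 4, m ≠ n ∧ m ≠ i ∧ m ≠ j ∧ n ≠ i ∧ n ≠ j := by decide
  obtain ⟨C, hne, hdisj, hconn', hadj'⟩ := h
  have hconn : ∀ i, WConn (G ⊔ SimpleGraph.edge u v) (C i) := fun i =>
    (wconn_iff_induce_connected (G := G ⊔ SimpleGraph.edge u v)).2 (hconn' i)
  have hadj : ∀ i j, i ≠ j → SAdj (G ⊔ SimpleGraph.edge u v) (C i) (C j) := hadj'
  by_cases hk : ∃ k, u ∈ C k ∧ v ∈ C k
  · -- u, v in the same branch set
    obtain ⟨k, huk, hvk⟩ := hk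
    set U : Finset V :=
      (C k).filter (fun x => ∃ w : G.Walk u x, ∀ z ∈ w.support, z ∈ C k) with hUdef
    have hUsub : U ⊆ C k := Finset.filter_subset _ _
    have huU : u ∈ U := Finset.mem_filter.2 ⟨huk, SimpleGraph.Walk.nil, by simp [huk]⟩
    have hUmem : ∀ {x}, x ∈ U → ∃ w : G.Walk u x, ∀ z ∈ w.support, z ∈ C k := by
      intro x hx
      exact (Finset.mem_filter.1 hx).2
    have hUclosed : ∀ {x y}, x ∈ U → G.Adj x y → y ∈ C k → y ∈ U := by
      intro x y hx hxy hy
      obtain ⟨w, hw⟩ := hUmem hx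
      refine Finset.mem_filter.2 ⟨hy, w.append (SimpleGraph.Walk.cons hxy SimpleGraph.Walk.nil),
        ?_⟩
      intro z hz
      rcases (SimpleGraph.Walk.mem_support_append_iff _ _).1 hz with hz | hz
      · exact hw z hz
      · simp only [SimpleGraph.Walk.support_cons, SimpleGraph.Walk.support_nil, List.mem_cons,
          List.mem_singleton, List.not_mem_nil, or_false] at hz
        rcases hz with rfl | rfl
        · exact hUsub hx
        · exact hy
    have hUwalks : ∀ {x}, x ∈ U → ∃ w : G.Walk u x, ∀ z ∈ w.support, z ∈ U := by
      intro x hx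
      obtain ⟨w, hw⟩ := hUmem hx
      refine ⟨w, ?_⟩
      intro z hz
      refine Finset.mem_filter.2 ⟨hw z hz, w.takeUntil z hz, ?_⟩
      intro t ht
      exact hw t (SimpleGraph.Walk.support_takeUntil_subset _ _ ht)
    have hUconn : WConn G U := by
      refine ⟨⟨u, huU⟩, ?_⟩
      intro x hx y hy
      obtain ⟨wx, hwx⟩ := hUwalks hx
      obtain ⟨wy, hwy⟩ := hUwalks hy
      refine ⟨wx.reverse.append wy, ?_⟩
      intro z hz
      rcases (SimpleGraph.Walk.mem_support_append_iff _ _).1 hz with hz | hz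
      · exact hwx z (by simpa using hz)
      · exact hwy z hz
    by_cases hvU : v ∈ U
    · -- C k is G-connected: the whole minor lives in G, contradiction
      exfalso
      obtain ⟨wuv, hwuv⟩ := hUmem hvU
      have hCk : WConn G (C k) := by
        refine ⟨⟨u, huk⟩, ?_⟩
        intro x hx y hy
        obtain ⟨w, hw⟩ := (hconn k).2 x hx y hy
        exact splice_walk wuv hwuv w hw
      have hCi : ∀ i, WConn G (C i) := by
        intro i
        by_cases hik : i = k
        · exact hik ▸ hCk
        · refine wconn_transfer (hconn i) (Or.inl fun hui => ?_)
          exact (Finset.disjoint_left.1 (hdisj i k hik) hui) huk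
      have hAdjG : ∀ i j, i ≠ j → SAdj G (C i) (C j) := by
        intro i j hij
        refine sadj_transfer (hadj i j hij) ?_ ?_
        · rintro ⟨hui, hvj⟩
          have hik : i = k := by
            by_contra hik
            exact (Finset.disjoint_left.1 (hdisj i k hik) hui) huk
          have hjk : j = k := by
            by_contra hjk
            exact (Finset.disjoint_left.1 (hdisj j k hjk) hvj) hvk
          exact hij (hik.trans hjk.symm)
        · rintro ⟨huj, hvi⟩
          have hik : i = k := by
            by_contra hik
            exact (Finset.disjoint_left.1 (hdisj i k hik) hvi) hvk
          have hjk : j = k := by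
            by_contra hjk
            exact (Finset.disjoint_left.1 (hdisj j k hjk) huj) huk
          exact hij (hik.trans hjk.symm)
      exact hsp (mk_k4 (hCi 0) (hCi 1) (hCi 2) (hCi 3)
        (hdisj 0 1 (by decide)) (hdisj 0 2 (by decide)) (hdisj 0 3 (by decide))
        (hdisj 1 2 (by decide)) (hdisj 1 3 (by decide)) (hdisj 2 3 (by decide))
        (hAdjG 0 1 (by decide)) (hAdjG 0 2 (by decide)) (hAdjG 0 3 (by decide))
        (hAdjG 1 2 (by decide)) (hAdjG 1 3 (by decide)) (hAdjG 2 3 (by decide)))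
    · -- split C k into U and W
      set W : Finset V := C k \ U with hWdef
      have hvW : v ∈ W := Finset.mem_sdiff.2 ⟨hvk, hvU⟩
      have hWsub : W ⊆ C k := Finset.sdiff_subset
      have hUW : Disjoint U W := Finset.disjoint_sdiff
      have hWreach : ∀ x ∈ W, ∃ w : G.Walk v x, ∀ z ∈ w.support, z ∈ W := by
        intro x hx
        have claim : ∀ {a b : V} (ω : (G ⊔ SimpleGraph.edge u v).Walk a b),
            (∀ z ∈ ω.support, z ∈ C k) →
            (a ∈ U ∨ (a ∈ W ∧ ∃ w : G.Walk v a, ∀ z ∈ w.support, z ∈ W)) →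
            (b ∈ U ∨ (b ∈ W ∧ ∃ w : G.Walk v b, ∀ z ∈ w.support, z ∈ W)) := by
          intro a b ω
          induction ω with
          | nil => exact fun _ h => h
          | @cons a c b hac ω ih =>
            intro hsupp ha
            have hcCk : c ∈ C k := hsupp c (by simp [SimpleGraph.Walk.support_cons])
            have hrest : ∀ z ∈ ω.support, z ∈ C k := fun z hz =>
              hsupp z (by simp [SimpleGraph.Walk.support_cons, hz])
            refine ih hrest ?_
            rcases sup_edge_adj_cases hac with hG | ⟨rfl, rfl⟩ | ⟨rfl, rfl⟩
            · rcases ha with ha | ⟨haW, wv, hwv⟩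
              · exact Or.inl (hUclosed ha hG hcCk)
              · by_cases hcU : c ∈ U
                · exact Or.inl hcU
                · have hcW : c ∈ W := Finset.mem_sdiff.2 ⟨hcCk, hcU⟩
                  refine Or.inr ⟨hcW, wv.append (SimpleGraph.Walk.cons hG SimpleGraph.Walk.nil),
                    ?_⟩
                  intro z hz
                  rcases (SimpleGraph.Walk.mem_support_append_iff _ _).1 hz with hz | hz
                  · exact hwv z hz
                  · simp only [SimpleGraph.Walk.support_cons, SimpleGraph.Walk.support_nil,
                      List.mem_cons, List.mem_singleton, List.not_mem_nil, or_false] at hz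
                    rcases hz with rfl | rfl
                    · exact haW
                    · exact hcW
            · exact Or.inr ⟨hvW, SimpleGraph.Walk.nil, by simp [hvW]⟩
            · exact Or.inl huU
        obtain ⟨ω, hω⟩ := (hconn k).2 u huk x (hWsub hx)
        rcases claim ω hω (Or.inl huU) with hxU | ⟨-, hgood⟩
        · exact absurd hxU (Finset.mem_sdiff.1 hx).2
        · exact hgood
      have hWconn : WConn G W := by
        refine ⟨⟨v, hvW⟩, ?_⟩
        intro x hx y hy
        obtain ⟨wx, hwx⟩ := hWreach x hx
        obtain ⟨wy, hwy⟩ := hWreach y hy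
        refine ⟨wx.reverse.append wy, ?_⟩
        intro z hz
        rcases (SimpleGraph.Walk.mem_support_append_iff _ _).1 hz with hz | hz
        · exact hwx z (by simpa using hz)
        · exact hwy z hz
      -- the three other branch sets
      obtain ⟨i1, i2, i3, hn1, hn2, hn3, h12, h13, h23⟩ := hother3 k
      have huCi : ∀ i, i ≠ k → u ∉ C i := fun i hik hui =>
        (Finset.disjoint_left.1 (hdisj i k hik) hui) huk
      have hvCi : ∀ i, i ≠ k → v ∉ C i := fun i hik hvi =>
        (Finset.disjoint_left.1 (hdisj i k hik) hvi) hvk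
      have hDconn : ∀ i, i ≠ k → WConn G (C i) := fun i hik =>
        wconn_transfer (hconn i) (Or.inl (huCi i hik))
      have hDadj : ∀ i j, i ≠ k → j ≠ k → i ≠ j → SAdj G (C i) (C j) := by
        intro i j hik hjk hij
        exact sadj_transfer (hadj i j hij) (fun h => huCi i hik h.1)
          (fun h => huCi j hjk h.1)
      have hDside : ∀ i, i ≠ k → SAdj G (C i) U ∨ SAdj G (C i) W := by
        intro i hik
        obtain ⟨a, haCk, b, hbCi, hab⟩ := hadj k i (Ne.symm hik)
        rcases sup_edge_adj_cases hab with hG | ⟨rfl, rfl⟩ | ⟨rfl, rfl⟩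
        · by_cases haU : a ∈ U
          · exact Or.inl ⟨b, hbCi, a, haU, hG.symm⟩
          · exact Or.inr ⟨b, hbCi, a, Finset.mem_sdiff.2 ⟨haCk, haU⟩, hG.symm⟩
        · exact absurd hbCi (hvCi i hik)
        · exact absurd hbCi (huCi i hik)
      have dXk : ∀ (X : Finset V), X ⊆ C k → ∀ i, i ≠ k → Disjoint X (C i) := by
        intro X hX i hik
        exact Finset.disjoint_of_subset_left hX (hdisj k i (Ne.symm hik))
      exact config_of_five hsp hUconn hWconn (hDconn i1 hn1) (hDconn i2 hn2) (hDconn i3 hn3)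
        hUW (dXk U hUsub i1 hn1) (dXk U hUsub i2 hn2) (dXk U hUsub i3 hn3)
        (dXk W hWsub i1 hn1) (dXk W hWsub i2 hn2) (dXk W hWsub i3 hn3)
        (hdisj i1 i2 h12) (hdisj i1 i3 h13) (hdisj i2 i3 h23) huU hvW
        (hDadj i1 i2 hn1 hn2 h12) (hDadj i1 i3 hn1 hn3 h13) (hDadj i2 i3 hn2 hn3 h23)
        (hDside i1 hn1) (hDside i2 hn2) (hDside i3 hn3)
  · -- u and v are not together in any branch set
    by_cases hu' : ∃ i, u ∈ C i
    · by_cases hv' : ∃ j, v ∈ C j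
      · obtain ⟨i, hui⟩ := hu'
        obtain ⟨j, hvj⟩ := hv'
        have hij : i ≠ j := fun hij => hk ⟨i, hui, hij ▸ hvj⟩
        obtain ⟨m, n, hmn, hmi, hmj, hni, hnj⟩ := hother2 i j hij
        have humem : ∀ l, l ≠ i → u ∉ C l := fun l hl hul =>
          (Finset.disjoint_left.1 (hdisj l i hl) hul) hui
        have hvmem : ∀ l, l ≠ j → v ∉ C l := fun l hl hvl =>
          (Finset.disjoint_left.1 (hdisj l j hl) hvl) hvj
        have tshift : ∀ a b : Fin 4, a ≠ b → ¬(u ∈ C a ∧ v ∈ C b) → ¬(u ∈ C b ∧ v ∈ C a) →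
            SAdj G (C a) (C b) := fun a b hab h1 h2 => sadj_transfer (hadj a b hab) h1 h2
        refine ⟨C i, C j, C m, C n, wconn_transfer (hconn i) (Or.inr (hvmem i hij)),
          wconn_transfer (hconn j) (Or.inl (humem j (Ne.symm hij))),
          wconn_transfer (hconn m) (Or.inl (humem m hmi)),
          wconn_transfer (hconn n) (Or.inl (humem n hni)),
          hdisj i j hij, hdisj i m (Ne.symm hmi), hdisj i n (Ne.symm hni),
          hdisj j m (Ne.symm hmj), hdisj j n (Ne.symm hnj), hdisj m n hmn,
          hui, hvj, ?_, ?_, ?_, ?_, ?_⟩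
        · exact tshift i m (Ne.symm hmi) (fun h => hvmem m hmj h.2)
            (fun h => humem m hmi h.1)
        · exact tshift i n (Ne.symm hni) (fun h => hvmem n hnj h.2)
            (fun h => humem n hni h.1)
        · exact tshift j m (Ne.symm hmj) (fun h => humem j (Ne.symm hij) h.1)
            (fun h => humem m hmi h.1)
        · exact tshift j n (Ne.symm hnj) (fun h => humem j (Ne.symm hij) h.1)
            (fun h => humem n hni h.1)
        · exact tshift m n hmn (fun h => humem m hmi h.1)
            (fun h => humem n hni h.1)
      · -- v lies in no branch set: the minor is a G-minor
        exfalso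
        push_neg at hv'
        have hCi : ∀ i, WConn G (C i) := fun i => wconn_transfer (hconn i) (Or.inr (hv' i))
        have hAdjG : ∀ i j, i ≠ j → SAdj G (C i) (C j) := fun i j hij =>
          sadj_transfer (hadj i j hij) (fun h => hv' j h.2) (fun h => hv' i h.2)
        exact hsp (mk_k4 (hCi 0) (hCi 1) (hCi 2) (hCi 3)
          (hdisj 0 1 (by decide)) (hdisj 0 2 (by decide)) (hdisj 0 3 (by decide))
          (hdisj 1 2 (by decide)) (hdisj 1 3 (by decide)) (hdisj 2 3 (by decide))
          (hAdjG 0 1 (by decide)) (hAdjG 0 2 (by decide)) (hAdjG 0 3 (by decide))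
          (hAdjG 1 2 (by decide)) (hAdjG 1 3 (by decide)) (hAdjG 2 3 (by decide)))
    · exfalso
      push_neg at hu'
      have hCi : ∀ i, WConn G (C i) := fun i => wconn_transfer (hconn i) (Or.inl (hu' i))
      have hAdjG : ∀ i j, i ≠ j → SAdj G (C i) (C j) := fun i j hij =>
        sadj_transfer (hadj i j hij) (fun h => hu' i h.1) (fun h => hu' j h.1)
      exact hsp (mk_k4 (hCi 0) (hCi 1) (hCi 2) (hCi 3)
        (hdisj 0 1 (by decide)) (hdisj 0 2 (by decide)) (hdisj 0 3 (by decide))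
        (hdisj 1 2 (by decide)) (hdisj 1 3 (by decide)) (hdisj 2 3 (by decide))
        (hAdjG 0 1 (by decide)) (hAdjG 0 2 (by decide)) (hAdjG 0 3 (by decide))
        (hAdjG 1 2 (by decide)) (hAdjG 1 3 (by decide)) (hAdjG 2 3 (by decide)))

end FlowCut
namespace FlowCut

variable {V : Type} [Fintype V] [DecidableEq V] {G : SimpleGraph V}

/-- In a 2-node-connected series-parallel graph, if `G + uv` is not
series-parallel then some 2-cut `{l, r}` separates `u` from `v`. -/
theorem exists_twoCut_of_not_fullyCompliant
    (G : SimpleGraph V) (hsp : ¬ HasK4Minor G) (h2 : TwoConnected G)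
    (u v : V) (huv : u ≠ v)
    (h : HasK4Minor (G ⊔ SimpleGraph.edge u v)) :
    ∃ l r : V, l ≠ r ∧ u ≠ l ∧ u ≠ r ∧ v ≠ l ∧ v ≠ r ∧ SepPair G l r u v := by
  classical
  obtain ⟨B0, B1, B2, B3, c0, c1, c2, c3, d01, d02, d03, d12, d13, d23, hu0, hv1,
    a02, a03, a12, a13, a23⟩ := derive_config hsp h
  -- the ground type has at least 4 elements
  obtain ⟨x0, hx0⟩ := c0.nonempty
  obtain ⟨x1, hx1⟩ := c1.nonempty
  obtain ⟨x2, hx2⟩ := c2.nonempty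
  obtain ⟨x3, hx3⟩ := c3.nonempty
  have hcard : 4 ≤ Fintype.card V := by
    have hpair : ∀ i j : Fin 4, i ≠ j → ![x0, x1, x2, x3] i ≠ ![x0, x1, x2, x3] j := by
      refine vec4_forall_pair x0 x1 x2 x3 (fun a b => a ≠ b) ?_ ?_ ?_ ?_ ?_ ?_ ?_ ?_ ?_ ?_ ?_ ?_
      · exact fun hh => Finset.disjoint_left.1 d01 hx0 (hh ▸ hx1)
      · exact fun hh => Finset.disjoint_left.1 d02 hx0 (hh ▸ hx2)
      · exact fun hh => Finset.disjoint_left.1 d03 hx0 (hh ▸ hx3)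
      · exact fun hh => Finset.disjoint_left.1 d12 hx1 (hh ▸ hx2)
      · exact fun hh => Finset.disjoint_left.1 d13 hx1 (hh ▸ hx3)
      · exact fun hh => Finset.disjoint_left.1 d23 hx2 (hh ▸ hx3)
      · exact fun hh => Finset.disjoint_left.1 d01 (hh ▸ hx0) hx1
      · exact fun hh => Finset.disjoint_left.1 d02 (hh ▸ hx0) hx2
      · exact fun hh => Finset.disjoint_left.1 d03 (hh ▸ hx0) hx3
      · exact fun hh => Finset.disjoint_left.1 d12 (hh ▸ hx1) hx2
      · exact fun hh => Finset.disjoint_left.1 d13 (hh ▸ hx1) hx3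
      · exact fun hh => Finset.disjoint_left.1 d23 (hh ▸ hx2) hx3
    have hinj : Function.Injective (![x0, x1, x2, x3] : Fin 4 → V) := by
      intro i j hij
      by_contra hne
      exact hpair i j hne hij
    calc 4 = Fintype.card (Fin 4) := by simp
    _ ≤ Fintype.card V := Fintype.card_le_of_injective _ hinj
  have hsep23 : SepSet G u v (B2 ∪ B3) :=
    config_sepset hsp c0 c1 c2 c3 d01 d02 d03 d12 d13 d23 hu0 hv1 a02 a03 a12 a13 a23
  -- a minimum connected separator avoiding u and v
  set P : Finset V → Prop := fun Cs => WConn G Cs ∧ u ∉ Cs ∧ v ∉ Cs ∧ SepSet G u v Cs with hPdef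
  have hPB23 : P (B2 ∪ B3) := by
    refine ⟨wconn_union_adj c2 c3 a23, ?_, ?_, hsep23⟩
    · intro hmem
      rcases Finset.mem_union.1 hmem with hmem | hmem
      · exact Finset.disjoint_left.1 d02 hu0 hmem
      · exact Finset.disjoint_left.1 d03 hu0 hmem
    · intro hmem
      rcases Finset.mem_union.1 hmem with hmem | hmem
      · exact Finset.disjoint_left.1 d12 hv1 hmem
      · exact Finset.disjoint_left.1 d13 hv1 hmem
  obtain ⟨Cs, hCsmem, hmin⟩ := Finset.exists_min_image
    (Finset.univ.filter P) Finset.card ⟨B2 ∪ B3, Finset.mem_filter.2 ⟨Finset.mem_univ _, hPB23⟩⟩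
  obtain ⟨-, hCconn, huC, hvC, hCsep⟩ :
      True ∧ WConn G Cs ∧ u ∉ Cs ∧ v ∉ Cs ∧ SepSet G u v Cs := by
    have := (Finset.mem_filter.1 hCsmem).2
    exact ⟨trivial, this.1, this.2.1, this.2.2.1, this.2.2.2⟩
  have hminle : ∀ D : Finset V, P D → Cs.card ≤ D.card := by
    intro D hD
    exact hmin D (Finset.mem_filter.2 ⟨Finset.mem_univ _, hD⟩)
  rcases lt_or_ge Cs.card 3 with hsmall | hbig
  · -- |Cs| ≤ 2 : done directly
    obtain ⟨w0, hw0⟩ := hCconn.nonempty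
    have hpos : 1 ≤ Cs.card := Finset.card_pos.2 ⟨w0, hw0⟩
    interval_cases hc : Cs.card
    · -- card = 1
      obtain ⟨l, hl⟩ := Finset.card_eq_one.1 hc
      have hlC : l ∈ Cs := hl ▸ Finset.mem_singleton_self l
      have hrex : ∃ r, r ∉ ({u, v, l} : Finset V) := by
        by_contra hcon
        push_neg at hcon
        have : (Finset.univ : Finset V) ⊆ {u, v, l} := fun z _ => hcon z
        have h3 : Fintype.card V ≤ 3 := by
          calc Fintype.card V = (Finset.univ : Finset V).card := (Finset.card_univ).symm
          _ ≤ ({u, v, l} : Finset V).card := Finset.card_le_card this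
          _ ≤ 3 := by
            refine le_trans (Finset.card_insert_le _ _) ?_
            have := Finset.card_insert_le v ({l} : Finset V)
            simp at this ⊢
            omega
        omega
      obtain ⟨r, hr⟩ := hrex
      simp only [Finset.mem_insert, Finset.mem_singleton, not_or] at hr
      obtain ⟨hru, hrv, hrl⟩ := hr
      refine ⟨l, r, fun hh => hrl hh.symm, fun hh => huC (hh ▸ hlC), Ne.symm hru,
        fun hh => hvC (hh ▸ hlC), Ne.symm hrv, ?_⟩
      intro ω
      obtain ⟨z, hz, hzC⟩ := hCsep ω
      rw [hl, Finset.mem_singleton] at hzC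
      exact Or.inl (hzC ▸ hz)
    · -- card = 2
      obtain ⟨l, r, hlr, hCs⟩ := Finset.card_eq_two.1 hc
      have hlC : l ∈ Cs := by rw [hCs]; simp
      have hrC : r ∈ Cs := by rw [hCs]; simp
      refine ⟨l, r, hlr, fun hh => huC (hh ▸ hlC), fun hh => huC (hh ▸ hrC),
        fun hh => hvC (hh ▸ hlC), fun hh => hvC (hh ▸ hrC), ?_⟩
      intro ω
      obtain ⟨z, hz, hzC⟩ := hCsep ω
      rw [hCs] at hzC
      simp only [Finset.mem_insert, Finset.mem_singleton] at hzC
      rcases hzC with rfl | rfl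
      · exact Or.inl hz
      · exact Or.inr hz
  · -- |Cs| ≥ 3 : shrink using two removable vertices
    obtain ⟨w0, hw0⟩ := hCconn.nonempty
    obtain ⟨p, hpC, -, hpconn⟩ := exists_removable hCconn (by omega) hw0
    obtain ⟨q, hqC, hqp, hqconn⟩ := exists_removable hCconn (by omega) hpC
    have herase_not_sep : ∀ t ∈ Cs, WConn G (Cs.erase t) → ¬ SepSet G u v (Cs.erase t) := by
      intro t htC hconn' hsep'
      have hP' : P (Cs.erase t) := ⟨hconn', fun hh => huC (Finset.mem_of_mem_erase hh),
        fun hh => hvC (Finset.mem_of_mem_erase hh), hsep'⟩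
      have := hminle _ hP'
      have hlt : (Cs.erase t).card < Cs.card := Finset.card_erase_lt_of_mem htC
      omega
    -- walks avoiding all of Cs except one vertex
    have hwalk : ∀ t ∈ Cs, WConn G (Cs.erase t) →
        ∃ ω : G.Walk u v, t ∈ ω.support ∧ ∀ z ∈ ω.support, z ∉ Cs.erase t := by
      intro t htC hconn'
      have := herase_not_sep t htC hconn'
      rw [SepSet] at this
      push_neg at this
      obtain ⟨ω, hω⟩ := this
      refine ⟨ω, ?_, hω⟩
      obtain ⟨z, hz, hzC⟩ := hCsep ω
      have : z = t := by
        by_contra hne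
        exact hω z hz (Finset.mem_erase.2 ⟨hne, hzC⟩)
      exact this ▸ hz
    obtain ⟨ωp, hpωp, hωp⟩ := hwalk p hpC hpconn
    obtain ⟨ωq, hqωq, hωq⟩ := hwalk q hqC hqconn
    -- the two sides
    set A : Finset V := Finset.univ.filter
      (fun z => ∃ w : G.Walk u z, ∀ t ∈ w.support, t ∉ Cs) with hAdef
    set B : Finset V := Finset.univ.filter
      (fun z => ∃ w : G.Walk v z, ∀ t ∈ w.support, t ∉ Cs) with hBdef
    have hmemA : ∀ {z}, z ∈ A ↔ ∃ w : G.Walk u z, ∀ t ∈ w.support, t ∉ Cs := by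
      intro z
      simp [hAdef]
    have hmemB : ∀ {z}, z ∈ B ↔ ∃ w : G.Walk v z, ∀ t ∈ w.support, t ∉ Cs := by
      intro z
      simp [hBdef]
    have huA : u ∈ A := hmemA.2 ⟨SimpleGraph.Walk.nil, by
      intro t ht; simp at ht; subst ht; exact huC⟩
    have hvB : v ∈ B := hmemB.2 ⟨SimpleGraph.Walk.nil, by
      intro t ht; simp at ht; subst ht; exact hvC⟩
    have hAC : ∀ z ∈ A, z ∉ Cs := by
      intro z hz
      obtain ⟨w, hw⟩ := hmemA.1 hz
      exact hw z (SimpleGraph.Walk.end_mem_support w)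
    have hBC : ∀ z ∈ B, z ∉ Cs := by
      intro z hz
      obtain ⟨w, hw⟩ := hmemB.1 hz
      exact hw z (SimpleGraph.Walk.end_mem_support w)
    have hAconn : WConn G A := by
      refine wconn_of_root huA ?_
      intro z hz
      obtain ⟨w, hw⟩ := hmemA.1 hz
      refine ⟨w, ?_⟩
      intro t ht
      refine hmemA.2 ⟨w.takeUntil t ht, ?_⟩
      intro z' hz'
      exact hw z' (SimpleGraph.Walk.support_takeUntil_subset _ _ hz')
    have hBconn : WConn G B := by
      refine wconn_of_root hvB ?_
      intro z hz
      obtain ⟨w, hw⟩ := hmemB.1 hz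
      refine ⟨w, ?_⟩
      intro t ht
      refine hmemB.2 ⟨w.takeUntil t ht, ?_⟩
      intro z' hz'
      exact hw z' (SimpleGraph.Walk.support_takeUntil_subset _ _ hz')
    have hABdisj : Disjoint A B := by
      rw [Finset.disjoint_left]
      intro z hzA hzB
      obtain ⟨wA, hwA⟩ := hmemA.1 hzA
      obtain ⟨wB, hwB⟩ := hmemB.1 hzB
      obtain ⟨t, ht, htC⟩ := hCsep (wA.append wB.reverse)
      rcases (SimpleGraph.Walk.mem_support_append_iff _ _).1 ht with ht | ht
      · exact hwA t ht htC
      · exact hwB t (by simpa using ht) htC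
    -- attachments of p and q to both sides
    have hattach : ∀ t ∈ Cs,
        ∀ (ω : G.Walk u v), t ∈ ω.support → (∀ z ∈ ω.support, z ∉ Cs.erase t) →
        (∃ a ∈ A, G.Adj t a) ∧ (∃ b ∈ B, G.Adj t b) := by
      intro t htC ω htω hωgood
      constructor
      · have hut : u ≠ t := fun hh => huC (hh ▸ htC)
        have honce := SimpleGraph.Walk.count_support_takeUntil_eq_one ω htω
        obtain ⟨z, ρ, hzt, hρsub, htρ, -⟩ := split_last (ω.takeUntil t htω) hut honce
        have hzA : z ∈ A := by
          refine hmemA.2 ⟨ρ, ?_⟩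
          intro z' hz'
          intro hz'C
          have hz'ω : z' ∈ ω.support :=
            SimpleGraph.Walk.support_takeUntil_subset _ _ (hρsub z' hz')
          have : z' ≠ t := fun hh => htρ (hh ▸ hz')
          exact hωgood z' hz'ω (Finset.mem_erase.2 ⟨this, hz'C⟩)
        exact ⟨z, hzA, hzt.symm⟩
      · have hvt : v ≠ t := fun hh => hvC (hh ▸ htC)
        have htω' : t ∈ ω.reverse.support := by
          rw [SimpleGraph.Walk.support_reverse, List.mem_reverse]; exact htω
        have honce := SimpleGraph.Walk.count_support_takeUntil_eq_one ω.reverse htω'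
        obtain ⟨z, ρ, hzt, hρsub, htρ, -⟩ := split_last (ω.reverse.takeUntil t htω') hvt honce
        have hzB : z ∈ B := by
          refine hmemB.2 ⟨ρ, ?_⟩
          intro z' hz'
          intro hz'C
          have hz'ω : z' ∈ ω.support := by
            have := SimpleGraph.Walk.support_takeUntil_subset _ _ (hρsub z' hz')
            rwa [SimpleGraph.Walk.support_reverse, List.mem_reverse] at this
          have : z' ≠ t := fun hh => htρ (hh ▸ hz')
          exact hωgood z' hz'ω (Finset.mem_erase.2 ⟨this, hz'C⟩)
        exact ⟨z, hzB, hzt.symm⟩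
    obtain ⟨apA, apB⟩ := hattach p hpC ωp hpωp hωp
    obtain ⟨aqA, aqB⟩ := hattach q hqC ωq hqωq hωq
    -- connector inside Cs
    obtain ⟨σ, hσ⟩ := hCconn.2 p hpC q hqC
    have hσAB : ∀ z ∈ σ.support, z ∉ A ∧ z ∉ B := by
      intro z hz
      have hzC : z ∈ Cs := hσ z hz
      exact ⟨fun hzA => hAC z hzA hzC, fun hzB => hBC z hzB hzC⟩
    have hpq : p ≠ q := Ne.symm hqp
    have hsep := key_sep hsp hAconn hBconn hABdisj huA hvB hpq
      (fun hh => hAC p hh hpC) (fun hh => hBC p hh hpC)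
      (fun hh => hAC q hh hqC) (fun hh => hBC q hh hqC)
      apA apB aqA aqB σ hσAB
    exact ⟨p, q, hpq, fun hh => huC (hh ▸ hpC), fun hh => huC (hh ▸ hqC),
      fun hh => hvC (hh ▸ hpC), fun hh => hvC (hh ▸ hqC), hsep⟩


end FlowCut
end
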